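/- arXiv:1112.3716 — 5 statements merged into one kernel-verified Lean document; each statement's English description precedes it below -/
import Mathlib

section
/- Let p1, p2, p3 ∈ (1,∞) satisfy 1/p1 + 1/p2 + 1/p3 = 2. There exist η ∈ (0,1) and C < ∞, depending only on (p1,p2,p3), such that for every discrete group G and all nonnegative functions f_j ∈ ℓ^{p_j}(G) (j = 1,2,3), ∑_{x,y∈G} f1(x) f2(y) f3(x+y) ≤ C · ∏_{j=1}^3 ‖f_j‖_{p_j}^{1−η} · ∏_{j=1}^3 ( sup_{k∈ℤ} 2^k |E_{j,k}|^{1/p_j} )^η, where E_{j,k} = {x ∈ G : 2^k ≤ f_j(x) < 2^{k+1}} and |E| denotes the cardinality of E. -/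
/-- The ℓ^p norm of a nonnegative (real-valued) function on a discrete group. -/
noncomputable def pnormR {G : Type*} (f : G → ℝ) (p : ℝ) : ℝ :=
  (∑' x, |f x| ^ p) ^ (1 / p)

/-- The dyadic level set E_k = {x : 2^k ≤ f(x) < 2^{k+1}} of a nonnegative function. -/
def levelSet {G : Type*} (f : G → ℝ) (k : ℤ) : Set G :=
  {x | (2 : ℝ) ^ k ≤ f x ∧ f x < (2 : ℝ) ^ (k + 1)}

/-- sup_{k ∈ ℤ} 2^k |E_k|^{1/p}, where |E| denotes cardinality. -/
noncomputable def lorentzSup {G : Type*} (f : G → ℝ) (p : ℝ) : ℝ :=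
  ⨆ k : ℤ, (2 : ℝ) ^ k * (Nat.card ↥(levelSet f k) : ℝ) ^ (1 / p)

open scoped ENNReal
open ENNReal (ofReal)
open MeasureTheory

namespace YLaux

noncomputable def aN {G : Type*} (f : G → ℝ) (k : ℤ) : ℕ := Nat.card ↥(levelSet f k)

noncomputable def lamE {G : Type*} (f : G → ℝ) (p : ℝ) (k : ℤ) : ℝ≥0∞ :=
  (2 : ℝ≥0∞) ^ k * (aN f k : ℝ≥0∞) ^ (1 / p)

noncomputable def clsZ {G : Type*} (f : G → ℝ) (k : ℤ) : ℤ := (Nat.log 2 (aN f k) : ℤ)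

noncomputable def wK (ε : ℝ) (m : ℤ) : ℝ≥0∞ := ofReal ((2 : ℝ) ^ (-(ε * |(m : ℝ)|)))

noncomputable def LamS {G : Type*} (f : G → ℝ) (p : ℝ) (n : ℤ) : ℝ≥0∞ :=
  ∑' k : ℤ, if clsZ f k = n then lamE f p k else 0

noncomputable def MpS {G : Type*} (f : G → ℝ) (p : ℝ) (n : ℤ) : ℝ≥0∞ :=
  ∑' k : ℤ, if clsZ f k = n then (lamE f p k) ^ p else 0

noncomputable def Ind {G : Type*} (E : Set G) : G → ℝ≥0∞ := E.indicator fun _ => 1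

lemma ofReal_two_zpow (k : ℤ) : ofReal ((2:ℝ) ^ k) = (2:ℝ≥0∞) ^ k := by
  have h1 : (2:ℝ) ^ k = (2:ℝ) ^ (k:ℝ) := (Real.rpow_intCast 2 k).symm
  rw [h1, ← ENNReal.ofReal_rpow_of_pos (by norm_num), ENNReal.ofReal_ofNat,
    ENNReal.rpow_intCast]

lemma Ind_le_one {G : Type*} (E : Set G) (x : G) : Ind E x ≤ 1 := by
  unfold Ind
  by_cases h : x ∈ E
  · rw [Set.indicator_of_mem h]
  · rw [Set.indicator_of_notMem h]; exact zero_le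

lemma card_tsum {G : Type*} {E : Set G} (hE : E.Finite) :
    ∑' x : G, Ind E x = (Nat.card ↥E : ℝ≥0∞) := by
  unfold Ind
  rw [← tsum_subtype E (fun _ => (1:ℝ≥0∞))]
  haveI := hE.fintype
  rw [tsum_fintype]
  simp [Nat.card_eq_fintype_card]

lemma combo3 {m A B C α β γ : ℝ} (hA : m ≤ A) (hB : m ≤ B) (hC : m ≤ C)
    (hα : 0 ≤ α) (hβ : 0 ≤ β) (hγ : 0 ≤ γ) (hs : α + β + γ = 1) :
    m ≤ α * A + β * B + γ * C := by
  have hm : α*m + β*m + γ*m = m := by rw [← add_mul, ← add_mul, hs, one_mul]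
  linarith [mul_le_mul_of_nonneg_left hA hα, mul_le_mul_of_nonneg_left hB hβ,
    mul_le_mul_of_nonneg_left hC hγ]

lemma Rlemma {u1 u2 u3 ε t1 t2 t3 : ℝ}
    (hu1 : 0 < u1) (hu2 : 0 < u2) (hu3 : 0 < u3)
    (husum : u1 + u2 + u3 = 2) (hε : 0 < ε)
    (hε1 : 2*ε ≤ 1 - u1) (hε2 : 2*ε ≤ 1 - u2) (hε3 : 2*ε ≤ 1 - u3) :
    min (t1+t2) (min (t1+t3) (t2+t3)) + ε * |t1 - t2| + ε * |t1 - t3|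
      ≤ u1*t1 + u2*t2 + u3*t3 := by
  have hA : min (t1+t2) (min (t1+t3) (t2+t3)) ≤ t1+t2 := min_le_left _ _
  have hB : min (t1+t2) (min (t1+t3) (t2+t3)) ≤ t1+t3 :=
    (min_le_right _ _).trans (min_le_left _ _)
  have hC : min (t1+t2) (min (t1+t3) (t2+t3)) ≤ t2+t3 :=
    (min_le_right _ _).trans (min_le_right _ _)
  rcases le_total t1 t2 with h12 | h12 <;> rcases le_total t1 t3 with h13 | h13
  · rw [abs_of_nonpos (by linarith), abs_of_nonpos (by linarith)]
    have hc := combo3 hA hB hC (α := 1-u3+ε) (β := 1-u2+ε) (γ := 1-u1-2*ε)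
      (by linarith) (by linarith) (by linarith) (by linarith)
    have key : (1-u3+ε) * (t1+t2) + (1-u2+ε) * (t1+t3) + (1-u1-2*ε) * (t2+t3)
        = u1*t1 + u2*t2 + u3*t3 - ε * -(t1-t2) - ε * -(t1-t3) := by
      linear_combination (-(t1+t2+t3)) * husum
    linarith
  · rw [abs_of_nonpos (by linarith), abs_of_nonneg (by linarith)]
    have hc := combo3 hA hB hC (α := 1-u3-ε) (β := 1-u2+ε) (γ := 1-u1)
      (by linarith) (by linarith) (by linarith) (by linarith)
    have key : (1-u3-ε) * (t1+t2) + (1-u2+ε) * (t1+t3) + (1-u1) * (t2+t3)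
        = u1*t1 + u2*t2 + u3*t3 - ε * -(t1-t2) - ε * (t1-t3) := by
      linear_combination (-(t1+t2+t3)) * husum
    linarith
  · rw [abs_of_nonneg (by linarith), abs_of_nonpos (by linarith)]
    have hc := combo3 hA hB hC (α := 1-u3+ε) (β := 1-u2-ε) (γ := 1-u1)
      (by linarith) (by linarith) (by linarith) (by linarith)
    have key : (1-u3+ε) * (t1+t2) + (1-u2-ε) * (t1+t3) + (1-u1) * (t2+t3)
        = u1*t1 + u2*t2 + u3*t3 - ε * (t1-t2) - ε * -(t1-t3) := by
      linear_combination (-(t1+t2+t3)) * husum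
    linarith
  · rw [abs_of_nonneg (by linarith), abs_of_nonneg (by linarith)]
    have hc := combo3 hA hB hC (α := 1-u3-ε) (β := 1-u2-ε) (γ := 1-u1+2*ε)
      (by linarith) (by linarith) (by linarith) (by linarith)
    have key : (1-u3-ε) * (t1+t2) + (1-u2-ε) * (t1+t3) + (1-u1+2*ε) * (t2+t3)
        = u1*t1 + u2*t2 + u3*t3 - ε * (t1-t2) - ε * (t1-t3) := by
      linear_combination (-(t1+t2+t3)) * husum
    linarith

lemma amin {u1 u2 u3 ε : ℝ}
    (hu1 : 0 < u1) (hu2 : 0 < u2) (hu3 : 0 < u3)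
    (husum : u1 + u2 + u3 = 2) (hε : 0 < ε)
    (hε1 : 2*ε ≤ 1 - u1) (hε2 : 2*ε ≤ 1 - u2) (hε3 : 2*ε ≤ 1 - u3)
    {a1 a2 a3 : ℝ} (h1 : 1 ≤ a1) (h2 : 1 ≤ a2) (h3 : 1 ≤ a3) :
    min (a1*a2) (min (a1*a3) (a2*a3)) ≤
      (a1 ^ u1 * a2 ^ u2 * a3 ^ u3) *
        ((2:ℝ) ^ (-(ε * |Real.logb 2 a1 - Real.logb 2 a2|)) *
         (2:ℝ) ^ (-(ε * |Real.logb 2 a1 - Real.logb 2 a3|))) := by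
  have hp1 : (0:ℝ) < a1 := lt_of_lt_of_le one_pos h1
  have hp2 : (0:ℝ) < a2 := lt_of_lt_of_le one_pos h2
  have hp3 : (0:ℝ) < a3 := lt_of_lt_of_le one_pos h3
  obtain ⟨t1, rfl⟩ : ∃ t, a1 = (2:ℝ) ^ t :=
    ⟨Real.logb 2 a1, (Real.rpow_logb (by norm_num) (by norm_num) hp1).symm⟩
  obtain ⟨t2, rfl⟩ : ∃ t, a2 = (2:ℝ) ^ t :=
    ⟨Real.logb 2 a2, (Real.rpow_logb (by norm_num) (by norm_num) hp2).symm⟩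
  obtain ⟨t3, rfl⟩ : ∃ t, a3 = (2:ℝ) ^ t :=
    ⟨Real.logb 2 a3, (Real.rpow_logb (by norm_num) (by norm_num) hp3).symm⟩
  have hlb : ∀ t : ℝ, Real.logb 2 ((2:ℝ) ^ t) = t := fun t =>
    Real.logb_rpow (by norm_num) (by norm_num)
  rw [hlb, hlb, hlb]
  have hmono : Monotone fun x : ℝ => (2:ℝ) ^ x := fun x y hxy =>
    Real.rpow_le_rpow_of_exponent_le one_le_two hxy
  have key := Rlemma (t1 := t1) (t2 := t2) (t3 := t3) hu1 hu2 hu3 husum hε hε1 hε2 hε3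
  calc min ((2:ℝ)^t1 * (2:ℝ)^t2) (min ((2:ℝ)^t1 * (2:ℝ)^t3) ((2:ℝ)^t2 * (2:ℝ)^t3))
      = (2:ℝ) ^ (min (t1+t2) (min (t1+t3) (t2+t3))) := by
        rw [← Real.rpow_add two_pos, ← Real.rpow_add two_pos, ← Real.rpow_add two_pos,
          hmono.map_min, hmono.map_min]
    _ ≤ (2:ℝ) ^ (u1*t1 + u2*t2 + u3*t3 + (-(ε * |t1 - t2|) + -(ε * |t1 - t3|))) := by
        apply Real.rpow_le_rpow_of_exponent_le one_le_two
        linarith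
    _ = ((2:ℝ)^t1) ^ u1 * ((2:ℝ)^t2) ^ u2 * ((2:ℝ)^t3) ^ u3 *
          ((2:ℝ) ^ (-(ε * |t1 - t2|)) * (2:ℝ) ^ (-(ε * |t1 - t3|))) := by
        rw [Real.rpow_add two_pos, Real.rpow_add two_pos, Real.rpow_add two_pos,
          Real.rpow_add two_pos]
        rw [← Real.rpow_mul (by norm_num : (0:ℝ) ≤ 2),
            ← Real.rpow_mul (by norm_num : (0:ℝ) ≤ 2),
            ← Real.rpow_mul (by norm_num : (0:ℝ) ≤ 2)]
        ring_nf

lemma log_between {a : ℕ} (h : 1 ≤ a) :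
    (Nat.log 2 a : ℝ) ≤ Real.logb 2 (a : ℝ) ∧
      Real.logb 2 (a : ℝ) < (Nat.log 2 a : ℝ) + 1 := by
  have ha : (0:ℝ) < (a:ℝ) := by exact_mod_cast h
  have hlow : ((2:ℕ) ^ Nat.log 2 a : ℕ) ≤ a := Nat.pow_log_le_self 2 (by omega)
  have hhigh : a < (2:ℕ) ^ (Nat.log 2 a + 1) := Nat.lt_pow_succ_log_self (by norm_num) a
  constructor
  · have : ((2:ℝ) ^ (Nat.log 2 a : ℕ)) ≤ (a:ℝ) := by exact_mod_cast hlow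
    calc (Nat.log 2 a : ℝ) = Real.logb 2 ((2:ℝ) ^ (Nat.log 2 a : ℕ)) := by
          rw [← Real.rpow_natCast 2 (Nat.log 2 a), Real.logb_rpow (by norm_num) (by norm_num)]
      _ ≤ Real.logb 2 (a:ℝ) := (Real.logb_le_logb (by norm_num : (1:ℝ) < 2) (by positivity) ha).mpr this
  · have : (a:ℝ) < (2:ℝ) ^ (Nat.log 2 a + 1 : ℕ) := by exact_mod_cast hhigh
    calc Real.logb 2 (a:ℝ) < Real.logb 2 ((2:ℝ) ^ (Nat.log 2 a + 1 : ℕ)) :=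
          Real.logb_lt_logb (by norm_num) ha this
      _ = ((Nat.log 2 a + 1 : ℕ) : ℝ) := by
          rw [← Real.rpow_natCast 2 (Nat.log 2 a + 1), Real.logb_rpow (by norm_num) (by norm_num)]
      _ = (Nat.log 2 a : ℝ) + 1 := by push_cast; ring

lemma aminN {u1 u2 u3 ε : ℝ}
    (hu1 : 0 < u1) (hu2 : 0 < u2) (hu3 : 0 < u3)
    (husum : u1 + u2 + u3 = 2) (hε : 0 < ε)
    (hε1 : 2*ε ≤ 1 - u1) (hε2 : 2*ε ≤ 1 - u2) (hε3 : 2*ε ≤ 1 - u3)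
    {a1 a2 a3 : ℕ} (h1 : 1 ≤ a1) (h2 : 1 ≤ a2) (h3 : 1 ≤ a3) :
    min ((a1:ℝ)*(a2:ℝ)) (min ((a1:ℝ)*(a3:ℝ)) ((a2:ℝ)*(a3:ℝ))) ≤
      4 * ((a1:ℝ) ^ u1 * (a2:ℝ) ^ u2 * (a3:ℝ) ^ u3) *
        ((2:ℝ) ^ (-(ε * |(Nat.log 2 a1 : ℝ) - (Nat.log 2 a2 : ℝ)|)) *
         (2:ℝ) ^ (-(ε * |(Nat.log 2 a1 : ℝ) - (Nat.log 2 a3 : ℝ)|))) := by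
  have hc1 : (1:ℝ) ≤ (a1:ℝ) := by exact_mod_cast h1
  have hc2 : (1:ℝ) ≤ (a2:ℝ) := by exact_mod_cast h2
  have hc3 : (1:ℝ) ≤ (a3:ℝ) := by exact_mod_cast h3
  have H := amin hu1 hu2 hu3 husum hε hε1 hε2 hε3 hc1 hc2 hc3
  set t1 := Real.logb 2 (a1:ℝ)
  set t2 := Real.logb 2 (a2:ℝ)
  set t3 := Real.logb 2 (a3:ℝ)
  set n1 := (Nat.log 2 a1 : ℝ)
  set n2 := (Nat.log 2 a2 : ℝ)
  set n3 := (Nat.log 2 a3 : ℝ)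
  obtain ⟨hl1, hr1⟩ := log_between h1
  obtain ⟨hl2, hr2⟩ := log_between h2
  obtain ⟨hl3, hr3⟩ := log_between h3
  have hε2' : ε ≤ 1/2 := by linarith
  -- |n1 - n2| ≤ |t1 - t2| + 2
  have hab12 : |n1 - n2| ≤ |t1 - t2| + 2 := by
    have := abs_sub_le n1 t1 n2
    have := abs_sub_le t1 t2 n2
    have h1' : |n1 - t1| ≤ 1 := abs_le.mpr ⟨by linarith, by linarith⟩
    have h2' : |t2 - n2| ≤ 1 := abs_le.mpr ⟨by linarith, by linarith⟩
    calc |n1 - n2| ≤ |n1 - t1| + |t1 - n2| := abs_sub_le n1 t1 n2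
      _ ≤ |n1 - t1| + (|t1 - t2| + |t2 - n2|) := by linarith [abs_sub_le t1 t2 n2]
      _ ≤ |t1 - t2| + 2 := by linarith
  have hab13 : |n1 - n3| ≤ |t1 - t3| + 2 := by
    have h1' : |n1 - t1| ≤ 1 := abs_le.mpr ⟨by linarith, by linarith⟩
    have h3' : |t3 - n3| ≤ 1 := abs_le.mpr ⟨by linarith, by linarith⟩
    calc |n1 - n3| ≤ |n1 - t1| + |t1 - n3| := abs_sub_le n1 t1 n3
      _ ≤ |n1 - t1| + (|t1 - t3| + |t3 - n3|) := by linarith [abs_sub_le t1 t3 n3]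
      _ ≤ |t1 - t3| + 2 := by linarith
  -- 2 ^ (-(ε |t1-t2|)) ≤ 2^(2ε) * 2^(-(ε |n1-n2|))
  have hw12 : (2:ℝ) ^ (-(ε * |t1 - t2|)) ≤ (2:ℝ)^(2*ε) * (2:ℝ) ^ (-(ε * |n1 - n2|)) := by
    rw [← Real.rpow_add two_pos]
    apply Real.rpow_le_rpow_of_exponent_le one_le_two
    nlinarith [hε.le]
  have hw13 : (2:ℝ) ^ (-(ε * |t1 - t3|)) ≤ (2:ℝ)^(2*ε) * (2:ℝ) ^ (-(ε * |n1 - n3|)) := by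
    rw [← Real.rpow_add two_pos]
    apply Real.rpow_le_rpow_of_exponent_le one_le_two
    nlinarith [hε.le]
  have h4 : (2:ℝ)^(2*ε) * (2:ℝ)^(2*ε) ≤ 4 := by
    rw [← Real.rpow_add two_pos]
    calc (2:ℝ) ^ (2*ε+2*ε) ≤ (2:ℝ) ^ (2:ℝ) := by
          apply Real.rpow_le_rpow_of_exponent_le one_le_two; linarith
      _ = 4 := by
          rw [show (2:ℝ) = ((2:ℕ):ℝ) by norm_num, Real.rpow_natCast]; norm_num
  have hP : (0:ℝ) ≤ (a1:ℝ) ^ u1 * (a2:ℝ) ^ u2 * (a3:ℝ) ^ u3 := by positivity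
  calc min ((a1:ℝ)*(a2:ℝ)) (min ((a1:ℝ)*(a3:ℝ)) ((a2:ℝ)*(a3:ℝ)))
      ≤ ((a1:ℝ) ^ u1 * (a2:ℝ) ^ u2 * (a3:ℝ) ^ u3) *
          ((2:ℝ) ^ (-(ε * |t1 - t2|)) * (2:ℝ) ^ (-(ε * |t1 - t3|))) := H
    _ ≤ ((a1:ℝ) ^ u1 * (a2:ℝ) ^ u2 * (a3:ℝ) ^ u3) *
          (((2:ℝ)^(2*ε) * (2:ℝ) ^ (-(ε * |n1 - n2|))) *
           ((2:ℝ)^(2*ε) * (2:ℝ) ^ (-(ε * |n1 - n3|)))) := by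
        apply mul_le_mul_of_nonneg_left _ hP
        exact mul_le_mul hw12 hw13 (by positivity) (by positivity)
    _ ≤ 4 * ((a1:ℝ) ^ u1 * (a2:ℝ) ^ u2 * (a3:ℝ) ^ u3) *
          ((2:ℝ) ^ (-(ε * |n1 - n2|)) * (2:ℝ) ^ (-(ε * |n1 - n3|))) := by
        have expand : ((a1:ℝ) ^ u1 * (a2:ℝ) ^ u2 * (a3:ℝ) ^ u3) *
          (((2:ℝ)^(2*ε) * (2:ℝ) ^ (-(ε * |n1 - n2|))) *
           ((2:ℝ)^(2*ε) * (2:ℝ) ^ (-(ε * |n1 - n3|))))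
          = ((2:ℝ)^(2*ε) * (2:ℝ)^(2*ε)) * (((a1:ℝ) ^ u1 * (a2:ℝ) ^ u2 * (a3:ℝ) ^ u3) *
              ((2:ℝ) ^ (-(ε * |n1 - n2|)) * (2:ℝ) ^ (-(ε * |n1 - n3|)))) := by ring
        rw [expand]
        exact le_trans (mul_le_mul_of_nonneg_right h4 (by positivity)) (le_of_eq (by ring))

lemma mem_level_unique {G : Type*} {f : G → ℝ} {k k' : ℤ} {x : G}
    (h : x ∈ levelSet f k) (h' : x ∈ levelSet f k') : k = k' := by
  by_contra hne
  rcases lt_or_gt_of_ne hne with hlt | hlt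
  · have : (2:ℝ) ^ (k+1) ≤ (2:ℝ) ^ k' := by
      apply zpow_le_zpow_right₀ (by norm_num) (by omega)
    exact absurd (h.2.trans_le (this.trans h'.1)) (lt_irrefl _)
  · have : (2:ℝ) ^ (k'+1) ≤ (2:ℝ) ^ k := by
      apply zpow_le_zpow_right₀ (by norm_num) (by omega)
    exact absurd (h'.2.trans_le (this.trans h.1)) (lt_irrefl _)

lemma levelSet_finite {G : Type*} {f : G → ℝ} {p : ℝ} (hp : 0 < p)
    (hf : Summable fun x => |f x| ^ p) (k : ℤ) : (levelSet f k).Finite := by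
  have h0 : (0:ℝ) < ((2:ℝ) ^ k) ^ p := Real.rpow_pos_of_pos (zpow_pos (by norm_num) k) p
  have hev : ∀ᶠ x in Filter.cofinite, |f x| ^ p < ((2:ℝ)^k) ^ p :=
    hf.tendsto_cofinite_zero.eventually_lt_const h0
  have hfin : {x | ¬ (|f x| ^ p < ((2:ℝ)^k) ^ p)}.Finite := by
    simpa using Filter.eventually_cofinite.mp hev
  apply hfin.subset
  intro x hx
  have h2 : (2:ℝ)^k ≤ f x := hx.1
  have habs : (2:ℝ)^k ≤ |f x| := le_trans h2 (le_abs_self _)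
  have : ((2:ℝ)^k) ^ p ≤ |f x| ^ p :=
    Real.rpow_le_rpow (zpow_pos (by norm_num : (0:ℝ) < 2) k).le habs hp.le
  simpa using not_lt.mpr this

lemma pnormR_nonneg {G : Type*} (f : G → ℝ) (p : ℝ) : 0 ≤ pnormR f p :=
  Real.rpow_nonneg (tsum_nonneg fun x => Real.rpow_nonneg (abs_nonneg _) p) _

lemma realterm_le_pnorm {G : Type*} {f : G → ℝ} {p : ℝ} (hp : 0 < p)
    (hf : Summable fun x => |f x| ^ p) (k : ℤ) :
    (2:ℝ) ^ k * (aN f k : ℝ) ^ (1/p) ≤ pnormR f p := by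
  rcases Nat.eq_zero_or_pos (aN f k) with h0 | hpos
  · rw [h0]
    simp only [Nat.cast_zero]
    rw [Real.zero_rpow (by positivity : (1:ℝ)/p ≠ 0), mul_zero]
    exact pnormR_nonneg f p
  · have hfin : (levelSet f k).Finite := levelSet_finite hp hf k
    haveI := hfin.fintype
    set S := ∑' x, |f x| ^ p with hS
    have hSnn : 0 ≤ S := tsum_nonneg fun x => Real.rpow_nonneg (abs_nonneg _) p
    have hsum_le : ((2:ℝ)^k) ^ p * (aN f k : ℝ) ≤ S := by
      have hle : ∀ x ∈ hfin.toFinset, ((2:ℝ)^k) ^ p ≤ |f x| ^ p := by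
        intro x hx
        rw [Set.Finite.mem_toFinset] at hx
        exact Real.rpow_le_rpow (zpow_pos (by norm_num : (0:ℝ) < 2) k).le
          (le_trans hx.1 (le_abs_self _)) hp.le
      calc ((2:ℝ)^k) ^ p * (aN f k : ℝ) = ∑ _x ∈ hfin.toFinset, ((2:ℝ)^k) ^ p := by
            rw [Finset.sum_const, nsmul_eq_mul, mul_comm]
            congr 2
            rw [aN, Nat.card_eq_fintype_card]
            simp [Set.Finite.card_toFinset]
        _ ≤ ∑ x ∈ hfin.toFinset, |f x| ^ p := Finset.sum_le_sum hle
        _ ≤ S := Summable.sum_le_tsum _ (fun x _ => Real.rpow_nonneg (abs_nonneg _) p) hf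
    have hA : (0:ℝ) ≤ (2:ℝ)^k * (aN f k:ℝ)^(1/p) := by positivity
    have hAp : ((2:ℝ)^k * (aN f k:ℝ)^(1/p)) ^ p = ((2:ℝ)^k)^p * (aN f k : ℝ) := by
      rw [Real.mul_rpow (by positivity) (by positivity), ← Real.rpow_mul (by positivity),
        one_div, inv_mul_cancel₀ hp.ne', Real.rpow_one]
    calc (2:ℝ)^k * (aN f k:ℝ)^(1/p)
        = (((2:ℝ)^k * (aN f k:ℝ)^(1/p)) ^ p) ^ (1/p) := by
          rw [← Real.rpow_mul hA, mul_one_div, div_self hp.ne', Real.rpow_one]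
      _ ≤ S ^ (1/p) := by
          apply Real.rpow_le_rpow (by positivity) _ (by positivity)
          rw [hAp]; exact hsum_le
      _ = pnormR f p := rfl

lemma lorentzSup_nonneg {G : Type*} (f : G → ℝ) (p : ℝ) : 0 ≤ lorentzSup f p :=
  Real.iSup_nonneg fun k => by positivity

lemma realterm_le_lorentz {G : Type*} {f : G → ℝ} {p : ℝ} (hp : 0 < p)
    (hf : Summable fun x => |f x| ^ p) (k : ℤ) :
    (2:ℝ) ^ k * (aN f k : ℝ) ^ (1/p) ≤ lorentzSup f p := by
  have hbdd : BddAbove (Set.range fun k : ℤ => (2:ℝ)^k * (Nat.card ↥(levelSet f k) : ℝ)^(1/p)) := by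
    refine ⟨pnormR f p, ?_⟩
    rintro y ⟨k, rfl⟩
    exact realterm_le_pnorm hp hf k
  exact le_ciSup hbdd k

lemma lamE_le_L {G : Type*} {f : G → ℝ} {p : ℝ} (hp : 0 < p)
    (hf : Summable fun x => |f x| ^ p) (k : ℤ) :
    lamE f p k ≤ ofReal (lorentzSup f p) := by
  have h := realterm_le_lorentz hp hf k
  have heq : lamE f p k = ofReal ((2:ℝ)^k * (aN f k : ℝ)^(1/p)) := by
    rw [ENNReal.ofReal_mul (by positivity), ofReal_two_zpow]
    rw [lamE]
    congr 1
    rcases Nat.eq_zero_or_pos (aN f k) with h0 | hpos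
    · rw [h0, Nat.cast_zero, Nat.cast_zero, ENNReal.zero_rpow_of_pos (by positivity),
        Real.zero_rpow (by positivity : (1:ℝ)/p ≠ 0), ENNReal.ofReal_zero]
    · rw [← ENNReal.ofReal_natCast (aN f k),
        ENNReal.ofReal_rpow_of_pos (by exact_mod_cast hpos : (0:ℝ) < (aN f k : ℝ))]
  rw [heq]
  exact ENNReal.ofReal_le_ofReal h

lemma sum_lam_pow_le {G : Type*} {f : G → ℝ} {p : ℝ} (hp : 0 < p)
    (hf : Summable fun x => |f x| ^ p) :
    ∑' k : ℤ, (lamE f p k) ^ p ≤ ∑' x : G, ofReal (|f x| ^ p) := by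
  -- step 1: per-k bound by the subtype sum
  have step1 : ∀ k : ℤ, (lamE f p k) ^ p ≤ ∑' x : ↥(levelSet f k), ofReal (|f (x:G)| ^ p) := by
    intro k
    have hfin := levelSet_finite hp hf k
    haveI := hfin.fintype
    have hlam : (lamE f p k) ^ p = ((2:ℝ≥0∞) ^ k) ^ p * (aN f k : ℝ≥0∞) := by
      rw [lamE, ENNReal.mul_rpow_of_nonneg _ _ hp.le, ← ENNReal.rpow_mul,
        one_div, inv_mul_cancel₀ hp.ne', ENNReal.rpow_one]
    rw [hlam]
    have hcard : ((2:ℝ≥0∞) ^ k) ^ p * (aN f k : ℝ≥0∞)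
        = ∑' _x : ↥(levelSet f k), ((2:ℝ≥0∞) ^ k) ^ p := by
      rw [tsum_fintype]
      simp [Finset.sum_const, aN, Nat.card_eq_fintype_card, mul_comm]
    rw [hcard]
    apply Summable.tsum_le_tsum _ ENNReal.summable ENNReal.summable
    intro x
    have hx := x.2
    have : ((2:ℝ)^k) ^ p ≤ |f (x:G)| ^ p :=
      Real.rpow_le_rpow (by positivity) (le_trans hx.1 (le_abs_self _)) hp.le
    calc ((2:ℝ≥0∞) ^ k) ^ p = ofReal (((2:ℝ)^k) ^ p) := by
          rw [← ofReal_two_zpow, ENNReal.ofReal_rpow_of_pos (by positivity)]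
      _ ≤ ofReal (|f (x:G)| ^ p) := ENNReal.ofReal_le_ofReal this
  -- step 2: sigma re-indexing and injectivity
  calc ∑' k : ℤ, (lamE f p k) ^ p
      ≤ ∑' k : ℤ, ∑' x : ↥(levelSet f k), ofReal (|f (x:G)| ^ p) :=
        Summable.tsum_le_tsum step1 ENNReal.summable ENNReal.summable
    _ = ∑' σ : (Σ k : ℤ, ↥(levelSet f k)), ofReal (|f (σ.2 : G)| ^ p) :=
        (ENNReal.tsum_sigma _).symm
    _ ≤ ∑' x : G, ofReal (|f x| ^ p) := by
        apply ENNReal.tsum_comp_le_tsum_of_injective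
          (f := fun σ : (Σ k : ℤ, ↥(levelSet f k)) => (σ.2 : G))
        rintro ⟨k, x, hx⟩ ⟨k', x', hx'⟩ h
    
        simp only at h
        have hk : k = k' := mem_level_unique (h ▸ hx) hx'
        subst hk
        simp only [Sigma.mk.inj_iff, heq_eq_eq, Subtype.mk.injEq]
        exact ⟨trivial, h⟩

lemma pt_decomp {G : Type*} {f : G → ℝ} {x : G} (hf : 0 ≤ f x) :
    ofReal (f x) ≤ ∑' k : ℤ, (2:ℝ≥0∞) ^ (k+1) * Ind (levelSet f k) x := by
  rcases eq_or_lt_of_le hf with h0 | hpos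
  · rw [← h0, ENNReal.ofReal_zero]; exact zero_le
  · obtain ⟨k, hk⟩ := exists_mem_Ico_zpow hpos (by norm_num : (1:ℝ) < 2)
    have hmem : x ∈ levelSet f k := ⟨hk.1, hk.2⟩
    calc ofReal (f x) ≤ (2:ℝ≥0∞) ^ (k+1) * Ind (levelSet f k) x := by
          rw [Ind, Set.indicator_of_mem hmem, mul_one, ← ofReal_two_zpow]
          exact ENNReal.ofReal_le_ofReal hk.2.le
      _ ≤ ∑' k : ℤ, (2:ℝ≥0∞) ^ (k+1) * Ind (levelSet f k) x := ENNReal.le_tsum k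

section count
variable {G : Type} [AddGroup G]

lemma Dcount12 {E1 E2 E3 : Set G} (h1 : E1.Finite) (h2 : E2.Finite) :
    ∑' q : G × G, Ind E1 q.1 * Ind E2 q.2 * Ind E3 (q.1 + q.2)
      ≤ (Nat.card ↥E1 : ℝ≥0∞) * (Nat.card ↥E2 : ℝ≥0∞) := by
  calc ∑' q : G × G, Ind E1 q.1 * Ind E2 q.2 * Ind E3 (q.1 + q.2)
      ≤ ∑' q : G × G, Ind E1 q.1 * Ind E2 q.2 := by
        apply Summable.tsum_le_tsum _ ENNReal.summable ENNReal.summable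
        intro q
        calc Ind E1 q.1 * Ind E2 q.2 * Ind E3 (q.1+q.2)
            ≤ Ind E1 q.1 * Ind E2 q.2 * 1 := mul_le_mul_right (Ind_le_one _ _) _
          _ = Ind E1 q.1 * Ind E2 q.2 := mul_one _
    _ = (∑' x : G, Ind E1 x) * (∑' y : G, Ind E2 y) := by
        rw [ENNReal.tsum_prod']
        simp_rw [ENNReal.tsum_mul_left]
        rw [ENNReal.tsum_mul_right]
    _ = _ := by rw [card_tsum h1, card_tsum h2]

lemma Dcount13 {E1 E2 E3 : Set G} (h1 : E1.Finite) (h3 : E3.Finite) :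
    ∑' q : G × G, Ind E1 q.1 * Ind E2 q.2 * Ind E3 (q.1 + q.2)
      ≤ (Nat.card ↥E1 : ℝ≥0∞) * (Nat.card ↥E3 : ℝ≥0∞) := by
  calc ∑' q : G × G, Ind E1 q.1 * Ind E2 q.2 * Ind E3 (q.1 + q.2)
      ≤ ∑' q : G × G, Ind E1 q.1 * Ind E3 (q.1 + q.2) := by
        apply Summable.tsum_le_tsum _ ENNReal.summable ENNReal.summable
        intro q
        calc Ind E1 q.1 * Ind E2 q.2 * Ind E3 (q.1+q.2)
            ≤ Ind E1 q.1 * 1 * Ind E3 (q.1+q.2) :=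
              mul_le_mul_left (mul_le_mul_right (Ind_le_one _ _) _) _
          _ = Ind E1 q.1 * Ind E3 (q.1+q.2) := by rw [mul_one]
    _ = ∑' x : G, Ind E1 x * ∑' y : G, Ind E3 (x + y) := by
        rw [ENNReal.tsum_prod']
        simp_rw [ENNReal.tsum_mul_left]
    _ = (∑' x : G, Ind E1 x) * (Nat.card ↥E3 : ℝ≥0∞) := by
        rw [← ENNReal.tsum_mul_right]
        congr 1
        funext x
        congr 1
        rw [← card_tsum h3]
        exact (Equiv.addLeft x).tsum_eq (Ind E3)
    _ = _ := by rw [card_tsum h1]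

lemma Dcount23 {E1 E2 E3 : Set G} (h2 : E2.Finite) (h3 : E3.Finite) :
    ∑' q : G × G, Ind E1 q.1 * Ind E2 q.2 * Ind E3 (q.1 + q.2)
      ≤ (Nat.card ↥E2 : ℝ≥0∞) * (Nat.card ↥E3 : ℝ≥0∞) := by
  calc ∑' q : G × G, Ind E1 q.1 * Ind E2 q.2 * Ind E3 (q.1 + q.2)
      ≤ ∑' q : G × G, Ind E2 q.2 * Ind E3 (q.1 + q.2) := by
        apply Summable.tsum_le_tsum _ ENNReal.summable ENNReal.summable
        intro q
        calc Ind E1 q.1 * Ind E2 q.2 * Ind E3 (q.1+q.2)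
            ≤ 1 * Ind E2 q.2 * Ind E3 (q.1+q.2) :=
              mul_le_mul_left (mul_le_mul_left (Ind_le_one _ _) _) _
          _ = Ind E2 q.2 * Ind E3 (q.1+q.2) := by rw [one_mul]
    _ = ∑' y : G, ∑' x : G, Ind E2 y * Ind E3 (x + y) := by
        rw [ENNReal.tsum_prod']
        exact ENNReal.tsum_comm
    _ = (∑' y : G, Ind E2 y) * (Nat.card ↥E3 : ℝ≥0∞) := by
        rw [← ENNReal.tsum_mul_right]
        congr 1
        funext y
        rw [ENNReal.tsum_mul_left]
        congr 1
        rw [← card_tsum h3]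
        exact (Equiv.addRight y).tsum_eq (Ind E3)
    _ = _ := by rw [card_tsum h2]

end count

lemma fib (h : ℤ → ℝ≥0∞) (ψ : ℤ → ℤ) (g : ℤ → ℝ≥0∞) :
    ∑' k : ℤ, h k * g (ψ k) = ∑' n : ℤ, (∑' k : ℤ, if ψ k = n then h k else 0) * g n := by
  have step : ∀ n : ℤ, (∑' k : ℤ, if ψ k = n then h k else 0) * g n
      = ∑' k : ℤ, if ψ k = n then h k * g n else 0 := by
    intro n
    rw [← ENNReal.tsum_mul_right]
    congr 1; funext k
    by_cases hc : ψ k = n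
    · rw [if_pos hc, if_pos hc]
    · rw [if_neg hc, if_neg hc, zero_mul]
  simp_rw [step]
  rw [ENNReal.tsum_comm]
  congr 1; funext k
  rw [tsum_eq_single (ψ k) (fun n hn => if_neg (fun hc => hn hc.symm))]
  rw [if_pos rfl]

lemma geom_tail (κ : ℤ) :
    ∑' k : ℤ, (if k ≤ κ then (2:ℝ≥0∞) ^ k else 0) = 2 ^ (κ + 1) := by
  have hinj : Function.Injective (fun j : ℕ => κ - (j:ℤ)) := by
    intro a b hab; simp only [sub_right_inj, Int.natCast_inj] at hab; exact_mod_cast hab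
  have hsupp : Function.support (fun k : ℤ => if k ≤ κ then (2:ℝ≥0∞) ^ k else 0)
      ⊆ Set.range (fun j : ℕ => κ - (j:ℤ)) := by
    intro k hk
    have hkle : k ≤ κ := by
      by_contra hc; simp [if_neg hc] at hk
    refine ⟨(κ - k).toNat, ?_⟩
    show κ - ((κ - k).toNat : ℤ) = k
    omega
  rw [← Function.Injective.tsum_eq hinj hsupp]
  have : ∀ j : ℕ, (if κ - (j:ℤ) ≤ κ then (2:ℝ≥0∞) ^ (κ - (j:ℤ)) else 0)
      = 2 ^ κ * (2:ℝ≥0∞)⁻¹ ^ j := by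
    intro j
    rw [if_pos (by omega)]
    rw [ENNReal.zpow_sub (by norm_num) (by norm_num),
      show ((2:ℝ≥0∞) ^ ((j:ℤ)))⁻¹ = ((2:ℝ≥0∞) ^ (j:ℕ))⁻¹ by rw [zpow_natCast],
      ENNReal.inv_pow]
  simp_rw [this]
  rw [ENNReal.tsum_mul_left, ENNReal.tsum_geometric, ENNReal.one_sub_inv_two, inv_inv,
    show (2:ℝ≥0∞)^(κ+1) = 2^κ * 2 by rw [ENNReal.zpow_add (by norm_num) (by norm_num) κ 1, zpow_one]]

lemma wK_ne_zero {ε : ℝ} (m : ℤ) : wK ε m ≠ 0 := by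
  rw [wK]
  simp only [ne_eq, ENNReal.ofReal_eq_zero, not_le]
  positivity

lemma wK_ne_top {ε : ℝ} (m : ℤ) : wK ε m ≠ ∞ := ENNReal.ofReal_ne_top

lemma wK_eq_pow {ε : ℝ} (m : ℤ) : wK ε m = (ofReal ((2:ℝ) ^ (-ε))) ^ m.natAbs := by
  rw [wK, ← ENNReal.ofReal_pow (by positivity)]
  congr 1
  rw [← Real.rpow_natCast ((2:ℝ) ^ (-ε)) m.natAbs, ← Real.rpow_mul (by norm_num)]
  congr 1
  rw [Nat.cast_natAbs]
  push_cast
  ring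

lemma wK_translate {ε : ℝ} (n : ℤ) : ∑' m : ℤ, wK ε (n - m) = ∑' m : ℤ, wK ε m :=
  (Equiv.subLeft n).tsum_eq (wK ε)

lemma wK_translate' {ε : ℝ} (n : ℤ) : ∑' m : ℤ, wK ε (m - n) = ∑' m : ℤ, wK ε m :=
  (Equiv.subRight n).tsum_eq (wK ε)

lemma wK_sum_le {ε : ℝ} (hε : 0 < ε) :
    ∑' m : ℤ, wK ε m ≤ 2 * (1 - ofReal ((2:ℝ) ^ (-ε)))⁻¹ := by
  set r := ofReal ((2:ℝ) ^ (-ε)) with hr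
  have hsplit : ∀ m : ℤ, wK ε m = (if 0 ≤ m then wK ε m else 0) + (if 0 ≤ m then 0 else wK ε m) := by
    intro m; by_cases hc : 0 ≤ m <;> simp [hc]
  calc ∑' m : ℤ, wK ε m
      = (∑' m : ℤ, if 0 ≤ m then wK ε m else 0) + (∑' m : ℤ, if 0 ≤ m then 0 else wK ε m) := by
        rw [← ENNReal.tsum_add]; exact tsum_congr hsplit
    _ ≤ (∑' j : ℕ, r ^ j) + (∑' j : ℕ, r ^ j) := by
        apply add_le_add
        · rw [← Function.Injective.tsum_eq (f := fun m : ℤ => if 0 ≤ m then wK ε m else 0)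
            (fun a b hab => by simpa using hab : Function.Injective (fun j : ℕ => (j:ℤ)))
            (by intro m hm
                have h0 : 0 ≤ m := by by_contra hc; simp [if_neg hc] at hm
                exact ⟨m.toNat, show ((m.toNat:ℕ):ℤ) = m by omega⟩)]
          apply Summable.tsum_le_tsum _ ENNReal.summable ENNReal.summable
          intro j
          rw [if_pos (by positivity), wK_eq_pow]
          simp [hr]
        · rw [← Function.Injective.tsum_eq (f := fun m : ℤ => if 0 ≤ m then 0 else wK ε m)
            (fun a b hab => by simpa using hab : Function.Injective (fun j : ℕ => -(j:ℤ) - 1))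
            (by intro m hm
                have h0 : ¬ (0 ≤ m) := by by_contra hc; simp [if_pos hc] at hm
                exact ⟨(-m-1).toNat, show -(((-m-1).toNat:ℕ):ℤ) - 1 = m by omega⟩)]
          apply Summable.tsum_le_tsum _ ENNReal.summable ENNReal.summable
          intro j
          rw [if_neg (by omega), wK_eq_pow]
          have : (-(j:ℤ) - 1).natAbs = j + 1 := by omega
          rw [this, pow_succ]
          have hr1 : r ≤ 1 := ENNReal.ofReal_le_one.mpr
            (Real.rpow_le_one_of_one_le_of_nonpos one_le_two (by linarith))
          calc r ^ j * r ≤ r ^ j * 1 := mul_le_mul_right hr1 _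
            _ = r ^ j := mul_one _
    _ = 2 * (1 - r)⁻¹ := by rw [ENNReal.tsum_geometric, two_mul]

lemma perterm_abstract {u1 u2 u3 ε : ℝ}
    (hu1 : 0 < u1) (hu2 : 0 < u2) (hu3 : 0 < u3)
    (husum : u1 + u2 + u3 = 2) (hε : 0 < ε)
    (hε1 : 2*ε ≤ 1 - u1) (hε2 : 2*ε ≤ 1 - u2) (hε3 : 2*ε ≤ 1 - u3)
    (a1 a2 a3 : ℕ) {D : ℝ≥0∞}
    (hD12 : D ≤ (a1 : ℝ≥0∞) * (a2 : ℝ≥0∞))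
    (hD13 : D ≤ (a1 : ℝ≥0∞) * (a3 : ℝ≥0∞))
    (hD23 : D ≤ (a2 : ℝ≥0∞) * (a3 : ℝ≥0∞)) :
    D ≤ 4 * ((a1:ℝ≥0∞) ^ u1 * (a2:ℝ≥0∞) ^ u2 * (a3:ℝ≥0∞) ^ u3) *
        (wK ε ((Nat.log 2 a1 : ℤ) - (Nat.log 2 a2 : ℤ)) *
         wK ε ((Nat.log 2 a1 : ℤ) - (Nat.log 2 a3 : ℤ))) := by
  rcases Nat.eq_zero_or_pos a1 with h01 | h1
  · subst h01; simp only [Nat.cast_zero, zero_mul] at hD12; exact hD12.trans (zero_le)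
  rcases Nat.eq_zero_or_pos a2 with h02 | h2
  · subst h02; simp only [Nat.cast_zero, mul_zero] at hD12; exact hD12.trans (zero_le)
  rcases Nat.eq_zero_or_pos a3 with h03 | h3
  · subst h03; simp only [Nat.cast_zero, mul_zero] at hD13; exact hD13.trans (zero_le)
  have key := aminN hu1 hu2 hu3 husum hε hε1 hε2 hε3 h1 h2 h3
  -- D ≤ ofReal of the min
  have hDmin : D ≤ ofReal (min ((a1:ℝ)*(a2:ℝ)) (min ((a1:ℝ)*(a3:ℝ)) ((a2:ℝ)*(a3:ℝ)))) := by
    have hmono : Monotone ofReal := fun x y h => ENNReal.ofReal_le_ofReal h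
    rw [hmono.map_min, hmono.map_min]
    refine le_min ?_ (le_min ?_ ?_)
    · rw [ENNReal.ofReal_mul (by positivity), ENNReal.ofReal_natCast, ENNReal.ofReal_natCast]
      exact hD12
    · rw [ENNReal.ofReal_mul (by positivity), ENNReal.ofReal_natCast, ENNReal.ofReal_natCast]
      exact hD13
    · rw [ENNReal.ofReal_mul (by positivity), ENNReal.ofReal_natCast, ENNReal.ofReal_natCast]
      exact hD23
  refine hDmin.trans ?_
  refine (ENNReal.ofReal_le_ofReal key).trans (le_of_eq ?_)
  rw [ENNReal.ofReal_mul (by positivity), ENNReal.ofReal_mul (by norm_num : (0:ℝ) ≤ 4)]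
  congr 1
  · congr 1
    · norm_num
    · rw [ENNReal.ofReal_mul (by positivity), ENNReal.ofReal_mul (by positivity)]
      congr 1
      · congr 1
        · rw [← ENNReal.ofReal_natCast a1, ENNReal.ofReal_rpow_of_pos (by exact_mod_cast h1)]
        · rw [← ENNReal.ofReal_natCast a2, ENNReal.ofReal_rpow_of_pos (by exact_mod_cast h2)]
      · rw [← ENNReal.ofReal_natCast a3, ENNReal.ofReal_rpow_of_pos (by exact_mod_cast h3)]
  · rw [ENNReal.ofReal_mul (by positivity)]
    unfold wK
    congr 3 <;> push_cast <;> ring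

lemma Lam_le {G : Type*} {f : G → ℝ} {p : ℝ} (hp : 1 ≤ p)
    (hf : Summable fun x => |f x| ^ p) (n : ℤ) :
    LamS f p n ≤ 4 * (MpS f p n) ^ (1/(2*p)) * (ofReal (lorentzSup f p)) ^ ((2:ℝ)⁻¹) := by
  have hp0 : (0:ℝ) < p := lt_of_lt_of_le one_pos hp
  by_cases hK : ∃ k : ℤ, clsZ f k = n ∧ aN f k ≠ 0
  swap
  · -- all terms vanish
    have : LamS f p n = 0 := by
      rw [LamS]
      apply (ENNReal.tsum_eq_zero).mpr
      intro k
      by_cases hc : clsZ f k = n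
      · rw [if_pos hc]
        have ha : aN f k = 0 := by
          by_contra hcc; exact hK ⟨k, hc, hcc⟩
        rw [lamE, ha, Nat.cast_zero, ENNReal.zero_rpow_of_pos (by positivity), mul_zero]
      · rw [if_neg hc]
    rw [this]; exact zero_le
  obtain ⟨k0, hk0cls, hk0ne⟩ := hK
  -- the class index is nonneg, n = n' : ℕ
  have hn0 : 0 ≤ n := by rw [← hk0cls, clsZ]; positivity
  set n' : ℕ := n.toNat with hn'
  have hnn' : (n' : ℤ) = n := Int.toNat_of_nonneg hn0
  -- lower bound inside class : lamE ≥ 2^k * 2^(n'/p)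
  have hlow : ∀ k : ℤ, clsZ f k = n → aN f k ≠ 0 →
      (2:ℝ≥0∞) ^ k * (2:ℝ≥0∞) ^ ((n' : ℝ)/p) ≤ lamE f p k := by
    intro k hc ha
    rw [lamE]
    apply mul_le_mul_right
    have hlog : Nat.log 2 (aN f k) = n' := by
      have : (Nat.log 2 (aN f k) : ℤ) = (n' : ℤ) := by rw [← clsZ, hc, hnn']
      exact_mod_cast this
    have h2n : ((2:ℕ) ^ n' : ℕ) ≤ aN f k := by
      rw [← hlog]; exact Nat.pow_log_le_self 2 ha
    calc (2:ℝ≥0∞) ^ ((n' : ℝ)/p) = ((2:ℝ≥0∞) ^ (n' : ℕ)) ^ (1/p) := by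
          rw [← ENNReal.rpow_natCast 2 n', ← ENNReal.rpow_mul]
          congr 1; ring
      _ ≤ (aN f k : ℝ≥0∞) ^ (1/p) := by
          apply ENNReal.rpow_le_rpow _ (by positivity)
          exact_mod_cast h2n
  -- upper bound inside class: lamE ≤ 2^k * 2^((n'+1)/p)
  have hhigh : ∀ k : ℤ, clsZ f k = n →
      lamE f p k ≤ (2:ℝ≥0∞) ^ k * (2:ℝ≥0∞) ^ (((n' : ℝ)+1)/p) := by
    intro k hc
    rw [lamE]
    apply mul_le_mul_right
    have hlog : Nat.log 2 (aN f k) = n' := by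
      have : (Nat.log 2 (aN f k) : ℤ) = (n' : ℤ) := by rw [← clsZ, hc, hnn']
      exact_mod_cast this
    have h2n : aN f k < (2:ℕ) ^ (n' + 1) := by
      rw [← hlog]; exact Nat.lt_pow_succ_log_self (by norm_num) _
    calc (aN f k : ℝ≥0∞) ^ (1/p) ≤ ((2:ℝ≥0∞) ^ (n'+1 : ℕ)) ^ (1/p) := by
          apply ENNReal.rpow_le_rpow _ (by positivity)
          exact_mod_cast h2n.le
      _ = (2:ℝ≥0∞) ^ (((n' : ℝ)+1)/p) := by
          rw [← ENNReal.rpow_natCast 2 (n'+1), ← ENNReal.rpow_mul]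
          congr 1; push_cast; ring
  -- the class is bounded above
  have hLpos : 0 < lorentzSup f p := by
    have h := realterm_le_lorentz hp0 hf k0
    have : (0:ℝ) < (2:ℝ) ^ k0 * (aN f k0 : ℝ) ^ (1/p) := by
      have : (0:ℝ) < (aN f k0 : ℝ) := by
        have := Nat.pos_of_ne_zero hk0ne; exact_mod_cast this
      positivity
    linarith
  have hbdd : ∀ k : ℤ, clsZ f k = n → aN f k ≠ 0 →
      k ≤ Int.log 2 (lorentzSup f p / ((2:ℝ) ^ ((n' : ℝ)/p))) := by
    intro k hc ha
    have h1 : (2:ℝ) ^ k * (2:ℝ) ^ ((n' : ℝ)/p) ≤ lorentzSup f p := by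
      have h2 : (2:ℝ) ^ ((n' : ℝ)/p) ≤ (aN f k : ℝ) ^ (1/p) := by
        have hlog : Nat.log 2 (aN f k) = n' := by
          have : (Nat.log 2 (aN f k) : ℤ) = (n' : ℤ) := by rw [← clsZ, hc, hnn']
          exact_mod_cast this
        have h2n : ((2:ℕ) ^ n' : ℕ) ≤ aN f k := by
          rw [← hlog]; exact Nat.pow_log_le_self 2 ha
        calc (2:ℝ) ^ ((n' : ℝ)/p) = ((2:ℝ) ^ (n' : ℕ)) ^ (1/p) := by
              rw [← Real.rpow_natCast 2 n', ← Real.rpow_mul (by norm_num)]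
              congr 1; ring
          _ ≤ (aN f k : ℝ) ^ (1/p) := by
              apply Real.rpow_le_rpow (by positivity) _ (by positivity)
              exact_mod_cast h2n
      calc (2:ℝ) ^ k * (2:ℝ) ^ ((n' : ℝ)/p) ≤ (2:ℝ) ^ k * (aN f k : ℝ) ^ (1/p) := by
            apply mul_le_mul_of_nonneg_left h2 (by positivity)
        _ ≤ lorentzSup f p := realterm_le_lorentz hp0 hf k
    have h3 : (2:ℝ) ^ k ≤ lorentzSup f p / ((2:ℝ) ^ ((n' : ℝ)/p)) := by
      rw [le_div_iff₀ (by positivity)]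
      exact h1
    calc k = Int.log 2 ((2:ℝ) ^ k) := by
          rw [show ((2:ℝ) ^ k) = (((2:ℕ)):ℝ) ^ k by norm_num, Int.log_zpow (by norm_num)]
      _ ≤ Int.log 2 (lorentzSup f p / ((2:ℝ) ^ ((n' : ℝ)/p))) :=
          Int.log_mono_right (by positivity) h3
  -- greatest element of class
  obtain ⟨κ, ⟨hκcls, hκne⟩, hκmax⟩ := Int.exists_greatest_of_bdd
    (P := fun k => clsZ f k = n ∧ aN f k ≠ 0)
    ⟨_, fun z hz => hbdd z hz.1 hz.2⟩ ⟨k0, hk0cls, hk0ne⟩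
  -- LamS ≤ 2^((n'+1)/p) * 2^(κ+1)
  have hLam1 : LamS f p n ≤ (2:ℝ≥0∞) ^ (((n' : ℝ)+1)/p) * (2:ℝ≥0∞) ^ (κ+1) := by
    rw [LamS, ← geom_tail κ, ← ENNReal.tsum_mul_left]
    apply Summable.tsum_le_tsum _ ENNReal.summable ENNReal.summable
    intro k
    by_cases hc : clsZ f k = n
    · rw [if_pos hc]
      by_cases ha : aN f k = 0
      · rw [lamE, ha, Nat.cast_zero, ENNReal.zero_rpow_of_pos (by positivity), mul_zero]
        exact zero_le
      · have hkκ : k ≤ κ := hκmax k ⟨hc, ha⟩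
        rw [if_pos hkκ]
        calc lamE f p k ≤ (2:ℝ≥0∞) ^ k * (2:ℝ≥0∞) ^ (((n' : ℝ)+1)/p) := hhigh k hc
          _ = (2:ℝ≥0∞) ^ (((n' : ℝ)+1)/p) * (2:ℝ≥0∞) ^ k := mul_comm _ _
    · rw [if_neg hc]; exact zero_le
  -- 2^((n'+1)/p) * 2^(κ+1) ≤ 4 * lamE f p κ
  have hLam2 : (2:ℝ≥0∞) ^ (((n' : ℝ)+1)/p) * (2:ℝ≥0∞) ^ (κ+1) ≤ 4 * lamE f p κ := by
    have e1 : (2:ℝ≥0∞) ^ (((n' : ℝ)+1)/p) = (2:ℝ≥0∞) ^ ((1:ℝ)/p) * (2:ℝ≥0∞) ^ ((n' : ℝ)/p) := by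
      rw [← ENNReal.rpow_add _ _ (by norm_num) (by norm_num)]
      congr 1; ring
    have e2 : (2:ℝ≥0∞) ^ (κ+1) = 2 * (2:ℝ≥0∞) ^ κ := by
      rw [ENNReal.zpow_add (by norm_num) (by norm_num) κ 1, zpow_one, mul_comm]
    have h2p : (2:ℝ≥0∞) ^ ((1:ℝ)/p) ≤ 2 := by
      calc (2:ℝ≥0∞) ^ ((1:ℝ)/p) ≤ (2:ℝ≥0∞) ^ (1:ℝ) :=
            ENNReal.rpow_le_rpow_of_exponent_le (by norm_num)
              (by rw [div_le_one hp0]; exact hp)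
        _ = 2 := ENNReal.rpow_one 2
    calc (2:ℝ≥0∞) ^ (((n' : ℝ)+1)/p) * (2:ℝ≥0∞) ^ (κ+1)
        = ((2:ℝ≥0∞) ^ ((1:ℝ)/p) * 2) * ((2:ℝ≥0∞) ^ κ * (2:ℝ≥0∞) ^ ((n' : ℝ)/p)) := by
          rw [e1, e2]; ring
      _ ≤ (2 * 2) * ((2:ℝ≥0∞) ^ κ * (2:ℝ≥0∞) ^ ((n' : ℝ)/p)) := by
          apply mul_le_mul_left
          exact mul_le_mul_left h2p 2
      _ ≤ 4 * lamE f p κ := by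
          rw [show (2:ℝ≥0∞) * 2 = 4 by norm_num]
          exact mul_le_mul_right (hlow κ hκcls hκne) 4
  -- lamE f p κ ≤ MpS^(1/(2p)) * L^(1/2)
  have hlamM : lamE f p κ ≤ (MpS f p n) ^ (1/(2*p)) * (ofReal (lorentzSup f p)) ^ ((2:ℝ)⁻¹) := by
    have hfin : lamE f p κ ≠ ∞ :=
      ne_top_of_le_ne_top ENNReal.ofReal_ne_top (lamE_le_L hp0 hf κ)
    by_cases h0 : lamE f p κ = 0
    · rw [h0]; exact zero_le
    have hsplit : lamE f p κ = (lamE f p κ) ^ ((2:ℝ)⁻¹) * (lamE f p κ) ^ ((2:ℝ)⁻¹) := by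
      rw [← ENNReal.rpow_add _ _ h0 hfin]
      norm_num
    rw [hsplit]
    apply mul_le_mul'
    · -- (lamE)^(1/2) ≤ MpS^(1/(2p))
      have h1 : (lamE f p κ) ^ ((2:ℝ)⁻¹) = ((lamE f p κ) ^ p) ^ (1/(2*p)) := by
        rw [← ENNReal.rpow_mul]
        congr 1
        field_simp
      rw [h1]
      apply ENNReal.rpow_le_rpow _ (by positivity)
      rw [MpS]
      have := ENNReal.le_tsum (f := fun k => if clsZ f k = n then (lamE f p k) ^ p else 0) κ
      rw [if_pos hκcls] at this
      exact this
    · exact ENNReal.rpow_le_rpow (lamE_le_L hp0 hf κ) (by positivity)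
  calc LamS f p n ≤ (2:ℝ≥0∞) ^ (((n' : ℝ)+1)/p) * (2:ℝ≥0∞) ^ (κ+1) := hLam1
    _ ≤ 4 * lamE f p κ := hLam2
    _ ≤ 4 * ((MpS f p n) ^ (1/(2*p)) * (ofReal (lorentzSup f p)) ^ ((2:ℝ)⁻¹)) :=
        mul_le_mul_right hlamM 4
    _ = _ := by rw [mul_assoc]

lemma tsum_holder3 {X : Type*} [Countable X] [MeasurableSpace X] [MeasurableSingletonClass X]
    (f g h : X → ℝ≥0∞) {a b c : ℝ} (ha : 0 ≤ a) (hb : 0 ≤ b) (hc : 0 ≤ c)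
    (habc : a + b + c = 1) :
    ∑' x, (f x) ^ a * (g x) ^ b * (h x) ^ c
      ≤ (∑' x, f x) ^ a * (∑' x, g x) ^ b * (∑' x, h x) ^ c := by
  classical
  set F : Fin 3 → X → ℝ≥0∞ := ![f, g, h]
  set P : Fin 3 → ℝ := ![a, b, c]
  have hmeas : ∀ i ∈ Finset.univ, AEMeasurable (F i) (Measure.count : Measure X) :=
    fun i _ => (measurable_of_countable (F i)).aemeasurable
  have hsum : ∑ i ∈ Finset.univ, P i = 1 := by
    rw [Fin.sum_univ_three]; simpa [P] using habc
  have hnn : ∀ i ∈ Finset.univ, 0 ≤ P i := by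
    intro i _
    fin_cases i <;> simpa [P]
  have H := ENNReal.lintegral_prod_norm_pow_le (μ := (Measure.count : Measure X))
    Finset.univ hmeas hsum hnn
  rw [lintegral_count] at H
  calc ∑' x, (f x) ^ a * (g x) ^ b * (h x) ^ c
      = ∑' x, ∏ i ∈ Finset.univ, F i x ^ P i := by
        congr 1; funext x; rw [Fin.prod_univ_three]; simp [F, P]
    _ ≤ ∏ i ∈ Finset.univ, (∫⁻ x, F i x ∂(Measure.count : Measure X)) ^ P i := H
    _ = (∑' x, f x) ^ a * (∑' x, g x) ^ b * (∑' x, h x) ^ c := by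
        rw [Fin.prod_univ_three]
        simp only [F, P]
        rw [lintegral_count, lintegral_count, lintegral_count]
        simp

lemma sum_MpS {G : Type*} (f : G → ℝ) (p : ℝ) :
    ∑' n : ℤ, MpS f p n = ∑' k : ℤ, (lamE f p k) ^ p := by
  unfold MpS
  rw [ENNReal.tsum_comm]
  exact tsum_congr fun k => by
    rw [tsum_eq_single (clsZ f k) (fun n hn => if_neg (fun hc => hn hc.symm)), if_pos rfl]

lemma tsum_mul3 (a b c : ℤ → ℝ≥0∞) :
    (∑' i, a i) * (∑' j, b j) * (∑' l, c l) = ∑' i, ∑' j, ∑' l, a i * b j * c l := by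
  have inner : ∀ i j, (∑' l, a i * b j * c l) = a i * b j * (∑' l, c l) := by
    intro i j; simp_rw [mul_assoc]; rw [ENNReal.tsum_mul_left, ENNReal.tsum_mul_left]
  have mid : ∀ i, (∑' j, a i * b j * (∑' l, c l)) = a i * (∑' j, b j) * (∑' l, c l) := by
    intro i
    have : ∀ j, a i * b j * (∑' l, c l) = a i * (b j * (∑' l, c l)) := fun j => by ring
    simp_rw [this]
    rw [ENNReal.tsum_mul_left, ENNReal.tsum_mul_right, mul_assoc]
  calc (∑' i, a i) * (∑' j, b j) * (∑' l, c l)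
      = ∑' i, a i * (∑' j, b j) * (∑' l, c l) := by
        rw [← ENNReal.tsum_mul_right, ← ENNReal.tsum_mul_right]
    _ = ∑' i, ∑' j, ∑' l, a i * b j * c l := by
        refine tsum_congr fun i => ?_
        rw [← mid i]
        exact tsum_congr fun j => (inner i j).symm

/-- The core ENNReal estimate. -/

theorem core {G : Type} [AddGroup G] {p1 p2 p3 ε : ℝ}
    (hp1 : 1 < p1) (hp2 : 1 < p2) (hp3 : 1 < p3)
    (hsum : 1 / p1 + 1 / p2 + 1 / p3 = 2)
    (hε : 0 < ε)
    (hε1 : 2*ε ≤ 1 - 1/p1) (hε2 : 2*ε ≤ 1 - 1/p2) (hε3 : 2*ε ≤ 1 - 1/p3)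
    (f1 f2 f3 : G → ℝ)
    (hf1 : ∀ x, 0 ≤ f1 x) (hf2 : ∀ x, 0 ≤ f2 x) (hf3 : ∀ x, 0 ≤ f3 x)
    (hs1 : Summable fun x => |f1 x| ^ p1)
    (hs2 : Summable fun x => |f2 x| ^ p2)
    (hs3 : Summable fun x => |f3 x| ^ p3) :
    ∑' q : G × G, ofReal (f1 q.1) * ofReal (f2 q.2) * ofReal (f3 (q.1 + q.2)) ≤
      (2048 * (2 * (1 - ofReal ((2:ℝ) ^ (-ε)))⁻¹) ^ (2:ℕ)) *
        ((ofReal (pnormR f1 p1)) ^ ((2:ℝ)⁻¹) * (ofReal (pnormR f2 p2)) ^ ((2:ℝ)⁻¹) *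
          (ofReal (pnormR f3 p3)) ^ ((2:ℝ)⁻¹)) *
        ((ofReal (lorentzSup f1 p1)) ^ ((2:ℝ)⁻¹) * (ofReal (lorentzSup f2 p2)) ^ ((2:ℝ)⁻¹) *
          (ofReal (lorentzSup f3 p3)) ^ ((2:ℝ)⁻¹)) := by
  have hq1 : (0:ℝ) < p1 := lt_trans one_pos hp1
  have hq2 : (0:ℝ) < p2 := lt_trans one_pos hp2
  have hq3 : (0:ℝ) < p3 := lt_trans one_pos hp3
  -- shorthand
  set lam1 := lamE f1 p1
  set lam2 := lamE f2 p2
  set lam3 := lamE f3 p3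
  set c1 := clsZ f1
  set c2 := clsZ f2
  set c3 := clsZ f3
  set Sw := ∑' m : ℤ, wK ε m with hSw
  set SwB := 2 * (1 - ofReal ((2:ℝ) ^ (-ε)))⁻¹ with hSwB
  set Lo1 := ofReal (lorentzSup f1 p1)
  set Lo2 := ofReal (lorentzSup f2 p2)
  set Lo3 := ofReal (lorentzSup f3 p3)
  set mu1 : ℤ → ℝ≥0∞ := fun n => (MpS f1 p1 n) ^ (1/(2*p1)) with hmu1
  set mu2 : ℤ → ℝ≥0∞ := fun n => (MpS f2 p2 n) ^ (1/(2*p2)) with hmu2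
  set mu3 : ℤ → ℝ≥0∞ := fun n => (MpS f3 p3 n) ^ (1/(2*p3)) with hmu3
  set K2 : ℤ → ℝ≥0∞ := fun n => ∑' m : ℤ, mu2 m * wK ε (n - m) with hK2
  set K3 : ℤ → ℝ≥0∞ := fun n => ∑' m : ℤ, mu3 m * wK ε (n - m) with hK3
  set G2 : ℤ → ℝ≥0∞ := fun n => ∑' k : ℤ, lam2 k * wK ε (n - c2 k) with hG2
  set G3 : ℤ → ℝ≥0∞ := fun n => ∑' k : ℤ, lam3 k * wK ε (n - c3 k) with hG3
  -- Step 1+2+3 : decompose into dyadic pieces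
  have step123 :
      ∑' q : G × G, ofReal (f1 q.1) * ofReal (f2 q.2) * ofReal (f3 (q.1 + q.2)) ≤
      ∑' k1 : ℤ, ∑' k2 : ℤ, ∑' k3 : ℤ,
        (2:ℝ≥0∞)^(k1+1) * (2:ℝ≥0∞)^(k2+1) * (2:ℝ≥0∞)^(k3+1) *
          ∑' q : G × G, Ind (levelSet f1 k1) q.1 * Ind (levelSet f2 k2) q.2 *
            Ind (levelSet f3 k3) (q.1 + q.2) := by
    calc ∑' q : G × G, ofReal (f1 q.1) * ofReal (f2 q.2) * ofReal (f3 (q.1 + q.2))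
        ≤ ∑' q : G × G,
            (∑' k1 : ℤ, (2:ℝ≥0∞)^(k1+1) * Ind (levelSet f1 k1) q.1) *
            (∑' k2 : ℤ, (2:ℝ≥0∞)^(k2+1) * Ind (levelSet f2 k2) q.2) *
            (∑' k3 : ℤ, (2:ℝ≥0∞)^(k3+1) * Ind (levelSet f3 k3) (q.1 + q.2)) := by
          apply Summable.tsum_le_tsum _ ENNReal.summable ENNReal.summable
          intro q
          exact mul_le_mul' (mul_le_mul' (pt_decomp (hf1 q.1)) (pt_decomp (hf2 q.2)))
            (pt_decomp (hf3 (q.1 + q.2)))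
      _ = ∑' q : G × G, ∑' k1 : ℤ, ∑' k2 : ℤ, ∑' k3 : ℤ,
            ((2:ℝ≥0∞)^(k1+1) * Ind (levelSet f1 k1) q.1) *
            ((2:ℝ≥0∞)^(k2+1) * Ind (levelSet f2 k2) q.2) *
            ((2:ℝ≥0∞)^(k3+1) * Ind (levelSet f3 k3) (q.1 + q.2)) := by
          exact tsum_congr fun q => tsum_mul3 _ _ _
      _ = ∑' k1 : ℤ, ∑' k2 : ℤ, ∑' k3 : ℤ, ∑' q : G × G,
            ((2:ℝ≥0∞)^(k1+1) * Ind (levelSet f1 k1) q.1) *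
            ((2:ℝ≥0∞)^(k2+1) * Ind (levelSet f2 k2) q.2) *
            ((2:ℝ≥0∞)^(k3+1) * Ind (levelSet f3 k3) (q.1 + q.2)) := by
          rw [ENNReal.tsum_comm]
          exact tsum_congr fun k1 => by
            rw [ENNReal.tsum_comm]
            exact tsum_congr fun k2 => ENNReal.tsum_comm
      _ = _ := by
          refine tsum_congr fun k1 => tsum_congr fun k2 => tsum_congr fun k3 => ?_
          rw [← ENNReal.tsum_mul_left]
          exact tsum_congr fun q => by ring
  -- Step 4 : per-term estimate
  have step4 : ∀ k1 k2 k3 : ℤ,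
      (2:ℝ≥0∞)^(k1+1) * (2:ℝ≥0∞)^(k2+1) * (2:ℝ≥0∞)^(k3+1) *
          ∑' q : G × G, Ind (levelSet f1 k1) q.1 * Ind (levelSet f2 k2) q.2 *
            Ind (levelSet f3 k3) (q.1 + q.2)
        ≤ 32 * (lam1 k1 * (lam2 k2 * wK ε (c1 k1 - c2 k2)) * (lam3 k3 * wK ε (c1 k1 - c3 k3))) := by
    intro k1 k2 k3
    have hP := perterm_abstract (u1 := 1/p1) (u2 := 1/p2) (u3 := 1/p3)
      (by positivity) (by positivity) (by positivity) hsum hε hε1 hε2 hε3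
      (aN f1 k1) (aN f2 k2) (aN f3 k3)
      (Dcount12 (levelSet_finite hq1 hs1 k1) (levelSet_finite hq2 hs2 k2))
      (Dcount13 (levelSet_finite hq1 hs1 k1) (levelSet_finite hq3 hs3 k3))
      (Dcount23 (levelSet_finite hq2 hs2 k2) (levelSet_finite hq3 hs3 k3))
    have h2k : ∀ k : ℤ, (2:ℝ≥0∞)^(k+1) = 2 * (2:ℝ≥0∞)^k := fun k => by
      rw [ENNReal.zpow_add (by norm_num) (by norm_num) k 1, zpow_one, mul_comm]
    calc (2:ℝ≥0∞)^(k1+1) * (2:ℝ≥0∞)^(k2+1) * (2:ℝ≥0∞)^(k3+1) *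
          ∑' q : G × G, Ind (levelSet f1 k1) q.1 * Ind (levelSet f2 k2) q.2 *
            Ind (levelSet f3 k3) (q.1 + q.2)
        ≤ (2:ℝ≥0∞)^(k1+1) * (2:ℝ≥0∞)^(k2+1) * (2:ℝ≥0∞)^(k3+1) *
            (4 * ((aN f1 k1:ℝ≥0∞) ^ (1/p1) * (aN f2 k2:ℝ≥0∞) ^ (1/p2) *
              (aN f3 k3:ℝ≥0∞) ^ (1/p3)) *
            (wK ε (c1 k1 - c2 k2) * wK ε (c1 k1 - c3 k3))) := mul_le_mul_right hP _
      _ = 32 * (lam1 k1 * (lam2 k2 * wK ε (c1 k1 - c2 k2)) *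
            (lam3 k3 * wK ε (c1 k1 - c3 k3))) := by
          rw [h2k k1, h2k k2, h2k k3]
          show _ = 32 * ((2:ℝ≥0∞)^k1 * (aN f1 k1:ℝ≥0∞) ^ (1/p1) *
            ((2:ℝ≥0∞)^k2 * (aN f2 k2:ℝ≥0∞) ^ (1/p2) * wK ε (c1 k1 - c2 k2)) *
            ((2:ℝ≥0∞)^k3 * (aN f3 k3:ℝ≥0∞) ^ (1/p3) * wK ε (c1 k1 - c3 k3)))
          ring
  -- Step 5 : collapse sums, regroup by classes
  have hG2eq : ∀ n : ℤ, G2 n = ∑' m : ℤ, LamS f2 p2 m * wK ε (n - m) := by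
    intro n
    exact fib lam2 c2 (fun m => wK ε (n - m))
  have hG3eq : ∀ n : ℤ, G3 n = ∑' m : ℤ, LamS f3 p3 m * wK ε (n - m) := by
    intro n
    exact fib lam3 c3 (fun m => wK ε (n - m))
  have step5 :
      (∑' k1 : ℤ, ∑' k2 : ℤ, ∑' k3 : ℤ,
        32 * (lam1 k1 * (lam2 k2 * wK ε (c1 k1 - c2 k2)) * (lam3 k3 * wK ε (c1 k1 - c3 k3))))
      = 32 * ∑' n : ℤ, LamS f1 p1 n * (G2 n * G3 n) := by
    have inner3 : ∀ k1 k2 : ℤ,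
        (∑' k3 : ℤ, 32 * (lam1 k1 * (lam2 k2 * wK ε (c1 k1 - c2 k2)) *
          (lam3 k3 * wK ε (c1 k1 - c3 k3))))
        = (32 * (lam1 k1 * (lam2 k2 * wK ε (c1 k1 - c2 k2)))) * G3 (c1 k1) := by
      intro k1 k2
      rw [hG3, ← ENNReal.tsum_mul_left]
      exact tsum_congr fun k3 => by ring
    have inner2 : ∀ k1 : ℤ,
        (∑' k2 : ℤ, (32 * (lam1 k1 * (lam2 k2 * wK ε (c1 k1 - c2 k2)))) * G3 (c1 k1))
        = (32 * lam1 k1 * G3 (c1 k1)) * G2 (c1 k1) := by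
      intro k1
      rw [hG2, ← ENNReal.tsum_mul_left]
      exact tsum_congr fun k2 => by ring
    calc (∑' k1 : ℤ, ∑' k2 : ℤ, ∑' k3 : ℤ,
        32 * (lam1 k1 * (lam2 k2 * wK ε (c1 k1 - c2 k2)) * (lam3 k3 * wK ε (c1 k1 - c3 k3))))
        = ∑' k1 : ℤ, (32 * lam1 k1 * G3 (c1 k1)) * G2 (c1 k1) := by
          refine tsum_congr fun k1 => ?_
          rw [← inner2 k1]
          exact tsum_congr fun k2 => inner3 k1 k2
      _ = ∑' k1 : ℤ, 32 * (lam1 k1 * (G2 (c1 k1) * G3 (c1 k1))) := by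
          exact tsum_congr fun k1 => by ring
      _ = 32 * ∑' k1 : ℤ, lam1 k1 * (G2 (c1 k1) * G3 (c1 k1)) := ENNReal.tsum_mul_left
      _ = 32 * ∑' n : ℤ, LamS f1 p1 n * (G2 n * G3 n) := by
          rw [fib lam1 c1 (fun n => G2 n * G3 n)]
          rfl
  -- Step 6 : insert the class bounds
  have hLam1le : ∀ n, LamS f1 p1 n ≤ 4 * mu1 n * Lo1 ^ ((2:ℝ)⁻¹) := fun n => Lam_le hp1.le hs1 n
  have hLam2le : ∀ n, LamS f2 p2 n ≤ 4 * mu2 n * Lo2 ^ ((2:ℝ)⁻¹) := fun n => Lam_le hp2.le hs2 n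
  have hLam3le : ∀ n, LamS f3 p3 n ≤ 4 * mu3 n * Lo3 ^ ((2:ℝ)⁻¹) := fun n => Lam_le hp3.le hs3 n
  have hG2le : ∀ n : ℤ, G2 n ≤ (4 * Lo2 ^ ((2:ℝ)⁻¹)) * K2 n := by
    intro n
    rw [hG2eq n, hK2, ← ENNReal.tsum_mul_left]
    refine Summable.tsum_le_tsum (fun m => ?_) ENNReal.summable ENNReal.summable
    calc LamS f2 p2 m * wK ε (n - m) ≤ (4 * mu2 m * Lo2 ^ ((2:ℝ)⁻¹)) * wK ε (n - m) :=
          mul_le_mul_left (hLam2le m) _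
      _ = 4 * Lo2 ^ ((2:ℝ)⁻¹) * (mu2 m * wK ε (n - m)) := by ring
  have hG3le : ∀ n : ℤ, G3 n ≤ (4 * Lo3 ^ ((2:ℝ)⁻¹)) * K3 n := by
    intro n
    rw [hG3eq n, hK3, ← ENNReal.tsum_mul_left]
    refine Summable.tsum_le_tsum (fun m => ?_) ENNReal.summable ENNReal.summable
    calc LamS f3 p3 m * wK ε (n - m) ≤ (4 * mu3 m * Lo3 ^ ((2:ℝ)⁻¹)) * wK ε (n - m) :=
          mul_le_mul_left (hLam3le m) _
      _ = 4 * Lo3 ^ ((2:ℝ)⁻¹) * (mu3 m * wK ε (n - m)) := by ring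
  have step6 :
      ∑' n : ℤ, LamS f1 p1 n * (G2 n * G3 n)
        ≤ 64 * (Lo1 ^ ((2:ℝ)⁻¹) * Lo2 ^ ((2:ℝ)⁻¹) * Lo3 ^ ((2:ℝ)⁻¹)) *
          ∑' n : ℤ, mu1 n * (K2 n * K3 n) := by
    rw [← ENNReal.tsum_mul_left]
    refine Summable.tsum_le_tsum (fun n => ?_) ENNReal.summable ENNReal.summable
    calc LamS f1 p1 n * (G2 n * G3 n)
        ≤ (4 * mu1 n * Lo1 ^ ((2:ℝ)⁻¹)) *
            (((4 * Lo2 ^ ((2:ℝ)⁻¹)) * K2 n) * ((4 * Lo3 ^ ((2:ℝ)⁻¹)) * K3 n)) :=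
          mul_le_mul' (hLam1le n) (mul_le_mul' (hG2le n) (hG3le n))
      _ = 64 * (Lo1 ^ ((2:ℝ)⁻¹) * Lo2 ^ ((2:ℝ)⁻¹) * Lo3 ^ ((2:ℝ)⁻¹)) *
            (mu1 n * (K2 n * K3 n)) := by ring
  -- Step 7 : Hölder on ℤ³
  have hSwB_ne_top : SwB ≠ ∞ := by
    rw [hSwB]
    refine ENNReal.mul_ne_top (by norm_num) (ENNReal.inv_ne_top.mpr ?_)
    have hr1 : ofReal ((2:ℝ) ^ (-ε)) < 1 :=
      ENNReal.ofReal_lt_one.mpr (Real.rpow_lt_one_of_one_lt_of_neg (by norm_num) (by linarith))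
    exact ne_of_gt (tsub_pos_iff_lt.mpr hr1)
  have hSwB_ne_zero : SwB ≠ 0 := by
    rw [hSwB]
    refine mul_ne_zero (by norm_num) (ENNReal.inv_ne_zero.mpr ?_)
    exact ne_top_of_le_ne_top (by norm_num : (1:ℝ≥0∞) ≠ ⊤) tsub_le_self
  have hSw_le : Sw ≤ SwB := wK_sum_le hε
  have hρsum : 1/(2*p1) + 1/(2*p2) + 1/(2*p3) = 1 := by
    have e1 : 1/(2*p1) = (1/p1)/2 := by ring
    have e2 : 1/(2*p2) = (1/p2)/2 := by ring
    have e3 : 1/(2*p3) = (1/p3)/2 := by ring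
    rw [e1, e2, e3]; linarith
  have hmuMp : ∀ (mu : ℤ → ℝ≥0∞) (Mp : ℤ → ℝ≥0∞) (p : ℝ), 0 < p →
      (∀ n, mu n = (Mp n) ^ (1/(2*p))) → ∀ n, (mu n) ^ (2*p) = Mp n := by
    intro mu Mp p hp hdef n
    rw [hdef n, ← ENNReal.rpow_mul]
    rw [show 1/(2*p) * (2*p) = 1 by field_simp]
    exact ENNReal.rpow_one _
  -- the three functions for Hölder on X = ℤ × ℤ × ℤ
  set X := ℤ × (ℤ × ℤ)
  set W : X → ℝ≥0∞ := fun x => wK ε (x.1 - x.2.1) * wK ε (x.1 - x.2.2) with hW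
  have hW_ne_zero : ∀ x : X, W x ≠ 0 := fun x => mul_ne_zero (wK_ne_zero _) (wK_ne_zero _)
  have hW_ne_top : ∀ x : X, W x ≠ ∞ := fun x => ENNReal.mul_ne_top (wK_ne_top _) (wK_ne_top _)
  set F1 : X → ℝ≥0∞ := fun x => (mu1 x.1) ^ (2*p1) * W x with hF1
  set F2 : X → ℝ≥0∞ := fun x => (mu2 x.2.1) ^ (2*p2) * W x with hF2
  set F3 : X → ℝ≥0∞ := fun x => (mu3 x.2.2) ^ (2*p3) * W x with hF3
  -- H as a single sum
  have hHsingle : (∑' n : ℤ, mu1 n * (K2 n * K3 n))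
      = ∑' x : X, mu1 x.1 * mu2 x.2.1 * mu3 x.2.2 * W x := by
    rw [ENNReal.tsum_prod']
    refine tsum_congr fun n1 => ?_
    rw [ENNReal.tsum_prod']
    have innerK2 : ∀ (Cst : ℝ≥0∞), Cst * K2 n1 = ∑' m : ℤ, Cst * (mu2 m * wK ε (n1 - m)) := by
      intro Cst
      simp only [hK2]
      exact (ENNReal.tsum_mul_left).symm
    have innerK3 : ∀ (Cst : ℝ≥0∞), Cst * K3 n1 = ∑' m : ℤ, Cst * (mu3 m * wK ε (n1 - m)) := by
      intro Cst
      simp only [hK3]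
      exact (ENNReal.tsum_mul_left).symm
    calc mu1 n1 * (K2 n1 * K3 n1)
        = (mu1 n1 * K3 n1) * K2 n1 := by ring
      _ = ∑' n2 : ℤ, (mu1 n1 * K3 n1) * (mu2 n2 * wK ε (n1 - n2)) := innerK2 _
      _ = ∑' n2 : ℤ, ∑' n3 : ℤ, mu1 n1 * mu2 n2 * mu3 n3 * (wK ε (n1 - n2) * wK ε (n1 - n3)) := by
          refine tsum_congr fun n2 => ?_
          calc (mu1 n1 * K3 n1) * (mu2 n2 * wK ε (n1 - n2))
              = (mu1 n1 * mu2 n2 * wK ε (n1 - n2)) * K3 n1 := by ring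
            _ = ∑' n3 : ℤ, (mu1 n1 * mu2 n2 * wK ε (n1 - n2)) * (mu3 n3 * wK ε (n1 - n3)) :=
                innerK3 _
            _ = ∑' n3 : ℤ, mu1 n1 * mu2 n2 * mu3 n3 * (wK ε (n1 - n2) * wK ε (n1 - n3)) :=
                tsum_congr fun n3 => by ring
  -- pointwise Hölder splitting
  have hpoint : ∀ x : X, mu1 x.1 * mu2 x.2.1 * mu3 x.2.2 * W x
      = (F1 x) ^ (1/(2*p1)) * (F2 x) ^ (1/(2*p2)) * (F3 x) ^ (1/(2*p3)) := by
    intro x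
    have hWsplit : (W x) ^ (1/(2*p1)) * (W x) ^ (1/(2*p2)) * (W x) ^ (1/(2*p3)) = W x := by
      rw [← ENNReal.rpow_add _ _ (hW_ne_zero x) (hW_ne_top x),
        ← ENNReal.rpow_add _ _ (hW_ne_zero x) (hW_ne_top x), hρsum, ENNReal.rpow_one]
    have e1 : (F1 x) ^ (1/(2*p1)) = mu1 x.1 * (W x) ^ (1/(2*p1)) := by
      simp only [hF1]
      rw [ENNReal.mul_rpow_of_nonneg _ _ (by positivity), ← ENNReal.rpow_mul,
        show (2*p1) * (1/(2*p1)) = 1 by field_simp, ENNReal.rpow_one]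
    have e2 : (F2 x) ^ (1/(2*p2)) = mu2 x.2.1 * (W x) ^ (1/(2*p2)) := by
      simp only [hF2]
      rw [ENNReal.mul_rpow_of_nonneg _ _ (by positivity), ← ENNReal.rpow_mul,
        show (2*p2) * (1/(2*p2)) = 1 by field_simp, ENNReal.rpow_one]
    have e3 : (F3 x) ^ (1/(2*p3)) = mu3 x.2.2 * (W x) ^ (1/(2*p3)) := by
      simp only [hF3]
      rw [ENNReal.mul_rpow_of_nonneg _ _ (by positivity), ← ENNReal.rpow_mul,
        show (2*p3) * (1/(2*p3)) = 1 by field_simp, ENNReal.rpow_one]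
    rw [e1, e2, e3]
    calc mu1 x.1 * mu2 x.2.1 * mu3 x.2.2 * W x
        = mu1 x.1 * mu2 x.2.1 * mu3 x.2.2 *
            ((W x) ^ (1/(2*p1)) * (W x) ^ (1/(2*p2)) * (W x) ^ (1/(2*p3))) := by rw [hWsplit]
      _ = mu1 x.1 * (W x) ^ (1/(2*p1)) * (mu2 x.2.1 * (W x) ^ (1/(2*p2))) *
            (mu3 x.2.2 * (W x) ^ (1/(2*p3))) := by ring
  -- sums of the three Hölder functions
  set A1 := ∑' x : G, ofReal (|f1 x| ^ p1) with hA1def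
  set A2 := ∑' x : G, ofReal (|f2 x| ^ p2) with hA2def
  set A3 := ∑' x : G, ofReal (|f3 x| ^ p3) with hA3def
  have hmu1sum : ∑' n : ℤ, (mu1 n) ^ (2*p1) ≤ A1 := by
    have : ∀ n, (mu1 n) ^ (2*p1) = MpS f1 p1 n := fun n =>
      hmuMp mu1 (MpS f1 p1) p1 hq1 (fun _ => rfl) n
    simp_rw [this]
    rw [sum_MpS]
    exact sum_lam_pow_le hq1 hs1
  have hmu2sum : ∑' n : ℤ, (mu2 n) ^ (2*p2) ≤ A2 := by
    have : ∀ n, (mu2 n) ^ (2*p2) = MpS f2 p2 n := fun n =>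
      hmuMp mu2 (MpS f2 p2) p2 hq2 (fun _ => rfl) n
    simp_rw [this]
    rw [sum_MpS]
    exact sum_lam_pow_le hq2 hs2
  have hmu3sum : ∑' n : ℤ, (mu3 n) ^ (2*p3) ≤ A3 := by
    have : ∀ n, (mu3 n) ^ (2*p3) = MpS f3 p3 n := fun n =>
      hmuMp mu3 (MpS f3 p3) p3 hq3 (fun _ => rfl) n
    simp_rw [this]
    rw [sum_MpS]
    exact sum_lam_pow_le hq3 hs3
  have hFsum1 : ∑' x : X, F1 x = (∑' n : ℤ, (mu1 n) ^ (2*p1)) * (Sw * Sw) := by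
    rw [ENNReal.tsum_prod']
    rw [← ENNReal.tsum_mul_right]
    refine tsum_congr fun n1 => ?_
    rw [ENNReal.tsum_prod']
    have inner : ∀ n2 : ℤ,
        (∑' n3 : ℤ, (mu1 n1) ^ (2*p1) * (wK ε (n1 - n2) * wK ε (n1 - n3)))
        = ((mu1 n1) ^ (2*p1) * wK ε (n1 - n2)) * Sw := by
      intro n2
      rw [hSw, ← wK_translate (ε := ε) n1, ← ENNReal.tsum_mul_left]
      exact tsum_congr fun n3 => by ring
    calc (∑' n2 : ℤ, ∑' n3 : ℤ, F1 (n1, n2, n3))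
        = ∑' n2 : ℤ, ((mu1 n1) ^ (2*p1) * wK ε (n1 - n2)) * Sw := by
          exact tsum_congr fun n2 => inner n2
      _ = ((mu1 n1) ^ (2*p1) * Sw) * Sw := by
          rw [ENNReal.tsum_mul_right, ENNReal.tsum_mul_left, wK_translate (ε := ε) n1, ← hSw]
      _ = (mu1 n1) ^ (2*p1) * (Sw * Sw) := by ring
  have hFsum2 : ∑' x : X, F2 x = (∑' n : ℤ, (mu2 n) ^ (2*p2)) * (Sw * Sw) := by
    rw [ENNReal.tsum_prod']
    have inner : ∀ n1 n2 : ℤ,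
        (∑' n3 : ℤ, (mu2 n2) ^ (2*p2) * (wK ε (n1 - n2) * wK ε (n1 - n3)))
        = ((mu2 n2) ^ (2*p2) * wK ε (n1 - n2)) * Sw := by
      intro n1 n2
      rw [hSw, ← wK_translate (ε := ε) n1, ← ENNReal.tsum_mul_left]
      exact tsum_congr fun n3 => by ring
    calc (∑' n1 : ℤ, ∑' y : ℤ × ℤ, F2 (n1, y))
        = ∑' n1 : ℤ, ∑' n2 : ℤ, ((mu2 n2) ^ (2*p2) * wK ε (n1 - n2)) * Sw := by
          refine tsum_congr fun n1 => ?_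
          rw [ENNReal.tsum_prod']
          exact tsum_congr fun n2 => inner n1 n2
      _ = ∑' n2 : ℤ, ∑' n1 : ℤ, ((mu2 n2) ^ (2*p2) * wK ε (n1 - n2)) * Sw := by
          rw [ENNReal.tsum_comm]
      _ = ∑' n2 : ℤ, ((mu2 n2) ^ (2*p2)) * (Sw * Sw) := by
          refine tsum_congr fun n2 => ?_
          rw [ENNReal.tsum_mul_right, ENNReal.tsum_mul_left, wK_translate' (ε := ε) n2, ← hSw]
          ring
      _ = (∑' n : ℤ, (mu2 n) ^ (2*p2)) * (Sw * Sw) := ENNReal.tsum_mul_right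
  have hFsum3 : ∑' x : X, F3 x = (∑' n : ℤ, (mu3 n) ^ (2*p3)) * (Sw * Sw) := by
    rw [ENNReal.tsum_prod']
    have inner : ∀ n1 n2 : ℤ,
        (∑' n3 : ℤ, (mu3 n3) ^ (2*p3) * (wK ε (n1 - n2) * wK ε (n1 - n3)))
        = wK ε (n1 - n2) * (∑' n3 : ℤ, (mu3 n3) ^ (2*p3) * wK ε (n1 - n3)) := by
      intro n1 n2
      rw [← ENNReal.tsum_mul_left]
      exact tsum_congr fun n3 => by ring
    calc (∑' n1 : ℤ, ∑' y : ℤ × ℤ, F3 (n1, y))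
        = ∑' n1 : ℤ, Sw * (∑' n3 : ℤ, (mu3 n3) ^ (2*p3) * wK ε (n1 - n3)) := by
          refine tsum_congr fun n1 => ?_
          rw [ENNReal.tsum_prod']
          calc (∑' n2 : ℤ, ∑' n3 : ℤ, F3 (n1, n2, n3))
              = ∑' n2 : ℤ, wK ε (n1 - n2) * (∑' n3 : ℤ, (mu3 n3) ^ (2*p3) * wK ε (n1 - n3)) :=
                tsum_congr fun n2 => inner n1 n2
            _ = Sw * (∑' n3 : ℤ, (mu3 n3) ^ (2*p3) * wK ε (n1 - n3)) := by
                rw [ENNReal.tsum_mul_right, hSw, ← wK_translate (ε := ε) n1]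
      _ = Sw * ∑' n3 : ℤ, (mu3 n3) ^ (2*p3) * (∑' n1 : ℤ, wK ε (n1 - n3)) := by
          rw [ENNReal.tsum_mul_left]
          congr 1
          rw [ENNReal.tsum_comm]
          exact tsum_congr fun n3 => ENNReal.tsum_mul_left
      _ = (∑' n : ℤ, (mu3 n) ^ (2*p3)) * (Sw * Sw) := by
          have : ∀ n3 : ℤ, (mu3 n3) ^ (2*p3) * (∑' n1 : ℤ, wK ε (n1 - n3))
              = (mu3 n3) ^ (2*p3) * Sw := by
            intro n3
            rw [wK_translate' (ε := ε) n3, ← hSw]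
          simp_rw [this]
          rw [ENNReal.tsum_mul_right]
          ring
  -- apply Hölder
  have step7 : (∑' n : ℤ, mu1 n * (K2 n * K3 n))
      ≤ ((A1 * (SwB * SwB)) ^ (1/(2*p1))) * ((A2 * (SwB * SwB)) ^ (1/(2*p2))) *
        ((A3 * (SwB * SwB)) ^ (1/(2*p3))) := by
    rw [hHsingle]
    calc (∑' x : X, mu1 x.1 * mu2 x.2.1 * mu3 x.2.2 * W x)
        = ∑' x : X, (F1 x) ^ (1/(2*p1)) * (F2 x) ^ (1/(2*p2)) * (F3 x) ^ (1/(2*p3)) :=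
          tsum_congr hpoint
      _ ≤ (∑' x : X, F1 x) ^ (1/(2*p1)) * (∑' x : X, F2 x) ^ (1/(2*p2)) *
            (∑' x : X, F3 x) ^ (1/(2*p3)) :=
          tsum_holder3 F1 F2 F3 (by positivity) (by positivity) (by positivity) hρsum
      _ ≤ _ := by
          have hb1 : ∑' x : X, F1 x ≤ A1 * (SwB * SwB) := by
            rw [hFsum1]
            exact mul_le_mul' hmu1sum (mul_le_mul' hSw_le hSw_le)
          have hb2 : ∑' x : X, F2 x ≤ A2 * (SwB * SwB) := by
            rw [hFsum2]
            exact mul_le_mul' hmu2sum (mul_le_mul' hSw_le hSw_le)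
          have hb3 : ∑' x : X, F3 x ≤ A3 * (SwB * SwB) := by
            rw [hFsum3]
            exact mul_le_mul' hmu3sum (mul_le_mul' hSw_le hSw_le)
          exact mul_le_mul' (mul_le_mul' (ENNReal.rpow_le_rpow hb1 (by positivity))
            (ENNReal.rpow_le_rpow hb2 (by positivity))) (ENNReal.rpow_le_rpow hb3 (by positivity))
  -- identify the A-terms
  have hQ_ne_zero : (SwB * SwB) ≠ 0 := mul_ne_zero hSwB_ne_zero hSwB_ne_zero
  have hQ_ne_top : (SwB * SwB) ≠ ∞ := ENNReal.mul_ne_top hSwB_ne_top hSwB_ne_top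
  have hAval : ∀ (f : G → ℝ) (p : ℝ), 0 < p → Summable (fun x => |f x|^p) →
      (∑' x : G, ofReal (|f x| ^ p)) = (ofReal (pnormR f p)) ^ p := by
    intro f p hp hs
    have hnn : ∀ x, 0 ≤ |f x| ^ p := fun x => Real.rpow_nonneg (abs_nonneg _) p
    rw [← ENNReal.ofReal_tsum_of_nonneg hnn hs,
      ENNReal.ofReal_rpow_of_nonneg (pnormR_nonneg f p) hp.le]
    congr 1
    rw [pnormR, ← Real.rpow_mul (tsum_nonneg hnn),
      one_div, inv_mul_cancel₀ hp.ne', Real.rpow_one]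
  have hexp : ∀ p : ℝ, 0 < p → p * (1/(2*p)) = (2:ℝ)⁻¹ := by
    intro p hp; field_simp
  have hprod : ((A1 * (SwB * SwB)) ^ (1/(2*p1))) * ((A2 * (SwB * SwB)) ^ (1/(2*p2))) *
        ((A3 * (SwB * SwB)) ^ (1/(2*p3)))
      = ((ofReal (pnormR f1 p1)) ^ ((2:ℝ)⁻¹) * (ofReal (pnormR f2 p2)) ^ ((2:ℝ)⁻¹) *
          (ofReal (pnormR f3 p3)) ^ ((2:ℝ)⁻¹)) * (SwB * SwB) := by
    have e1 : (A1 * (SwB * SwB)) ^ (1/(2*p1))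
        = (ofReal (pnormR f1 p1)) ^ ((2:ℝ)⁻¹) * ((SwB*SwB) ^ (1/(2*p1))) := by
      rw [ENNReal.mul_rpow_of_nonneg _ _ (by positivity), hA1def, hAval f1 p1 hq1 hs1,
        ← ENNReal.rpow_mul, hexp p1 hq1]
    have e2 : (A2 * (SwB * SwB)) ^ (1/(2*p2))
        = (ofReal (pnormR f2 p2)) ^ ((2:ℝ)⁻¹) * ((SwB*SwB) ^ (1/(2*p2))) := by
      rw [ENNReal.mul_rpow_of_nonneg _ _ (by positivity), hA2def, hAval f2 p2 hq2 hs2,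
        ← ENNReal.rpow_mul, hexp p2 hq2]
    have e3 : (A3 * (SwB * SwB)) ^ (1/(2*p3))
        = (ofReal (pnormR f3 p3)) ^ ((2:ℝ)⁻¹) * ((SwB*SwB) ^ (1/(2*p3))) := by
      rw [ENNReal.mul_rpow_of_nonneg _ _ (by positivity), hA3def, hAval f3 p3 hq3 hs3,
        ← ENNReal.rpow_mul, hexp p3 hq3]
    have eQ : ((SwB*SwB) ^ (1/(2*p1))) * ((SwB*SwB) ^ (1/(2*p2))) * ((SwB*SwB) ^ (1/(2*p3)))
        = SwB * SwB := by
      rw [← ENNReal.rpow_add _ _ hQ_ne_zero hQ_ne_top,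
        ← ENNReal.rpow_add _ _ hQ_ne_zero hQ_ne_top, hρsum, ENNReal.rpow_one]
    calc ((A1 * (SwB * SwB)) ^ (1/(2*p1))) * ((A2 * (SwB * SwB)) ^ (1/(2*p2))) *
        ((A3 * (SwB * SwB)) ^ (1/(2*p3)))
        = ((ofReal (pnormR f1 p1)) ^ ((2:ℝ)⁻¹) * (ofReal (pnormR f2 p2)) ^ ((2:ℝ)⁻¹) *
            (ofReal (pnormR f3 p3)) ^ ((2:ℝ)⁻¹)) *
          (((SwB*SwB) ^ (1/(2*p1))) * ((SwB*SwB) ^ (1/(2*p2))) * ((SwB*SwB) ^ (1/(2*p3)))) := by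
          rw [e1, e2, e3]; ring
      _ = _ := by rw [eQ]
  -- final assembly
  calc ∑' q : G × G, ofReal (f1 q.1) * ofReal (f2 q.2) * ofReal (f3 (q.1 + q.2))
      ≤ ∑' k1 : ℤ, ∑' k2 : ℤ, ∑' k3 : ℤ,
          (2:ℝ≥0∞)^(k1+1) * (2:ℝ≥0∞)^(k2+1) * (2:ℝ≥0∞)^(k3+1) *
            ∑' q : G × G, Ind (levelSet f1 k1) q.1 * Ind (levelSet f2 k2) q.2 *
              Ind (levelSet f3 k3) (q.1 + q.2) := step123
    _ ≤ ∑' k1 : ℤ, ∑' k2 : ℤ, ∑' k3 : ℤ,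
          32 * (lam1 k1 * (lam2 k2 * wK ε (c1 k1 - c2 k2)) * (lam3 k3 * wK ε (c1 k1 - c3 k3))) := by
        refine Summable.tsum_le_tsum (fun k1 => ?_) ENNReal.summable ENNReal.summable
        refine Summable.tsum_le_tsum (fun k2 => ?_) ENNReal.summable ENNReal.summable
        refine Summable.tsum_le_tsum (fun k3 => ?_) ENNReal.summable ENNReal.summable
        exact step4 k1 k2 k3
    _ = 32 * ∑' n : ℤ, LamS f1 p1 n * (G2 n * G3 n) := step5
    _ ≤ 32 * (64 * (Lo1 ^ ((2:ℝ)⁻¹) * Lo2 ^ ((2:ℝ)⁻¹) * Lo3 ^ ((2:ℝ)⁻¹)) *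
          ∑' n : ℤ, mu1 n * (K2 n * K3 n)) := mul_le_mul_right step6 32
    _ ≤ 32 * (64 * (Lo1 ^ ((2:ℝ)⁻¹) * Lo2 ^ ((2:ℝ)⁻¹) * Lo3 ^ ((2:ℝ)⁻¹)) *
          (((A1 * (SwB * SwB)) ^ (1/(2*p1))) * ((A2 * (SwB * SwB)) ^ (1/(2*p2))) *
            ((A3 * (SwB * SwB)) ^ (1/(2*p3))))) :=
        mul_le_mul_right (mul_le_mul_right step7 _) 32
    _ = _ := by
        rw [hprod]
        ring

end YLaux

open YLaux in
theorem young_lorentz_bound (p1 p2 p3 : ℝ)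
    (hp1 : 1 < p1) (hp2 : 1 < p2) (hp3 : 1 < p3)
    (hsum : 1 / p1 + 1 / p2 + 1 / p3 = 2) :
    ∃ η ∈ Set.Ioo (0 : ℝ) 1, ∃ C : ℝ, 0 < C ∧
      ∀ (G : Type) [AddGroup G], ∀ f1 f2 f3 : G → ℝ,
        (∀ x, 0 ≤ f1 x) → (∀ x, 0 ≤ f2 x) → (∀ x, 0 ≤ f3 x) →
        Summable (fun x => |f1 x| ^ p1) →
        Summable (fun x => |f2 x| ^ p2) →
        Summable (fun x => |f3 x| ^ p3) →
        (∑' q : G × G, f1 q.1 * f2 q.2 * f3 (q.1 + q.2)) ≤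
          C * (pnormR f1 p1 ^ (1 - η) * pnormR f2 p2 ^ (1 - η) * pnormR f3 p3 ^ (1 - η)) *
            (lorentzSup f1 p1 ^ η * lorentzSup f2 p2 ^ η * lorentzSup f3 p3 ^ η) := by
  have hu1 : 0 < 1 - 1/p1 := by
    have : 1/p1 < 1 := by rw [div_lt_one (by linarith)]; linarith
    linarith
  have hu2 : 0 < 1 - 1/p2 := by
    have : 1/p2 < 1 := by rw [div_lt_one (by linarith)]; linarith
    linarith
  have hu3 : 0 < 1 - 1/p3 := by
    have : 1/p3 < 1 := by rw [div_lt_one (by linarith)]; linarith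
    linarith
  set ε := min (min ((1 - 1/p1)/2) ((1 - 1/p2)/2)) ((1 - 1/p3)/2) with hεdef
  have hε : 0 < ε := lt_min (lt_min (by linarith) (by linarith)) (by linarith)
  have hε1 : 2*ε ≤ 1 - 1/p1 := by
    have : ε ≤ (1 - 1/p1)/2 := le_trans (min_le_left _ _) (min_le_left _ _)
    linarith
  have hε2 : 2*ε ≤ 1 - 1/p2 := by
    have : ε ≤ (1 - 1/p2)/2 := le_trans (min_le_left _ _) (min_le_right _ _)
    linarith
  have hε3 : 2*ε ≤ 1 - 1/p3 := by
    have : ε ≤ (1 - 1/p3)/2 := min_le_right _ _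
    linarith
  set Kbig : ℝ≥0∞ := 2048 * (2 * (1 - ofReal ((2:ℝ)^(-ε)))⁻¹)^(2:ℕ) with hKdef
  have hKtop : Kbig ≠ ∞ := by
    rw [hKdef]
    refine ENNReal.mul_ne_top (by norm_num) (ENNReal.pow_ne_top ?_)
    refine ENNReal.mul_ne_top (by norm_num) (ENNReal.inv_ne_top.mpr ?_)
    have hr1 : ofReal ((2:ℝ) ^ (-ε)) < 1 :=
      ENNReal.ofReal_lt_one.mpr (Real.rpow_lt_one_of_one_lt_of_neg (by norm_num) (by linarith))
    exact ne_of_gt (tsub_pos_iff_lt.mpr hr1)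
  refine ⟨1/2, ⟨by norm_num, by norm_num⟩, Kbig.toReal + 1,
    by positivity, ?_⟩
  intro G _ f1 f2 f3 hf1 hf2 hf3 hs1 hs2 hs3
  have hN1 := pnormR_nonneg f1 p1
  have hN2 := pnormR_nonneg f2 p2
  have hN3 := pnormR_nonneg f3 p3
  have hL1 := lorentzSup_nonneg f1 p1
  have hL2 := lorentzSup_nonneg f2 p2
  have hL3 := lorentzSup_nonneg f3 p3
  rw [show (1:ℝ) - 1/2 = (2:ℝ)⁻¹ by norm_num, show ((1:ℝ)/2 : ℝ) = (2:ℝ)⁻¹ by norm_num]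
  have hC0 : (0:ℝ) < Kbig.toReal + 1 := by positivity
  have hNprod : (0:ℝ) ≤ pnormR f1 p1 ^ ((2:ℝ)⁻¹) * pnormR f2 p2 ^ ((2:ℝ)⁻¹) *
      pnormR f3 p3 ^ ((2:ℝ)⁻¹) :=
    mul_nonneg (mul_nonneg (Real.rpow_nonneg hN1 _) (Real.rpow_nonneg hN2 _))
      (Real.rpow_nonneg hN3 _)
  have hLprod : (0:ℝ) ≤ lorentzSup f1 p1 ^ ((2:ℝ)⁻¹) * lorentzSup f2 p2 ^ ((2:ℝ)⁻¹) *
      lorentzSup f3 p3 ^ ((2:ℝ)⁻¹) :=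
    mul_nonneg (mul_nonneg (Real.rpow_nonneg hL1 _) (Real.rpow_nonneg hL2 _))
      (Real.rpow_nonneg hL3 _)
  have hRHS0 : (0:ℝ) ≤ (Kbig.toReal + 1) *
      (pnormR f1 p1 ^ ((2:ℝ)⁻¹) * pnormR f2 p2 ^ ((2:ℝ)⁻¹) * pnormR f3 p3 ^ ((2:ℝ)⁻¹)) *
      (lorentzSup f1 p1 ^ ((2:ℝ)⁻¹) * lorentzSup f2 p2 ^ ((2:ℝ)⁻¹) *
        lorentzSup f3 p3 ^ ((2:ℝ)⁻¹)) :=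
    mul_nonneg (mul_nonneg hC0.le hNprod) hLprod
  by_cases hsummable : Summable (fun q : G × G => f1 q.1 * f2 q.2 * f3 (q.1 + q.2))
  swap
  · rw [tsum_eq_zero_of_not_summable hsummable]
    exact hRHS0
  · apply (ENNReal.ofReal_le_ofReal_iff hRHS0).mp
    have hterm_nonneg : ∀ q : G × G, 0 ≤ f1 q.1 * f2 q.2 * f3 (q.1+q.2) :=
      fun q => mul_nonneg (mul_nonneg (hf1 _) (hf2 _)) (hf3 _)
    rw [ENNReal.ofReal_tsum_of_nonneg hterm_nonneg hsummable]
    have hptw : ∀ q : G×G, ofReal (f1 q.1 * f2 q.2 * f3 (q.1+q.2))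
        = ofReal (f1 q.1) * ofReal (f2 q.2) * ofReal (f3 (q.1+q.2)) := fun q => by
      rw [ENNReal.ofReal_mul (mul_nonneg (hf1 _) (hf2 _)), ENNReal.ofReal_mul (hf1 _)]
    -- decompose the ofReal of the RHS
    have hRHSsplit : ofReal ((Kbig.toReal + 1) *
        (pnormR f1 p1 ^ ((2:ℝ)⁻¹) * pnormR f2 p2 ^ ((2:ℝ)⁻¹) * pnormR f3 p3 ^ ((2:ℝ)⁻¹)) *
        (lorentzSup f1 p1 ^ ((2:ℝ)⁻¹) * lorentzSup f2 p2 ^ ((2:ℝ)⁻¹) *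
          lorentzSup f3 p3 ^ ((2:ℝ)⁻¹)))
        = ofReal (Kbig.toReal + 1) *
          ((ofReal (pnormR f1 p1)) ^ ((2:ℝ)⁻¹) * (ofReal (pnormR f2 p2)) ^ ((2:ℝ)⁻¹) *
            (ofReal (pnormR f3 p3)) ^ ((2:ℝ)⁻¹)) *
          ((ofReal (lorentzSup f1 p1)) ^ ((2:ℝ)⁻¹) * (ofReal (lorentzSup f2 p2)) ^ ((2:ℝ)⁻¹) *
            (ofReal (lorentzSup f3 p3)) ^ ((2:ℝ)⁻¹)) := by
      rw [ENNReal.ofReal_mul (mul_nonneg hC0.le hNprod), ENNReal.ofReal_mul hC0.le,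
        ENNReal.ofReal_mul (mul_nonneg (Real.rpow_nonneg hN1 _) (Real.rpow_nonneg hN2 _)),
        ENNReal.ofReal_mul (Real.rpow_nonneg hN1 _),
        ENNReal.ofReal_mul (mul_nonneg (Real.rpow_nonneg hL1 _) (Real.rpow_nonneg hL2 _)),
        ENNReal.ofReal_mul (Real.rpow_nonneg hL1 _),
        ENNReal.ofReal_rpow_of_nonneg hN1 (by norm_num),
        ENNReal.ofReal_rpow_of_nonneg hN2 (by norm_num),
        ENNReal.ofReal_rpow_of_nonneg hN3 (by norm_num),
        ENNReal.ofReal_rpow_of_nonneg hL1 (by norm_num),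
        ENNReal.ofReal_rpow_of_nonneg hL2 (by norm_num),
        ENNReal.ofReal_rpow_of_nonneg hL3 (by norm_num)]
    rw [hRHSsplit]
    have hKC : Kbig ≤ ofReal (Kbig.toReal + 1) := by
      conv_lhs => rw [← ENNReal.ofReal_toReal hKtop]
      exact ENNReal.ofReal_le_ofReal (by linarith)
    calc (∑' q : G × G, ofReal (f1 q.1 * f2 q.2 * f3 (q.1 + q.2)))
        = ∑' q : G × G, ofReal (f1 q.1) * ofReal (f2 q.2) * ofReal (f3 (q.1 + q.2)) :=
          tsum_congr hptw
      _ ≤ Kbig *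
          ((ofReal (pnormR f1 p1)) ^ ((2:ℝ)⁻¹) * (ofReal (pnormR f2 p2)) ^ ((2:ℝ)⁻¹) *
            (ofReal (pnormR f3 p3)) ^ ((2:ℝ)⁻¹)) *
          ((ofReal (lorentzSup f1 p1)) ^ ((2:ℝ)⁻¹) * (ofReal (lorentzSup f2 p2)) ^ ((2:ℝ)⁻¹) *
            (ofReal (lorentzSup f3 p3)) ^ ((2:ℝ)⁻¹)) :=
          core hp1 hp2 hp3 hsum hε hε1 hε2 hε3 f1 f2 f3 hf1 hf2 hf3 hs1 hs2 hs3
      _ ≤ _ := mul_le_mul_left (mul_le_mul_left hKC _) _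
end

section
/- Let p1, p2, p3 ∈ (1,∞) satisfy 1/p1 + 1/p2 + 1/p3 = 2, and let G be any discrete group. Set q = p3/(p3−1), r1 = (q−p1)p3/q, r2 = (q−p2)p3/q, s1 = p1/r1, s2 = p2/r2. Then s1, s2 ∈ (1,∞) and 1/s1 + 1/s2 = 1, and there exists a constant C < ∞, depending only on (p1,p2,p3), such that for every δ ∈ [0,1]: if nonzero functions f_j ∈ ℓ^{p_j}(G) satisfy |∑_{x,y∈G} f1(x)f2(y)f3(x+y)| ≥ (1−δ)‖f1‖_{p1}‖f2‖_{p2}‖f3‖_{p3}, then the functions g1 = |f1|^{r1} ∈ ℓ^{s1}(G), g2 = |f2|^{r2} ∈ ℓ^{s2}(G), g3 = |f3|^{p3} ∈ ℓ^1(G) satisfy ∑_{x,y∈G} g1(x)g2(y)g3(x+y) ≥ (1−Cδ)‖g1‖_{s1}‖g2‖_{s2}‖g3‖_1. -/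
open MeasureTheory ENNReal

section Helpers

/-- Hölder's inequality for `tsum`s of `ℝ≥0∞`-valued functions. -/
lemma holder_tsum {ι : Type*} (f g : ι → ℝ≥0∞) {p q : ℝ} (hpq : p.HolderConjugate q) :
    ∑' i, (f i) ^ (1/p) * (g i) ^ (1/q) ≤ (∑' i, f i) ^ (1/p) * (∑' i, g i) ^ (1/q) := by
  letI : MeasurableSpace ι := ⊤
  haveI : MeasurableSingletonClass ι := ⟨fun _ => trivial⟩
  have h := ENNReal.lintegral_mul_le_Lp_mul_Lq (Measure.count : Measure ι) hpq
    (f := fun i => (f i) ^ (1/p)) (g := fun i => (g i) ^ (1/q))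
    measurable_from_top.aemeasurable measurable_from_top.aemeasurable
  simp only [Pi.mul_apply, lintegral_count] at h
  have hf : ∀ i, ((f i) ^ p⁻¹) ^ p = f i := fun i => by
    rw [← ENNReal.rpow_mul, inv_mul_cancel₀ hpq.ne_zero, ENNReal.rpow_one]
  have hg : ∀ i, ((g i) ^ q⁻¹) ^ q = g i := fun i => by
    rw [← ENNReal.rpow_mul, inv_mul_cancel₀ hpq.symm.ne_zero, ENNReal.rpow_one]
  simpa only [one_div, hf, hg] using h

lemma fact1 {G : Type*} [AddGroup G] (h k : G → ℝ≥0∞) :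
    ∑' z : G × G, h z.1 * k (z.1 + z.2) = (∑' x, h x) * (∑' x, k x) := by
  rw [ENNReal.tsum_prod']
  have : ∀ x : G, ∑' y, k (x + y) = ∑' y, k y := fun x => (Equiv.addLeft x).tsum_eq k
  simp only [ENNReal.tsum_mul_left, this, ENNReal.tsum_mul_right]

lemma fact2 {G : Type*} [AddGroup G] (h k : G → ℝ≥0∞) :
    ∑' z : G × G, h z.2 * k (z.1 + z.2) = (∑' x, h x) * (∑' x, k x) := by
  rw [ENNReal.tsum_prod', ENNReal.tsum_comm]
  have : ∀ y : G, ∑' x, k (x + y) = ∑' x, k x := fun y => (Equiv.addRight y).tsum_eq k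
  simp only [ENNReal.tsum_mul_left, this, ENNReal.tsum_mul_right]

lemma fact0 {G : Type*} (h k : G → ℝ≥0∞) :
    ∑' z : G × G, h z.1 * k z.2 = (∑' x, h x) * (∑' x, k x) := by
  rw [ENNReal.tsum_prod']
  simp only [ENNReal.tsum_mul_left, ENNReal.tsum_mul_right]

end Helpers

/-- The ℓ^p norm of a complex function on a discrete group. -/
noncomputable def pnorm {G : Type*} (f : G → ℂ) (p : ℝ) : ℝ :=
  (∑' x, ‖f x‖ ^ p) ^ (1 / p)

set_option maxHeartbeats 2000000 in
theorem young_reduction_to_L1 (p1 p2 p3 q r1 r2 s1 s2 : ℝ)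
    (hp1 : 1 < p1) (hp2 : 1 < p2) (hp3 : 1 < p3)
    (hsum : 1 / p1 + 1 / p2 + 1 / p3 = 2)
    (hq : q = p3 / (p3 - 1))
    (hr1 : r1 = (q - p1) * p3 / q) (hr2 : r2 = (q - p2) * p3 / q)
    (hs1 : s1 = p1 / r1) (hs2 : s2 = p2 / r2) :
    (1 < s1) ∧ (1 < s2) ∧ (1 / s1 + 1 / s2 = 1) ∧
    ∃ C : ℝ, 0 < C ∧
      ∀ (G : Type) [AddGroup G], ∀ δ ∈ Set.Icc (0 : ℝ) 1, ∀ f1 f2 f3 : G → ℂ,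
        f1 ≠ 0 → f2 ≠ 0 → f3 ≠ 0 →
        Summable (fun x => ‖f1 x‖ ^ p1) →
        Summable (fun x => ‖f2 x‖ ^ p2) →
        Summable (fun x => ‖f3 x‖ ^ p3) →
        ‖∑' z : G × G, f1 z.1 * f2 z.2 * f3 (z.1 + z.2)‖ ≥
          (1 - δ) * (pnorm f1 p1 * pnorm f2 p2 * pnorm f3 p3) →
        (∑' z : G × G, ‖f1 z.1‖ ^ r1 * ‖f2 z.2‖ ^ r2 * ‖f3 (z.1 + z.2)‖ ^ p3) ≥
          (1 - C * δ) *
            (pnormR (fun x => ‖f1 x‖ ^ r1) s1 * pnormR (fun x => ‖f2 x‖ ^ r2) s2 *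
              pnormR (fun x => ‖f3 x‖ ^ p3) 1) := by
  -- ## Algebraic preliminaries
  have hp1p : (0:ℝ) < p1 := by linarith
  have hp2p : (0:ℝ) < p2 := by linarith
  have hp3p : (0:ℝ) < p3 := by linarith
  have hp31 : (0:ℝ) < p3 - 1 := by linarith
  have hqp : 0 < q := by rw [hq]; positivity
  have hq_inv : 1/q + 1/p3 = 1 := by rw [hq]; field_simp; ring
  have hinvq : 1/q < 1 := by
    have h0 : 0 < 1/p3 := by positivity
    linarith
  have hq1 : 1 < q := by
    have hm : (1/q) * q = 1 := by field_simp
    nlinarith [mul_lt_mul_of_pos_right hinvq hqp]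
  have hqp3 : q * p3 = q + p3 := by
    have h := hq_inv
    field_simp at h
    linarith
  have hp1q : p1 < q := by
    have h1 : 1/q < 1/p1 := by
      have h2 : 1/p2 < 1 := by rw [div_lt_one hp2p]; exact hp2
      linarith
    have hm1 : (1/p1) * p1 = 1 := by field_simp
    have hm2 : (1/q) * q = 1 := by field_simp
    nlinarith [mul_lt_mul_of_pos_right h1 hp1p, mul_lt_mul_of_pos_right h1 hqp]
  have hp2q : p2 < q := by
    have h1 : 1/q < 1/p2 := by
      have h2 : 1/p1 < 1 := by rw [div_lt_one hp1p]; exact hp1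
      linarith
    have hm1 : (1/p2) * p2 = 1 := by field_simp
    have hm2 : (1/q) * q = 1 := by field_simp
    nlinarith [mul_lt_mul_of_pos_right h1 hp2p, mul_lt_mul_of_pos_right h1 hqp]
  have hr1p : 0 < r1 := by
    rw [hr1]
    have : 0 < q - p1 := by linarith
    positivity
  have hr2p : 0 < r2 := by
    rw [hr2]
    have : 0 < q - p2 := by linarith
    positivity
  have hs1p : 0 < s1 := by rw [hs1]; positivity
  have hs2p : 0 < s2 := by rw [hs2]; positivity
  have hs1gt : 1 < s1 := by
    rw [hs1, lt_div_iff₀ hr1p, one_mul, hr1, div_lt_iff₀ hqp]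
    have h := mul_lt_mul_of_pos_right hp1 (show (0:ℝ) < q + p3 by linarith)
    nlinarith [hqp3, h]
  have hs2gt : 1 < s2 := by
    rw [hs2, lt_div_iff₀ hr2p, one_mul, hr2, div_lt_iff₀ hqp]
    have h := mul_lt_mul_of_pos_right hp2 (show (0:ℝ) < q + p3 by linarith)
    nlinarith [hqp3, h]
  have hssum : 1/s1 + 1/s2 = 1 := by
    have e1 : 1/s1 = p3/p1 - p3/q := by
      rw [hs1, one_div_div, hr1]; field_simp; try ring
    have e2 : 1/s2 = p3/p2 - p3/q := by
      rw [hs2, one_div_div, hr2]; field_simp; try ring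
    have e3 : p3/q = p3 - 1 := by rw [hq]; field_simp; try ring
    have hx : 1/p1 + 1/p2 = 2 - 1/p3 := by linarith
    have hp3inv : p3 * (1/p3) = 1 := by field_simp
    have e4 : 1/s1 + 1/s2 = p3*(1/p1 + 1/p2) - 2*(p3-1) := by
      rw [e1, e2, e3]; ring
    rw [e4, hx]; nlinarith [hp3inv]
  refine ⟨hs1gt, hs2gt, hssum, p3, hp3p, ?_⟩
  -- exponent bookkeeping
  have hs1ne : s1 ≠ 0 := ne_of_gt hs1p
  have hs2ne : s2 ≠ 0 := ne_of_gt hs2p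
  have hr1ne : r1 ≠ 0 := ne_of_gt hr1p
  have hr2ne : r2 ≠ 0 := ne_of_gt hr2p
  have hp3ne : p3 ≠ 0 := ne_of_gt hp3p
  have hqne : q ≠ 0 := ne_of_gt hqp
  have er1 : r1 * s1 = p1 := by rw [hs1]; field_simp
  have er2 : r2 * s2 = p2 := by rw [hs2]; field_simp
  have ep1 : p1 * (1/s1) = r1 := by
    rw [hs1]; field_simp
  have ep2 : p2 * (1/s2) = r2 := by
    rw [hs2]; field_simp
  have ep3 : p3 * (1/s1) + p3 * (1/s2) = p3 := by
    have : p3 * (1/s1 + 1/s2) = p3 * 1 := by rw [hssum]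
    nlinarith [this]
  have eq1 : p1 * (1/q) + r1 * (1/p3) = 1 := by
    rw [hr1]; field_simp; ring
  have eq2 : p2 * (1/q) + r2 * (1/p3) = 1 := by
    rw [hr2]; field_simp; ring
  have ed1 : 1/p1 = 1/q + (1/s1) * (1/p3) := by
    have h1 : (1/s1) * (1/p3) = r1 * (1/p3) * (1/p1) := by
      rw [hs1, one_div_div]; ring
    have h2 : (1/q) = p1 * (1/q) * (1/p1) := by field_simp
    rw [h1, h2, ← add_mul, eq1, one_mul]
  have ed2 : 1/p2 = 1/q + (1/s2) * (1/p3) := by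
    have h1 : (1/s2) * (1/p3) = r2 * (1/p3) * (1/p2) := by
      rw [hs2, one_div_div]; ring
    have h2 : (1/q) = p2 * (1/q) * (1/p2) := by field_simp
    rw [h1, h2, ← add_mul, eq2, one_mul]
  have hconj_s : s1.HolderConjugate s2 := Real.holderConjugate_iff.mpr ⟨hs1gt, by rw [← one_div, ← one_div]; exact hssum⟩
  have hconj_q : q.HolderConjugate p3 := Real.holderConjugate_iff.mpr ⟨hq1, by rw [← one_div, ← one_div]; exact hq_inv⟩
  -- ## Main argument
  intro G _ δ hδ f1 f2 f3 hf1 hf2 hf3 hsum1 hsum2 hsum3 hT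
  obtain ⟨hδ0, hδ1⟩ := hδ
  -- real sums
  set A1r : ℝ := ∑' x, ‖f1 x‖ ^ p1 with hA1rdef
  set A2r : ℝ := ∑' x, ‖f2 x‖ ^ p2 with hA2rdef
  set A3r : ℝ := ∑' x, ‖f3 x‖ ^ p3 with hA3rdef
  obtain ⟨x1, hx1⟩ := Function.ne_iff.mp hf1
  obtain ⟨x2, hx2⟩ := Function.ne_iff.mp hf2
  obtain ⟨x3, hx3⟩ := Function.ne_iff.mp hf3
  have hx1' : (0:ℝ) < ‖f1 x1‖ := by simpa [norm_pos_iff] using hx1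
  have hx2' : (0:ℝ) < ‖f2 x2‖ := by simpa [norm_pos_iff] using hx2
  have hx3' : (0:ℝ) < ‖f3 x3‖ := by simpa [norm_pos_iff] using hx3
  have hA1rp : 0 < A1r := Summable.tsum_pos hsum1 (fun x => by positivity) x1 (by positivity)
  have hA2rp : 0 < A2r := Summable.tsum_pos hsum2 (fun x => by positivity) x2 (by positivity)
  have hA3rp : 0 < A3r := Summable.tsum_pos hsum3 (fun x => by positivity) x3 (by positivity)
  -- ENNReal versions
  set E1 : G → ℝ≥0∞ := fun x => ENNReal.ofReal (‖f1 x‖ ^ p1) with hE1def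
  set E2 : G → ℝ≥0∞ := fun x => ENNReal.ofReal (‖f2 x‖ ^ p2) with hE2def
  set E3 : G → ℝ≥0∞ := fun x => ENNReal.ofReal (‖f3 x‖ ^ p3) with hE3def
  have hE1sum : ∑' x, E1 x = ENNReal.ofReal A1r :=
    (ENNReal.ofReal_tsum_of_nonneg (fun x => by positivity) hsum1).symm
  have hE2sum : ∑' x, E2 x = ENNReal.ofReal A2r :=
    (ENNReal.ofReal_tsum_of_nonneg (fun x => by positivity) hsum2).symm
  have hE3sum : ∑' x, E3 x = ENNReal.ofReal A3r :=
    (ENNReal.ofReal_tsum_of_nonneg (fun x => by positivity) hsum3).symm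
  -- pointwise identities (real)
  have ptII : ∀ a b c : ℝ, 0 ≤ a → 0 ≤ b → 0 ≤ c →
      a^r1 * b^r2 * c^p3 = (a^p1 * c^p3)^(1/s1) * (b^p2 * c^p3)^(1/s2) := by
    intro a b c ha hb hc
    rw [Real.mul_rpow (by positivity) (by positivity),
        Real.mul_rpow (by positivity) (by positivity),
        ← Real.rpow_mul ha, ← Real.rpow_mul hc, ← Real.rpow_mul hb, ← Real.rpow_mul hc,
        ep1, ep2]
    have hcc : c ^ (p3 * (1/s1)) * c ^ (p3 * (1/s2)) = c ^ p3 := by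
      rw [← Real.rpow_add' hc (by rw [ep3]; exact hp3ne), ep3]
    calc a ^ r1 * b ^ r2 * c ^ p3
        = a ^ r1 * b ^ r2 * (c ^ (p3 * (1/s1)) * c ^ (p3 * (1/s2))) := by rw [hcc]
      _ = a ^ r1 * c ^ (p3 * (1/s1)) * (b ^ r2 * c ^ (p3 * (1/s2))) := by ring
  have ptI : ∀ a b c : ℝ, 0 ≤ a → 0 ≤ b → 0 ≤ c →
      a * b * c = (a^p1 * b^p2)^(1/q) * (a^r1 * b^r2 * c^p3)^(1/p3) := by
    intro a b c ha hb hc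
    rw [Real.mul_rpow (by positivity) (by positivity),
        Real.mul_rpow (by positivity) (by positivity),
        Real.mul_rpow (by positivity) (by positivity),
        ← Real.rpow_mul ha, ← Real.rpow_mul hb, ← Real.rpow_mul ha, ← Real.rpow_mul hb,
        ← Real.rpow_mul hc]
    have haa : a ^ (p1 * (1/q)) * a ^ (r1 * (1/p3)) = a := by
      rw [← Real.rpow_add' ha (by rw [eq1]; norm_num), eq1, Real.rpow_one]
    have hbb : b ^ (p2 * (1/q)) * b ^ (r2 * (1/p3)) = b := by
      rw [← Real.rpow_add' hb (by rw [eq2]; norm_num), eq2, Real.rpow_one]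
    have hcc : c ^ (p3 * (1/p3)) = c := by
      rw [mul_one_div, div_self hp3ne, Real.rpow_one]
    calc a * b * c = (a ^ (p1 * (1/q)) * a ^ (r1 * (1/p3))) *
          (b ^ (p2 * (1/q)) * b ^ (r2 * (1/p3))) * c ^ (p3 * (1/p3)) := by
            rw [haa, hbb, hcc]
      _ = a ^ (p1 * (1/q)) * b ^ (p2 * (1/q)) *
          (a ^ (r1 * (1/p3)) * (b ^ (r2 * (1/p3)) * c ^ (p3 * (1/p3)))) := by ring
      _ = a ^ (p1 * (1/q)) * b ^ (p2 * (1/q)) *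
          (a ^ (r1 * (1/p3)) * b ^ (r2 * (1/p3)) * c ^ (p3 * (1/p3))) := by
            rw [← mul_assoc (a ^ (r1 * (1/p3))) (b ^ (r2 * (1/p3))) (c ^ (p3 * (1/p3)))]
  -- the middle ENNReal sum
  set Pe : G × G → ℝ≥0∞ :=
    fun z => ENNReal.ofReal (‖f1 z.1‖ ^ r1 * ‖f2 z.2‖ ^ r2 * ‖f3 (z.1 + z.2)‖ ^ p3) with hPedef
  set Se : ℝ≥0∞ := ∑' z, Pe z with hSedef
  set A1e : ℝ≥0∞ := ENNReal.ofReal A1r with hA1edef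
  set A2e : ℝ≥0∞ := ENNReal.ofReal A2r with hA2edef
  set A3e : ℝ≥0∞ := ENNReal.ofReal A3r with hA3edef
  have hA3e0 : A3e ≠ 0 := by
    simp only [hA3edef, ne_eq, ENNReal.ofReal_eq_zero, not_le]; exact hA3rp
  set Ne' : ℝ≥0∞ := A1e ^ (1/s1) * A2e ^ (1/s2) * A3e with hNedef
  -- Step (b) : Se ≤ Ne'
  have hSeNe : Se ≤ Ne' := by
    have hpt : ∀ z : G × G, Pe z =
        (E1 z.1 * E3 (z.1 + z.2)) ^ (1/s1) * (E2 z.2 * E3 (z.1 + z.2)) ^ (1/s2) := by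
      intro z
      rw [hPedef, hE1def, hE2def, hE3def]
      simp only
      rw [← ENNReal.ofReal_mul (by positivity), ← ENNReal.ofReal_mul (by positivity),
          ENNReal.ofReal_rpow_of_nonneg (by positivity) (by positivity),
          ENNReal.ofReal_rpow_of_nonneg (by positivity) (by positivity),
          ← ENNReal.ofReal_mul (by positivity)]
      congr 1
      exact ptII _ _ _ (norm_nonneg _) (norm_nonneg _) (norm_nonneg _)
    calc Se = ∑' z : G × G, (E1 z.1 * E3 (z.1 + z.2)) ^ (1/s1) *
          (E2 z.2 * E3 (z.1 + z.2)) ^ (1/s2) := by rw [hSedef]; exact tsum_congr hpt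
      _ ≤ (∑' z : G × G, E1 z.1 * E3 (z.1 + z.2)) ^ (1/s1) *
          (∑' z : G × G, E2 z.2 * E3 (z.1 + z.2)) ^ (1/s2) :=
            holder_tsum _ _ hconj_s
      _ = (A1e * A3e) ^ (1/s1) * (A2e * A3e) ^ (1/s2) := by
            rw [fact1, fact2, hE1sum, hE2sum, hE3sum]
      _ = Ne' := by
            rw [ENNReal.mul_rpow_of_nonneg _ _ (by positivity),
                ENNReal.mul_rpow_of_nonneg _ _ (by positivity), hNedef]
            have h3 : A3e ^ (1/s1) * A3e ^ (1/s2) = A3e := by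
              rw [← ENNReal.rpow_add _ _ hA3e0 ENNReal.ofReal_ne_top, hssum,
                ENNReal.rpow_one]
            calc A1e ^ (1/s1) * A3e ^ (1/s1) * (A2e ^ (1/s2) * A3e ^ (1/s2))
                = A1e ^ (1/s1) * A2e ^ (1/s2) * (A3e ^ (1/s1) * A3e ^ (1/s2)) := by ring
              _ = A1e ^ (1/s1) * A2e ^ (1/s2) * A3e := by rw [h3]
  have hNetop : Ne' ≠ ⊤ := by
    rw [hNedef]
    exact ENNReal.mul_ne_top
      (ENNReal.mul_ne_top (ENNReal.rpow_ne_top_of_nonneg (by positivity) ENNReal.ofReal_ne_top)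
        (ENNReal.rpow_ne_top_of_nonneg (by positivity) ENNReal.ofReal_ne_top))
      ENNReal.ofReal_ne_top
  have hSetop : Se ≠ ⊤ := ne_top_of_le_ne_top hNetop hSeNe
  -- Step (c) : Te ≤ (A1e*A2e)^(1/q) * Se^(1/p3)
  set Te : ℝ≥0∞ := ∑' z : G × G, ENNReal.ofReal (‖f1 z.1‖ * ‖f2 z.2‖ * ‖f3 (z.1 + z.2)‖)
    with hTedef
  have hTeineq : Te ≤ (A1e * A2e) ^ (1/q) * Se ^ (1/p3) := by
    have hpt : ∀ z : G × G, ENNReal.ofReal (‖f1 z.1‖ * ‖f2 z.2‖ * ‖f3 (z.1 + z.2)‖) =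
        (E1 z.1 * E2 z.2) ^ (1/q) * (Pe z) ^ (1/p3) := by
      intro z
      rw [hPedef, hE1def, hE2def]
      simp only
      rw [← ENNReal.ofReal_mul (by positivity),
          ENNReal.ofReal_rpow_of_nonneg (by positivity) (by positivity),
          ENNReal.ofReal_rpow_of_nonneg (by positivity) (by positivity),
          ← ENNReal.ofReal_mul (by positivity)]
      congr 1
      exact ptI _ _ _ (norm_nonneg _) (norm_nonneg _) (norm_nonneg _)
    calc Te = ∑' z : G × G, (E1 z.1 * E2 z.2) ^ (1/q) * (Pe z) ^ (1/p3) := by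
          rw [hTedef]; exact tsum_congr hpt
      _ ≤ (∑' z : G × G, E1 z.1 * E2 z.2) ^ (1/q) * (∑' z, Pe z) ^ (1/p3) :=
          holder_tsum _ _ hconj_q
      _ = (A1e * A2e) ^ (1/q) * Se ^ (1/p3) := by rw [fact0, hE1sum, hE2sum, hSedef]
  have hTetop : Te ≠ ⊤ := by
    refine ne_top_of_le_ne_top ?_ hTeineq
    exact ENNReal.mul_ne_top
      (ENNReal.rpow_ne_top_of_nonneg (by positivity)
        (ENNReal.mul_ne_top ENNReal.ofReal_ne_top ENNReal.ofReal_ne_top))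
      (ENNReal.rpow_ne_top_of_nonneg (by positivity) hSetop)
  -- identify real sums with toReal of ENNReal sums
  set Sr : ℝ := Se.toReal with hSrdef
  have hPetop : ∀ z : G × G, Pe z ≠ ⊤ := fun z => by
    simp only [hPedef]; exact ENNReal.ofReal_ne_top
  have hSr_eq : (∑' z : G × G, ‖f1 z.1‖ ^ r1 * ‖f2 z.2‖ ^ r2 * ‖f3 (z.1 + z.2)‖ ^ p3) = Sr := by
    rw [hSrdef, hSedef, ENNReal.tsum_toReal_eq hPetop]
    refine tsum_congr fun z => ?_
    simp only [hPedef]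
    rw [ENNReal.toReal_ofReal (by positivity)]
  have hSrnn : 0 ≤ Sr := ENNReal.toReal_nonneg
  -- Step (f) : ‖T‖ ≤ Te.toReal
  have hTnorm : ‖∑' z : G × G, f1 z.1 * f2 z.2 * f3 (z.1 + z.2)‖ ≤ Te.toReal := by
    have hs : Summable (fun z : G × G => ‖f1 z.1‖ * ‖f2 z.2‖ * ‖f3 (z.1 + z.2)‖) := by
      have h0 := ENNReal.summable_toReal hTetop
      exact h0.congr fun z => by rw [ENNReal.toReal_ofReal (by positivity)]
    have hs' : Summable (fun z : G × G => ‖f1 z.1 * f2 z.2 * f3 (z.1 + z.2)‖) := by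
      simpa only [norm_mul] using hs
    have h1 : ‖∑' z : G × G, f1 z.1 * f2 z.2 * f3 (z.1 + z.2)‖ ≤
        ∑' z : G × G, ‖f1 z.1 * f2 z.2 * f3 (z.1 + z.2)‖ := norm_tsum_le_tsum_norm hs'
    have h2 : (∑' z : G × G, ‖f1 z.1 * f2 z.2 * f3 (z.1 + z.2)‖) = Te.toReal := by
      rw [hTedef, ENNReal.tsum_toReal_eq (fun z => ENNReal.ofReal_ne_top)]
      exact tsum_congr fun z => by
        rw [ENNReal.toReal_ofReal (by positivity), norm_mul, norm_mul]
    linarith [h1, h2.le, h2.ge]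
  -- combine with the hypothesis
  have hTe_toReal : Te.toReal ≤ (A1r * A2r) ^ (1/q) * Sr ^ (1/p3) := by
    have h1 : Te.toReal ≤ ((A1e * A2e) ^ (1/q) * Se ^ (1/p3)).toReal :=
      ENNReal.toReal_mono
        (ENNReal.mul_ne_top
          (ENNReal.rpow_ne_top_of_nonneg (by positivity)
            (ENNReal.mul_ne_top ENNReal.ofReal_ne_top ENNReal.ofReal_ne_top))
          (ENNReal.rpow_ne_top_of_nonneg (by positivity) hSetop)) hTeineq
    have h2 : ((A1e * A2e) ^ (1/q) * Se ^ (1/p3)).toReal =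
        (A1r * A2r) ^ (1/q) * Sr ^ (1/p3) := by
      rw [ENNReal.toReal_mul, ← ENNReal.toReal_rpow, ← ENNReal.toReal_rpow,
        ENNReal.toReal_mul, hA1edef, hA2edef,
        ENNReal.toReal_ofReal hA1rp.le, ENNReal.toReal_ofReal hA2rp.le, hSrdef]
    linarith [h1, h2.le]
  have hpn1 : pnorm f1 p1 = A1r ^ (1/p1) := rfl
  have hpn2 : pnorm f2 p2 = A2r ^ (1/p2) := rfl
  have hpn3 : pnorm f3 p3 = A3r ^ (1/p3) := rfl
  have hbig : (1 - δ) * (A1r ^ (1/p1) * A2r ^ (1/p2) * A3r ^ (1/p3)) ≤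
      (A1r * A2r) ^ (1/q) * Sr ^ (1/p3) := by
    rw [hpn1, hpn2, hpn3] at hT
    linarith [hT, hTnorm, hTe_toReal]
  -- real algebra : divide off the (A1r*A2r)^(1/q) factor
  set Nr : ℝ := A1r ^ (1/s1) * A2r ^ (1/s2) * A3r with hNrdef
  have hNrp : 0 < Nr := by rw [hNrdef]; positivity
  have hfactor : A1r ^ (1/p1) * A2r ^ (1/p2) * A3r ^ (1/p3) =
      (A1r * A2r) ^ (1/q) * Nr ^ (1/p3) := by
    rw [hNrdef, Real.mul_rpow hA1rp.le hA2rp.le,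
        Real.mul_rpow (by positivity) hA3rp.le,
        Real.mul_rpow (by positivity) (by positivity),
        ← Real.rpow_mul hA1rp.le, ← Real.rpow_mul hA2rp.le]
    nth_rewrite 1 [ed1, ed2]
    rw [Real.rpow_add hA1rp, Real.rpow_add hA2rp]
    ring
  have hkey : (1 - δ) * Nr ^ (1/p3) ≤ Sr ^ (1/p3) := by
    have hc0 : (0:ℝ) < (A1r * A2r) ^ (1/q) := by positivity
    rw [hfactor] at hbig
    have h1 : (A1r * A2r) ^ (1/q) * ((1 - δ) * Nr ^ (1/p3)) ≤
        (A1r * A2r) ^ (1/q) * (Sr ^ (1/p3)) := by linarith [hbig]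
    exact le_of_mul_le_mul_left h1 hc0
  -- raise to the power p3
  have h1δ : 0 ≤ 1 - δ := by linarith
  have hSr_ge : (1 - δ) ^ p3 * Nr ≤ Sr := by
    have h1 : ((1 - δ) * Nr ^ (1/p3)) ^ p3 ≤ (Sr ^ (1/p3)) ^ p3 :=
      Real.rpow_le_rpow (by positivity) hkey hp3p.le
    have h2 : ((1 - δ) * Nr ^ (1/p3)) ^ p3 = (1 - δ) ^ p3 * Nr := by
      rw [Real.mul_rpow h1δ (by positivity), ← Real.rpow_mul hNrp.le,
        one_div_mul_cancel hp3ne, Real.rpow_one]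
    have h3 : (Sr ^ (1/p3)) ^ p3 = Sr := by
      rw [← Real.rpow_mul hSrnn, one_div_mul_cancel hp3ne, Real.rpow_one]
    rw [h2, h3] at h1
    exact h1
  -- Bernoulli
  have hbern : 1 - p3 * δ ≤ (1 - δ) ^ p3 := by
    have := one_add_mul_self_le_rpow_one_add (s := -δ) (by linarith) hp3.le
    have h' : (1 : ℝ) + (-δ) = 1 - δ := by ring
    rw [h'] at this
    linarith [this]
  -- identify the pnormR quantities
  have hg1 : pnormR (fun x => ‖f1 x‖ ^ r1) s1 = A1r ^ (1/s1) := by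
    unfold pnormR
    congr 1
    rw [hA1rdef]
    refine tsum_congr fun x => ?_
    show |‖f1 x‖ ^ r1| ^ s1 = ‖f1 x‖ ^ p1
    rw [abs_of_nonneg (by positivity), ← Real.rpow_mul (norm_nonneg _), er1]
  have hg2 : pnormR (fun x => ‖f2 x‖ ^ r2) s2 = A2r ^ (1/s2) := by
    unfold pnormR
    congr 1
    rw [hA2rdef]
    refine tsum_congr fun x => ?_
    show |‖f2 x‖ ^ r2| ^ s2 = ‖f2 x‖ ^ p2
    rw [abs_of_nonneg (by positivity), ← Real.rpow_mul (norm_nonneg _), er2]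
  have hg3 : pnormR (fun x => ‖f3 x‖ ^ p3) 1 = A3r := by
    unfold pnormR
    rw [hA3rdef]
    norm_num
    exact tsum_congr fun x => by rw [abs_of_nonneg (by positivity)]
  rw [hSr_eq, hg1, hg2, hg3, ← hNrdef]
  calc (1 - p3 * δ) * Nr ≤ (1 - δ) ^ p3 * Nr :=
        mul_le_mul_of_nonneg_right hbern hNrp.le
    _ ≤ Sr := hSr_ge
end

section
/- Let p ∈ (1,∞). There exist constants C > 0 and γ > 0, depending only on p, such that for any measure space, any f, g ∈ L^p, and any ε ∈ [0,1]: if ‖f+g‖_p^p ≥ (1−ε)(2^{p−1}‖f‖_p^p + 2^{p−1}‖g‖_p^p), then ‖f−g‖_p^p ≤ C ε^γ (‖f‖_p^p + ‖g‖_p^p). -/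
open MeasureTheory Real
open scoped ENNReal NNReal

private lemma aux_add_rpow_le {x y β : ℝ} (hx : 0 ≤ x) (hy : 0 ≤ y) (hβ : 1 ≤ β) :
    x ^ β + y ^ β ≤ (x + y) ^ β := by
  have h := NNReal.add_rpow_le_rpow_add x.toNNReal y.toNNReal hβ
  have h2 := NNReal.coe_le_coe.2 h
  push_cast [Real.coe_toNNReal x hx, Real.coe_toNNReal y hy] at h2
  exact h2

private lemma aux_rpow_add_le {x y β : ℝ} (hx : 0 ≤ x) (hy : 0 ≤ y) (hβ : 1 ≤ β) :
    (x + y) ^ β ≤ 2 ^ (β - 1) * (x ^ β + y ^ β) := by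
  have h := NNReal.rpow_add_le_mul_rpow_add_rpow x.toNNReal y.toNNReal hβ
  have h2 := NNReal.coe_le_coe.2 h
  push_cast [Real.coe_toNNReal x hx, Real.coe_toNNReal y hy] at h2
  exact h2

private lemma aux_two_point {p : ℝ} (hp1 : 1 < p) (hp2 : p ≤ 2) {t : ℝ} (ht0 : 0 ≤ t)
    (ht1 : t ≤ 1) : 2 + (p - 1) ^ 2 / 2 * t ^ 2 ≤ (1 + t) ^ p + (1 - t) ^ p := by
  have h1t : (0:ℝ) < 1 + t := by linarith
  have hA : (0:ℝ) < 1 + (2 - p) * t := by nlinarith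
  have hB : (0:ℝ) ≤ 1 - (2 - p) * t := by nlinarith
  have hw : (1 + t) ^ (2 - p) ≤ 1 + (2 - p) * t :=
    rpow_one_add_le_one_add_mul_self (by linarith) (by linarith) (by linarith)
  have hupos : (0:ℝ) < (1 + t) ^ p := rpow_pos_of_pos h1t _
  have huw : (1 + t) ^ p * (1 + t) ^ (2 - p) = (1 + t) ^ 2 := by
    rw [← rpow_add h1t, ← Real.rpow_two]
    norm_num
  have hv : 1 - p * t ≤ (1 - t) ^ p := by
    have h := one_add_mul_self_le_rpow_one_add (s := -t) (by linarith) hp1.le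
    have e : 1 + -t = 1 - t := by ring
    rw [e] at h
    linarith [h]
  have h2 : (1 + t) ^ 2 ≤ (1 + t) ^ p * (1 + (2 - p) * t) := by
    rw [← huw]
    exact mul_le_mul_of_nonneg_left hw hupos.le
  have hident : (1 + (2 - p) * t) * (1 + p * t + (p - 1) ^ 2 / 2 * t ^ 2) ≤ (1 + t) ^ 2 := by
    nlinarith [mul_nonneg (mul_nonneg (sq_nonneg (p - 1)) (sq_nonneg t)) hB]
  have hu : 1 + p * t + (p - 1) ^ 2 / 2 * t ^ 2 ≤ (1 + t) ^ p := by
    have h3 : (1 + (2 - p) * t) * (1 + p * t + (p - 1) ^ 2 / 2 * t ^ 2) ≤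
        (1 + (2 - p) * t) * ((1 + t) ^ p) := by
      calc (1 + (2 - p) * t) * (1 + p * t + (p - 1) ^ 2 / 2 * t ^ 2) ≤ (1 + t) ^ 2 := hident
        _ ≤ (1 + t) ^ p * (1 + (2 - p) * t) := h2
        _ = (1 + (2 - p) * t) * ((1 + t) ^ p) := by ring
    exact le_of_mul_le_mul_left h3 hA
  linarith

private lemma aux_drop {β s u : ℝ} (hβ0 : 0 < β) (hβ1 : β ≤ 1) (hs : 0 < s) (hu0 : 0 ≤ u)
    (_hus : u ≤ s) : β * ((s - u) * s ^ (β - 1)) ≤ s ^ β - u ^ β := by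
  have hsb : s ^ (β - 1) = s ^ β / s := by rw [rpow_sub hs, rpow_one]
  have h1 : u ^ β = s ^ β * (u / s) ^ β := by
    rw [← Real.mul_rpow hs.le (by positivity)]
    rw [mul_div_cancel₀ _ hs.ne']
  have hkey : (u / s) ^ β ≤ 1 + β * (u / s - 1) := by
    have hge : (-1:ℝ) ≤ u / s - 1 := by
      have h0 : (0:ℝ) ≤ u / s := by positivity
      linarith
    have h := rpow_one_add_le_one_add_mul_self (s := u / s - 1) hge hβ0.le hβ1
    have e : 1 + (u / s - 1) = u / s := by ring
    rw [e] at h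
    exact h
  have h2 : u ^ β ≤ s ^ β * (1 + β * (u / s - 1)) := by
    rw [h1]
    exact mul_le_mul_of_nonneg_left hkey (rpow_nonneg hs.le _)
  have expand : s ^ β * (1 + β * (u / s - 1)) = s ^ β - β * ((s - u) * (s ^ β / s)) := by
    field_simp
    ring
  rw [hsb]
  rw [expand] at h2
  linarith

private lemma aux_radial_le {p : ℝ} (hp1 : 1 < p) (hp2 : p ≤ 2) {x y : ℝ} (hx : 0 ≤ x)
    (hy : 0 ≤ y) (hyx : y ≤ x) (hs : 0 < x + y) :
    (p - 1) ^ 2 / 4 * ((x - y) ^ 2 * (x + y) ^ (p - 2)) ≤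
      2 ^ (p - 1) * (x ^ p + y ^ p) - (x + y) ^ p := by
  set s := x + y with hsdef
  have hst : s * ((x - y) / s) = x - y := mul_div_cancel₀ _ hs.ne'
  set t := (x - y) / s with htdef
  have ht0 : 0 ≤ t := div_nonneg (by linarith) hs.le
  have ht1 : t ≤ 1 := by
    rw [div_le_one hs]
    linarith
  have hxe : x = s * (1 + t) / 2 := by
    have : s * (1 + t) = s + (x - y) := by rw [mul_add, mul_one, hst]
    rw [this]
    simp only [hsdef]
    ring
  have hye : y = s * (1 - t) / 2 := by
    have : s * (1 - t) = s - (x - y) := by rw [mul_sub, mul_one, hst]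
    rw [this]
    simp only [hsdef]
    ring
  have h1t : (0:ℝ) ≤ 1 + t := by linarith
  have h1t' : (0:ℝ) ≤ 1 - t := by linarith
  have hxp : x ^ p = s ^ p * (1 + t) ^ p / 2 ^ p := by
    rw [hxe, div_rpow (by positivity) (by norm_num), mul_rpow hs.le h1t]
  have hyp' : y ^ p = s ^ p * (1 - t) ^ p / 2 ^ p := by
    rw [hye, div_rpow (by positivity) (by norm_num), mul_rpow hs.le h1t']
  have h2p : (0:ℝ) < 2 ^ p := rpow_pos_of_pos (by norm_num) _
  have h2e : (2:ℝ) ^ (p - 1) = 2 ^ p / 2 := by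
    rw [rpow_sub (by norm_num), rpow_one]
  have hlhs : 2 ^ (p - 1) * (x ^ p + y ^ p) = s ^ p * ((1 + t) ^ p + (1 - t) ^ p) / 2 := by
    rw [hxp, hyp', h2e]
    field_simp
  have htp : 2 + (p - 1) ^ 2 / 2 * t ^ 2 ≤ (1 + t) ^ p + (1 - t) ^ p :=
    aux_two_point hp1 hp2 ht0 ht1
  have hsp0 : (0:ℝ) ≤ s ^ p := rpow_nonneg hs.le _
  have hkey : s ^ p * (2 + (p - 1) ^ 2 / 2 * t ^ 2) / 2 ≤ 2 ^ (p - 1) * (x ^ p + y ^ p) := by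
    rw [hlhs]
    have := mul_le_mul_of_nonneg_left htp hsp0
    linarith
  have hsplit : s ^ p = s ^ (p - 2) * s ^ 2 := by
    rw [← Real.rpow_two, ← rpow_add hs]
    norm_num
  have hst2 : s ^ p * t ^ 2 = s ^ (p - 2) * (x - y) ^ 2 := by
    rw [hsplit]
    have he : s ^ 2 * t ^ 2 = (s * t) ^ 2 := by ring
    rw [mul_assoc, he, hst]
  have hfin : s ^ p * (2 + (p - 1) ^ 2 / 2 * t ^ 2) / 2 =
      s ^ p + (p - 1) ^ 2 / 4 * ((x - y) ^ 2 * (s ^ (p - 2))) := by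
    have he : s ^ p * (2 + (p - 1) ^ 2 / 2 * t ^ 2) / 2
        = s ^ p + (p - 1) ^ 2 / 4 * (s ^ p * t ^ 2) := by ring
    rw [he, hst2]
    ring
  rw [hfin] at hkey
  linarith

private lemma aux_radial {p : ℝ} (hp1 : 1 < p) (hp2 : p ≤ 2) {x y : ℝ} (hx : 0 ≤ x)
    (hy : 0 ≤ y) (hs : 0 < x + y) :
    (p - 1) ^ 2 / 4 * ((x - y) ^ 2 * (x + y) ^ (p - 2)) ≤
      2 ^ (p - 1) * (x ^ p + y ^ p) - (x + y) ^ p := by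
  rcases le_total y x with h | h
  · exact aux_radial_le hp1 hp2 hx hy h hs
  · have h2 := aux_radial_le hp1 hp2 hy hx h (by linarith [hs])
    have e1 : y + x = x + y := add_comm y x
    have e2 : (y - x) ^ 2 = (x - y) ^ 2 := by ring
    rw [e1, e2] at h2
    calc (p - 1) ^ 2 / 4 * ((x - y) ^ 2 * (x + y) ^ (p - 2))
        ≤ 2 ^ (p - 1) * (y ^ p + x ^ p) - (x + y) ^ p := h2
      _ = 2 ^ (p - 1) * (x ^ p + y ^ p) - (x + y) ^ p := by ring

private lemma aux_para (a b : ℂ) :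
    ‖a + b‖ ^ (2:ℕ) + ‖a - b‖ ^ (2:ℕ) = 2 * (‖a‖ ^ (2:ℕ) + ‖b‖ ^ (2:ℕ)) := by
  have h := parallelogram_law_with_norm ℂ a b
  simp only [pow_two]
  linarith

private lemma aux_sq_rpow (x : ℝ) (hx : 0 ≤ x) (r : ℝ) :
    (x ^ (2:ℕ)) ^ r = x ^ (2 * r) := by
  rw [← Real.rpow_natCast x 2, ← Real.rpow_mul hx]
  norm_num

private lemma aux_key {p : ℝ} (hp1 : 1 < p) (hp2 : p ≤ 2) (a b : ℂ) :
    ((p - 1) ^ 2 / 4) ^ (p / 2) * ‖a - b‖ ^ p ≤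
      (2 ^ (p - 1) * (‖a‖ ^ p + ‖b‖ ^ p) - ‖a + b‖ ^ p) ^ (p / 2)
        * ((‖a‖ + ‖b‖) ^ p) ^ ((2 - p) / 2) := by
  have hp0 : (0:ℝ) < p := by linarith
  have hc0 : (0:ℝ) < (p - 1) ^ 2 / 4 := by
    have h1 : p - 1 ≠ 0 := by linarith
    positivity
  set c : ℝ := (p - 1) ^ 2 / 4 with hcdef
  by_cases hs : ‖a‖ + ‖b‖ = 0
  · have ha : a = 0 := by
      have h1 := norm_nonneg a; have h2 := norm_nonneg b
      have : ‖a‖ = 0 := by linarith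
      simpa using this
    have hb : b = 0 := by
      have h1 := norm_nonneg a; have h2 := norm_nonneg b
      have : ‖b‖ = 0 := by linarith
      simpa using this
    subst ha; subst hb
    simp [Real.zero_rpow hp0.ne', Real.zero_rpow (by positivity : p/2 ≠ 0)]
  · have hs0 : 0 < ‖a‖ + ‖b‖ := lt_of_le_of_ne (by positivity) (Ne.symm hs)
    set x := ‖a‖; set y := ‖b‖; set s := x + y
    have hab_le : ‖a + b‖ ≤ s := norm_add_le a b
    have hs2 : (0:ℝ) < s ^ (2:ℕ) := by positivity
    have hdrop := aux_drop (β := p / 2) (s := s ^ (2:ℕ)) (u := ‖a + b‖ ^ (2:ℕ))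
      (by positivity) (by linarith) hs2 (by positivity)
      (by exact pow_le_pow_left₀ (norm_nonneg _) hab_le 2)
    rw [aux_sq_rpow s (by positivity), aux_sq_rpow ‖a + b‖ (norm_nonneg _),
      aux_sq_rpow s (by positivity)] at hdrop
    have e1 : 2 * (p / 2) = p := by ring
    have e2 : 2 * (p / 2 - 1) = p - 2 := by ring
    rw [e1, e2] at hdrop
    have hrad := aux_radial hp1 hp2 (norm_nonneg a) (norm_nonneg b) hs0
    have hpara := aux_para a b
    have hnsub : ‖a - b‖ ^ (2:ℕ) = (x - y) ^ 2 + (s ^ (2:ℕ) - ‖a + b‖ ^ (2:ℕ)) := by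
      simp only [s]
      nlinarith [hpara]
    have hcle : c ≤ p / 2 := by nlinarith
    have hm0 : (0:ℝ) ≤ s ^ (2:ℕ) - ‖a + b‖ ^ (2:ℕ) := by
      nlinarith [pow_le_pow_left₀ (norm_nonneg (a+b)) hab_le 2]
    have hsp2 : (0:ℝ) ≤ s ^ (p - 2) := rpow_nonneg (by positivity) _
    set D : ℝ := 2 ^ (p - 1) * (x ^ p + y ^ p) - ‖a + b‖ ^ p with hDdef
    have hDge : c * (‖a - b‖ ^ (2:ℕ) * s ^ (p - 2)) ≤ D := by
      have h1 : c * ((x - y) ^ 2 * s ^ (p - 2)) ≤ 2 ^ (p - 1) * (x ^ p + y ^ p) - s ^ p := hrad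
      have h2 : c * ((s ^ (2:ℕ) - ‖a + b‖ ^ (2:ℕ)) * s ^ (p - 2)) ≤ s ^ p - ‖a + b‖ ^ p := by
        calc c * ((s ^ (2:ℕ) - ‖a + b‖ ^ (2:ℕ)) * s ^ (p - 2))
            ≤ p / 2 * ((s ^ (2:ℕ) - ‖a + b‖ ^ (2:ℕ)) * s ^ (p - 2)) := by
              apply mul_le_mul_of_nonneg_right hcle (by positivity)
          _ ≤ s ^ p - ‖a + b‖ ^ p := hdrop
      rw [hnsub]
      have he : c * (((x - y) ^ 2 + (s ^ (2:ℕ) - ‖a + b‖ ^ (2:ℕ))) * s ^ (p - 2))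
          = c * ((x - y) ^ 2 * s ^ (p - 2))
            + c * ((s ^ (2:ℕ) - ‖a + b‖ ^ (2:ℕ)) * s ^ (p - 2)) := by ring
      rw [he, hDdef]
      linarith
    have hD0 : (0:ℝ) ≤ D := le_trans (by positivity) hDge
    have hcancel : s ^ (p - 2) * s ^ (2 - p) = 1 := by
      rw [← rpow_add hs0]
      norm_num
    have htwo : c * ‖a - b‖ ^ (2:ℕ) ≤ D * s ^ (2 - p) := by
      have h := mul_le_mul_of_nonneg_right hDge (rpow_nonneg (by positivity : (0:ℝ) ≤ s) (2 - p))
      calc c * ‖a - b‖ ^ (2:ℕ)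
          = c * ‖a - b‖ ^ (2:ℕ) * (s ^ (p - 2) * s ^ (2 - p)) := by rw [hcancel, mul_one]
        _ = c * (‖a - b‖ ^ (2:ℕ) * s ^ (p - 2)) * s ^ (2 - p) := by ring
        _ ≤ D * s ^ (2 - p) := h
    have hfin := Real.rpow_le_rpow (by positivity) htwo (by positivity : (0:ℝ) ≤ p / 2)
    rw [Real.mul_rpow hc0.le (by positivity), Real.mul_rpow hD0 (rpow_nonneg hs0.le _),
      aux_sq_rpow ‖a - b‖ (norm_nonneg _), e1,
      ← Real.rpow_mul hs0.le] at hfin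
    rw [← Real.rpow_mul hs0.le]
    rw [show p * ((2 - p) / 2) = (2 - p) * (p / 2) by ring]
    exact hfin

private lemma aux_clarkson1 {p : ℝ} (hp2 : 2 ≤ p) (a b : ℂ) :
    ‖a + b‖ ^ p + ‖a - b‖ ^ p ≤ 2 ^ (p - 1) * (‖a‖ ^ p + ‖b‖ ^ p) := by
  have hβ : (1:ℝ) ≤ p / 2 := by linarith
  have h1 : ‖a + b‖ ^ p + ‖a - b‖ ^ p ≤ (‖a + b‖ ^ (2:ℕ) + ‖a - b‖ ^ (2:ℕ)) ^ (p / 2) := by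
    have h := aux_add_rpow_le (x := ‖a + b‖ ^ (2:ℕ)) (y := ‖a - b‖ ^ (2:ℕ))
      (by positivity) (by positivity) hβ
    rwa [aux_sq_rpow _ (norm_nonneg _), aux_sq_rpow _ (norm_nonneg _),
      (by ring : 2 * (p / 2) = p)] at h
  rw [aux_para a b] at h1
  have h2 : ((2:ℝ) * (‖a‖ ^ (2:ℕ) + ‖b‖ ^ (2:ℕ))) ^ (p / 2)
      = 2 ^ (p / 2) * (‖a‖ ^ (2:ℕ) + ‖b‖ ^ (2:ℕ)) ^ (p / 2) :=
    Real.mul_rpow (by norm_num) (by positivity)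
  have h3 : (‖a‖ ^ (2:ℕ) + ‖b‖ ^ (2:ℕ)) ^ (p / 2)
      ≤ 2 ^ (p / 2 - 1) * ((‖a‖ ^ (2:ℕ)) ^ (p / 2) + (‖b‖ ^ (2:ℕ)) ^ (p / 2)) :=
    aux_rpow_add_le (by positivity) (by positivity) hβ
  rw [aux_sq_rpow _ (norm_nonneg _), aux_sq_rpow _ (norm_nonneg _),
    (by ring : 2 * (p / 2) = p)] at h3
  have h4 : (2:ℝ) ^ (p / 2) * 2 ^ (p / 2 - 1) = 2 ^ (p - 1) := by
    rw [← rpow_add (by norm_num : (0:ℝ) < 2)]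
    ring_nf
  calc ‖a + b‖ ^ p + ‖a - b‖ ^ p ≤ (2 * (‖a‖ ^ (2:ℕ) + ‖b‖ ^ (2:ℕ))) ^ (p / 2) := h1
    _ = 2 ^ (p / 2) * (‖a‖ ^ (2:ℕ) + ‖b‖ ^ (2:ℕ)) ^ (p / 2) := h2
    _ ≤ 2 ^ (p / 2) * (2 ^ (p / 2 - 1) * (‖a‖ ^ p + ‖b‖ ^ p)) := by
        apply mul_le_mul_of_nonneg_left h3 (by positivity)
    _ = 2 ^ (p - 1) * (‖a‖ ^ p + ‖b‖ ^ p) := by rw [← mul_assoc, h4]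

theorem clarkson_quantitative (p : ℝ) (hp : 1 < p) :
    ∃ (C γ : ℝ), 0 < C ∧ 0 < γ ∧
      ∀ (α : Type) (_ : MeasurableSpace α) (μ : Measure α) (f g : α → ℂ),
        MemLp f (ENNReal.ofReal p) μ → MemLp g (ENNReal.ofReal p) μ →
        ∀ ε ∈ Set.Icc (0 : ℝ) 1,
          (∫ x, ‖f x + g x‖ ^ p ∂μ) ≥
            (1 - ε) * ((2 : ℝ) ^ (p - 1) * (∫ x, ‖f x‖ ^ p ∂μ) +
              (2 : ℝ) ^ (p - 1) * (∫ x, ‖g x‖ ^ p ∂μ)) →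
          (∫ x, ‖f x - g x‖ ^ p ∂μ) ≤
            C * ε ^ γ * ((∫ x, ‖f x‖ ^ p ∂μ) + (∫ x, ‖g x‖ ^ p ∂μ)) := by
  have hp0 : (0:ℝ) < p := by linarith
  have hp'0 : ENNReal.ofReal p ≠ 0 := by
    simp only [ne_eq, ENNReal.ofReal_eq_zero, not_le]
    linarith
  have hp't : ENNReal.ofReal p ≠ ⊤ := ENNReal.ofReal_ne_top
  have htoReal : (ENNReal.ofReal p).toReal = p := ENNReal.toReal_ofReal hp0.le
  rcases le_or_gt 2 p with hge | hlt
  · -- case p ≥ 2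
    refine ⟨2 ^ (p - 1), 1, by positivity, one_pos, ?_⟩
    intro α mα μ f g hf hg ε hε hyp
    obtain ⟨hε0, hε1⟩ := hε
    have intf : Integrable (fun x => ‖f x‖ ^ p) μ := by
      have h := hf.integrable_norm_rpow hp'0 hp't
      rwa [htoReal] at h
    have intg : Integrable (fun x => ‖g x‖ ^ p) μ := by
      have h := hg.integrable_norm_rpow hp'0 hp't
      rwa [htoReal] at h
    have intfg : Integrable (fun x => ‖f x + g x‖ ^ p) μ := by
      have h := (hf.add hg).integrable_norm_rpow hp'0 hp't
      rw [htoReal] at h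
      simpa [Pi.add_apply] using h
    have intfmg : Integrable (fun x => ‖f x - g x‖ ^ p) μ := by
      have h := (hf.sub hg).integrable_norm_rpow hp'0 hp't
      rw [htoReal] at h
      simpa [Pi.sub_apply] using h
    have intconst : Integrable (fun x => 2 ^ (p - 1) * (‖f x‖ ^ p + ‖g x‖ ^ p)) μ :=
      ((intf.add intg).const_mul _).congr (ae_of_all _ fun x => rfl)
    have key : (∫ x, ‖f x + g x‖ ^ p ∂μ) + (∫ x, ‖f x - g x‖ ^ p ∂μ)
        ≤ 2 ^ (p - 1) * (∫ x, ‖f x‖ ^ p ∂μ) + 2 ^ (p - 1) * (∫ x, ‖g x‖ ^ p ∂μ) := by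
      have h1 : (∫ x, ‖f x + g x‖ ^ p ∂μ) + (∫ x, ‖f x - g x‖ ^ p ∂μ)
          = ∫ x, (‖f x + g x‖ ^ p + ‖f x - g x‖ ^ p) ∂μ := (integral_add intfg intfmg).symm
      have h2 : (∫ x, (‖f x + g x‖ ^ p + ‖f x - g x‖ ^ p) ∂μ)
          ≤ ∫ x, 2 ^ (p - 1) * (‖f x‖ ^ p + ‖g x‖ ^ p) ∂μ :=
        integral_mono (intfg.add intfmg) intconst
          (fun x => aux_clarkson1 hge (f x) (g x))
      have h3 : (∫ x, 2 ^ (p - 1) * (‖f x‖ ^ p + ‖g x‖ ^ p) ∂μ)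
          = 2 ^ (p - 1) * (∫ x, ‖f x‖ ^ p ∂μ) + 2 ^ (p - 1) * (∫ x, ‖g x‖ ^ p ∂μ) := by
        rw [integral_const_mul, integral_add intf intg]
        ring
      linarith
    rw [Real.rpow_one]
    nlinarith [key, hyp]
  · -- case 1 < p < 2
    have hp2 : p ≤ 2 := hlt.le
    have h2p0 : (0:ℝ) < 2 - p := by linarith
    have hc0 : (0:ℝ) < (p - 1) ^ 2 / 4 := by
      have h1 : p - 1 ≠ 0 := by linarith
      positivity
    have hcp0 : (0:ℝ) < ((p - 1) ^ 2 / 4) ^ (p / 2) := rpow_pos_of_pos hc0 _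
    refine ⟨2 ^ (p - 1) / ((p - 1) ^ 2 / 4) ^ (p / 2), p / 2, by positivity, by positivity, ?_⟩
    intro α mα μ f g hf hg ε hε hyp
    obtain ⟨hε0, hε1⟩ := hε
    have intf : Integrable (fun x => ‖f x‖ ^ p) μ := by
      have h := hf.integrable_norm_rpow hp'0 hp't
      rwa [htoReal] at h
    have intg : Integrable (fun x => ‖g x‖ ^ p) μ := by
      have h := hg.integrable_norm_rpow hp'0 hp't
      rwa [htoReal] at h
    have intfg : Integrable (fun x => ‖f x + g x‖ ^ p) μ := by
      have h := (hf.add hg).integrable_norm_rpow hp'0 hp't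
      rw [htoReal] at h
      simpa [Pi.add_apply] using h
    have intfmg : Integrable (fun x => ‖f x - g x‖ ^ p) μ := by
      have h := (hf.sub hg).integrable_norm_rpow hp'0 hp't
      rw [htoReal] at h
      simpa [Pi.sub_apply] using h
    have hh : MemLp (fun x => ‖f x‖ + ‖g x‖) (ENNReal.ofReal p) μ := hf.norm.add hg.norm
    have intS : Integrable (fun x => (‖f x‖ + ‖g x‖) ^ p) μ := by
      have h := hh.integrable_norm_rpow hp'0 hp't
      rw [htoReal] at h
      refine h.congr (ae_of_all _ fun x => ?_)
      show ‖‖f x‖ + ‖g x‖‖ ^ p = (‖f x‖ + ‖g x‖) ^ p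
      rw [Real.norm_of_nonneg (by positivity)]
    have intconst : Integrable (fun x => 2 ^ (p - 1) * (‖f x‖ ^ p + ‖g x‖ ^ p)) μ :=
      ((intf.add intg).const_mul _).congr (ae_of_all _ fun x => rfl)
    set D : α → ℝ := fun x => 2 ^ (p - 1) * (‖f x‖ ^ p + ‖g x‖ ^ p) - ‖f x + g x‖ ^ p
      with hDdef
    have hD0 : ∀ x, 0 ≤ D x := by
      intro x
      have htri : ‖f x + g x‖ ^ p ≤ (‖f x‖ + ‖g x‖) ^ p :=
        Real.rpow_le_rpow (norm_nonneg _) (norm_add_le _ _) hp0.le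
      have h2 : (‖f x‖ + ‖g x‖) ^ p ≤ 2 ^ (p - 1) * (‖f x‖ ^ p + ‖g x‖ ^ p) :=
        aux_rpow_add_le (norm_nonneg _) (norm_nonneg _) hp.le
      simp only [hDdef]
      linarith
    have hDint : Integrable D μ := by
      simp only [hDdef]
      exact intconst.sub intfg
    have hDI : ∫ x, D x ∂μ ≤ ε * (2 ^ (p - 1) * (∫ x, ‖f x‖ ^ p ∂μ)
        + 2 ^ (p - 1) * (∫ x, ‖g x‖ ^ p ∂μ)) := by
      have h1 : ∫ x, D x ∂μ = 2 ^ (p - 1) * (∫ x, ‖f x‖ ^ p ∂μ)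
          + 2 ^ (p - 1) * (∫ x, ‖g x‖ ^ p ∂μ) - ∫ x, ‖f x + g x‖ ^ p ∂μ := by
        simp only [hDdef]
        rw [integral_sub intconst intfg, integral_const_mul,
          integral_add intf intg]
        ring
      nlinarith [hyp]
    have hDI0 : 0 ≤ ∫ x, D x ∂μ := integral_nonneg hD0
    have hSle : ∫ x, (‖f x‖ + ‖g x‖) ^ p ∂μ ≤ 2 ^ (p - 1) * (∫ x, ‖f x‖ ^ p ∂μ)
        + 2 ^ (p - 1) * (∫ x, ‖g x‖ ^ p ∂μ) := by
      have h1 : ∫ x, (‖f x‖ + ‖g x‖) ^ p ∂μ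
          ≤ ∫ x, 2 ^ (p - 1) * (‖f x‖ ^ p + ‖g x‖ ^ p) ∂μ :=
        integral_mono intS intconst
          (fun x => aux_rpow_add_le (norm_nonneg _) (norm_nonneg _) hp.le)
      rw [integral_const_mul, integral_add intf intg] at h1
      linarith
    have hS0 : ∀ x, (0:ℝ) ≤ (‖f x‖ + ‖g x‖) ^ p := fun x => rpow_nonneg (by positivity) _
    have hSI0 : 0 ≤ ∫ x, (‖f x‖ + ‖g x‖) ^ p ∂μ := integral_nonneg hS0
    -- MemLp facts for Hölder
    have hmemu : MemLp (fun x => D x ^ (p / 2)) (ENNReal.ofReal (2 / p)) μ := by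
      have hD1 : MemLp D 1 μ := memLp_one_iff_integrable.mpr hDint
      have h2 := hD1.norm_rpow_div (ENNReal.ofReal (p / 2))
      rw [ENNReal.toReal_ofReal (by positivity : (0:ℝ) ≤ p / 2)] at h2
      have e3 : (1:ℝ≥0∞) / ENNReal.ofReal (p / 2) = ENNReal.ofReal (2 / p) := by
        rw [one_div, ← ENNReal.ofReal_inv_of_pos (by positivity), inv_div]
      rw [e3] at h2
      refine (memLp_congr_ae (ae_of_all _ fun x => ?_)).mp h2
      show ‖D x‖ ^ (p / 2) = D x ^ (p / 2)
      rw [Real.norm_of_nonneg (hD0 x)]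
    have hmemv : MemLp (fun x => ((‖f x‖ + ‖g x‖) ^ p) ^ ((2 - p) / 2))
        (ENNReal.ofReal (2 / (2 - p))) μ := by
      have hq0 : (0:ℝ) < p * (2 - p) / 2 := by positivity
      have h2 := hh.norm_rpow_div (ENNReal.ofReal (p * (2 - p) / 2))
      rw [ENNReal.toReal_ofReal hq0.le] at h2
      have e4 : ENNReal.ofReal p / ENNReal.ofReal (p * (2 - p) / 2)
          = ENNReal.ofReal (2 / (2 - p)) := by
        rw [← ENNReal.ofReal_div_of_pos hq0]
        congr 1
        field_simp
      rw [e4] at h2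
      refine (memLp_congr_ae (ae_of_all _ fun x => ?_)).mp h2
      show ‖‖f x‖ + ‖g x‖‖ ^ (p * (2 - p) / 2) = ((‖f x‖ + ‖g x‖) ^ p) ^ ((2 - p) / 2)
      rw [Real.norm_of_nonneg (by positivity), ← Real.rpow_mul (by positivity), mul_div_assoc]
    have hpq : Real.HolderConjugate (2 / p) (2 / (2 - p)) := by
      refine Real.holderConjugate_iff.mpr ⟨?_, ?_⟩
      · rw [lt_div_iff₀ hp0]
        linarith
      · rw [inv_div, inv_div]
        ring
    have hold := MeasureTheory.integral_mul_le_Lp_mul_Lq_of_nonneg hpq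
      (ae_of_all _ fun x => Real.rpow_nonneg (hD0 x) _)
      (ae_of_all _ fun x => Real.rpow_nonneg (hS0 x) _) hmemu hmemv
    have eu : ∀ x : α, (D x ^ (p / 2)) ^ (2 / p) = D x := by
      intro x
      rw [← Real.rpow_mul (hD0 x),
        show (p / 2) * (2 / p) = 1 by rw [div_mul_div_comm, mul_comm p 2]; exact div_self (by positivity),
        Real.rpow_one]
    have ev : ∀ x : α, (((‖f x‖ + ‖g x‖) ^ p) ^ ((2 - p) / 2)) ^ (2 / (2 - p))
        = (‖f x‖ + ‖g x‖) ^ p := by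
      intro x
      rw [← Real.rpow_mul (hS0 x),
        show ((2 - p) / 2) * (2 / (2 - p)) = 1 by
          rw [div_mul_div_comm, mul_comm (2 - p) 2]
          exact div_self (ne_of_gt (mul_pos two_pos h2p0)),
        Real.rpow_one]
    simp only [eu, ev] at hold
    rw [one_div_div, one_div_div] at hold
    -- hold : ∫ u * v ≤ (∫ D) ^ (p/2) * (∫ S) ^ ((2-p)/2)
    have h1r : (1:ℝ≥0∞) / 1 = 1 / ENNReal.ofReal (2 / p) + 1 / ENNReal.ofReal (2 / (2 - p)) := by
      have e1 : (1:ℝ≥0∞) / ENNReal.ofReal (2 / p) = ENNReal.ofReal (p / 2) := by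
        rw [one_div, ← ENNReal.ofReal_inv_of_pos (by positivity), inv_div]
      have e2 : (1:ℝ≥0∞) / ENNReal.ofReal (2 / (2 - p)) = ENNReal.ofReal ((2 - p) / 2) := by
        rw [one_div, ← ENNReal.ofReal_inv_of_pos (div_pos two_pos h2p0), inv_div]
      rw [e1, e2, ← ENNReal.ofReal_add (by positivity) (by linarith),
        show p / 2 + (2 - p) / 2 = 1 by ring]
      simp
    have hsm : MemLp ((fun x => D x ^ (p / 2)) •
        (fun x => ((‖f x‖ + ‖g x‖) ^ p) ^ ((2 - p) / 2))) 1 μ :=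
      by
        haveI : ENNReal.HolderTriple (ENNReal.ofReal (2 / p)) (ENNReal.ofReal (2 / (2 - p))) 1 :=
          ⟨by simpa only [one_div] using h1r.symm⟩
        exact hmemv.smul hmemu
    have intuv : Integrable
        (fun x => D x ^ (p / 2) * ((‖f x‖ + ‖g x‖) ^ p) ^ ((2 - p) / 2)) μ := by
      have h := memLp_one_iff_integrable.mp hsm
      exact h.congr (ae_of_all _ fun x => rfl)
    have hle1 : ((p - 1) ^ 2 / 4) ^ (p / 2) * (∫ x, ‖f x - g x‖ ^ p ∂μ)
        ≤ (∫ x, D x ∂μ) ^ (p / 2) * (∫ x, (‖f x‖ + ‖g x‖) ^ p ∂μ) ^ ((2 - p) / 2) := by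
      rw [← integral_const_mul]
      calc (∫ x, ((p - 1) ^ 2 / 4) ^ (p / 2) * ‖f x - g x‖ ^ p ∂μ)
          ≤ ∫ x, D x ^ (p / 2) * ((‖f x‖ + ‖g x‖) ^ p) ^ ((2 - p) / 2) ∂μ := by
            refine integral_mono (intfmg.const_mul _) intuv (fun x => ?_)
            simp only [hDdef]
            exact aux_key hp hp2 (f x) (g x)
        _ ≤ (∫ x, D x ∂μ) ^ (p / 2) * (∫ x, (‖f x‖ + ‖g x‖) ^ p ∂μ) ^ ((2 - p) / 2) := hold
    -- final arithmetic
    have hA0 : 0 ≤ ∫ x, ‖f x‖ ^ p ∂μ :=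
      integral_nonneg (fun x => rpow_nonneg (norm_nonneg _) _)
    have hB0 : 0 ≤ ∫ x, ‖g x‖ ^ p ∂μ :=
      integral_nonneg (fun x => rpow_nonneg (norm_nonneg _) _)
    have hM0 : (0:ℝ) ≤ 2 ^ (p - 1) * (∫ x, ‖f x‖ ^ p ∂μ)
        + 2 ^ (p - 1) * (∫ x, ‖g x‖ ^ p ∂μ) := by positivity
    have r1 : (∫ x, D x ∂μ) ^ (p / 2) ≤ (ε * (2 ^ (p - 1) * (∫ x, ‖f x‖ ^ p ∂μ)
        + 2 ^ (p - 1) * (∫ x, ‖g x‖ ^ p ∂μ))) ^ (p / 2) :=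
      Real.rpow_le_rpow hDI0 hDI (by positivity)
    have r2 : (∫ x, (‖f x‖ + ‖g x‖) ^ p ∂μ) ^ ((2 - p) / 2)
        ≤ (2 ^ (p - 1) * (∫ x, ‖f x‖ ^ p ∂μ)
            + 2 ^ (p - 1) * (∫ x, ‖g x‖ ^ p ∂μ)) ^ ((2 - p) / 2) :=
      Real.rpow_le_rpow hSI0 hSle (by linarith)
    have r3 : (∫ x, D x ∂μ) ^ (p / 2) * (∫ x, (‖f x‖ + ‖g x‖) ^ p ∂μ) ^ ((2 - p) / 2)
        ≤ (ε * (2 ^ (p - 1) * (∫ x, ‖f x‖ ^ p ∂μ)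
            + 2 ^ (p - 1) * (∫ x, ‖g x‖ ^ p ∂μ))) ^ (p / 2)
          * (2 ^ (p - 1) * (∫ x, ‖f x‖ ^ p ∂μ)
            + 2 ^ (p - 1) * (∫ x, ‖g x‖ ^ p ∂μ)) ^ ((2 - p) / 2) :=
      mul_le_mul r1 r2 (rpow_nonneg hSI0 _) (rpow_nonneg (by positivity) _)
    have r4 : (ε * (2 ^ (p - 1) * (∫ x, ‖f x‖ ^ p ∂μ)
            + 2 ^ (p - 1) * (∫ x, ‖g x‖ ^ p ∂μ))) ^ (p / 2)
          * (2 ^ (p - 1) * (∫ x, ‖f x‖ ^ p ∂μ)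
            + 2 ^ (p - 1) * (∫ x, ‖g x‖ ^ p ∂μ)) ^ ((2 - p) / 2)
        = ε ^ (p / 2) * (2 ^ (p - 1) * (∫ x, ‖f x‖ ^ p ∂μ)
            + 2 ^ (p - 1) * (∫ x, ‖g x‖ ^ p ∂μ)) := by
      rw [Real.mul_rpow hε0 hM0, mul_assoc,
        ← Real.rpow_add' hM0 (by rw [show p / 2 + (2 - p) / 2 = (1:ℝ) by ring]; exact one_ne_zero),
        show p / 2 + (2 - p) / 2 = (1:ℝ) by ring, Real.rpow_one]
    rw [r4] at r3
    have hrw : 2 ^ (p - 1) / ((p - 1) ^ 2 / 4) ^ (p / 2) * ε ^ (p / 2)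
          * ((∫ x, ‖f x‖ ^ p ∂μ) + (∫ x, ‖g x‖ ^ p ∂μ))
        = (ε ^ (p / 2) * (2 ^ (p - 1) * (∫ x, ‖f x‖ ^ p ∂μ)
            + 2 ^ (p - 1) * (∫ x, ‖g x‖ ^ p ∂μ))) / ((p - 1) ^ 2 / 4) ^ (p / 2) := by
      ring
    rw [hrw, le_div_iff₀ hcp0]
    nlinarith [hle1, r3]
end

section
/- Let p ∈ [1,∞) and r ∈ [1,p]. There exists a constant C < ∞, depending only on p and r, such that for any measure space and any two nonnegative functions g1, g2 ∈ L^p, ‖g1 − g2‖_p^p ≤ C · ‖g1^r − g2^r‖_{p/r} · (‖g1‖_p + ‖g2‖_p)^{p−r}. -/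
open MeasureTheory

private lemma add_rpow_le_real {x y p : ℝ} (hx : 0 ≤ x) (hy : 0 ≤ y) (hp : 1 ≤ p) :
    x ^ p + y ^ p ≤ (x + y) ^ p := by
  have h := NNReal.coe_le_coe.2 (NNReal.add_rpow_le_rpow_add x.toNNReal y.toNNReal hp)
  push_cast at h
  rwa [Real.coe_toNNReal x hx, Real.coe_toNNReal y hy] at h

private lemma pt1_aux {p r a b : ℝ} (hr : 1 ≤ r) (hrp : r ≤ p) (hb : 0 ≤ b) (hba : b ≤ a) :
    |a - b| ^ p ≤ |a ^ r - b ^ r| ^ (p / r) := by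
  have hr0 : (0:ℝ) < r := lt_of_lt_of_le one_pos hr
  have hpr : 0 ≤ p / r := div_nonneg (le_trans (le_trans zero_le_one hr) hrp) hr0.le
  have h1 : b ^ r ≤ a ^ r := Real.rpow_le_rpow hb hba hr0.le
  rw [abs_of_nonneg (sub_nonneg.2 hba), abs_of_nonneg (sub_nonneg.2 h1)]
  have key : (a - b) ^ r ≤ a ^ r - b ^ r := by
    have h2 := add_rpow_le_real (sub_nonneg.2 hba) hb hr
    rw [sub_add_cancel] at h2
    linarith
  have heq : (a - b) ^ p = ((a - b) ^ r) ^ (p / r) := by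
    rw [← Real.rpow_mul (sub_nonneg.2 hba)]
    congr 1
    field_simp
  rw [heq]
  exact Real.rpow_le_rpow (Real.rpow_nonneg (sub_nonneg.2 hba) r) key hpr

private lemma pt1 {p r a b : ℝ} (hr : 1 ≤ r) (hrp : r ≤ p) (ha : 0 ≤ a) (hb : 0 ≤ b) :
    |a - b| ^ p ≤ |a ^ r - b ^ r| ^ (p / r) := by
  rcases le_total b a with hba | hab
  · exact pt1_aux hr hrp hb hba
  · rw [abs_sub_comm, abs_sub_comm (a ^ r)]
    exact pt1_aux hr hrp ha hab

private lemma pt2 {p r a b : ℝ} (hr : 1 ≤ r) (hrp : r ≤ p) (ha : 0 ≤ a) (hb : 0 ≤ b) :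
    |a ^ r - b ^ r| ^ (p / r) ≤ |a| ^ p + |b| ^ p := by
  have hr0 : (0:ℝ) < r := lt_of_lt_of_le one_pos hr
  have hp0 : (0:ℝ) < p := lt_of_lt_of_le hr0 hrp
  have hpr : 0 ≤ p / r := div_nonneg hp0.le hr0.le
  have hmax : |a ^ r - b ^ r| ≤ max (a ^ r) (b ^ r) := by
    rw [abs_sub_le_iff]
    constructor
    · have : b ^ r ≥ 0 := Real.rpow_nonneg hb r
      calc a ^ r - b ^ r ≤ a ^ r := by linarith
        _ ≤ max (a ^ r) (b ^ r) := le_max_left _ _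
    · have : a ^ r ≥ 0 := Real.rpow_nonneg ha r
      calc b ^ r - a ^ r ≤ b ^ r := by linarith
        _ ≤ max (a ^ r) (b ^ r) := le_max_right _ _
  have h2 : |a ^ r - b ^ r| ^ (p / r) ≤ (max (a ^ r) (b ^ r)) ^ (p / r) :=
    Real.rpow_le_rpow (abs_nonneg _) hmax hpr
  refine h2.trans ?_
  have hab : ∀ c : ℝ, 0 ≤ c → (c ^ r) ^ (p / r) = c ^ p := by
    intro c hc
    rw [← Real.rpow_mul hc]
    congr 1
    field_simp
  rcases le_total (a ^ r) (b ^ r) with h | h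
  · rw [max_eq_right h, hab b hb, abs_of_nonneg hb]
    have : 0 ≤ |a| ^ p := Real.rpow_nonneg (abs_nonneg _) p
    linarith
  · rw [max_eq_left h, hab a ha, abs_of_nonneg ha]
    have : 0 ≤ |b| ^ p := Real.rpow_nonneg (abs_nonneg _) p
    linarith

theorem power_difference_bound (p r : ℝ) (hp : 1 ≤ p) (hr : 1 ≤ r) (hrp : r ≤ p) :
    ∃ C : ℝ, 0 < C ∧
      ∀ (α : Type) (_ : MeasurableSpace α) (μ : Measure α) (g1 g2 : α → ℝ),
        (∀ x, 0 ≤ g1 x) → (∀ x, 0 ≤ g2 x) →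
        MemLp g1 (ENNReal.ofReal p) μ → MemLp g2 (ENNReal.ofReal p) μ →
        (∫ x, |g1 x - g2 x| ^ p ∂μ) ≤
          C * (∫ x, |g1 x ^ r - g2 x ^ r| ^ (p / r) ∂μ) ^ (r / p) *
            ((∫ x, |g1 x| ^ p ∂μ) ^ (1 / p) + (∫ x, |g2 x| ^ p ∂μ) ^ (1 / p)) ^ (p - r) := by
  refine ⟨1, one_pos, ?_⟩
  intro α mα μ g1 g2 hg1 hg2 hm1 hm2
  have hp0 : (0:ℝ) < p := lt_of_lt_of_le one_pos hp
  have hr0 : (0:ℝ) < r := lt_of_lt_of_le one_pos hr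
  have hq0 : ENNReal.ofReal p ≠ 0 := by
    simp only [ne_eq, ENNReal.ofReal_eq_zero, not_le]; exact hp0
  have hqt : ENNReal.ofReal p ≠ ⊤ := ENNReal.ofReal_ne_top
  have hqr : (ENNReal.ofReal p).toReal = p := ENNReal.toReal_ofReal hp0.le
  have hi1 : Integrable (fun x => |g1 x| ^ p) μ := by
    have h := hm1.integrable_norm_rpow hq0 hqt
    simpa [hqr, Real.norm_eq_abs] using h
  have hi2 : Integrable (fun x => |g2 x| ^ p) μ := by
    have h := hm2.integrable_norm_rpow hq0 hqt
    simpa [hqr, Real.norm_eq_abs] using h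
  set I1 := ∫ x, |g1 x| ^ p ∂μ with hI1def
  set I2 := ∫ x, |g2 x| ^ p ∂μ with hI2def
  set B := ∫ x, |g1 x ^ r - g2 x ^ r| ^ (p / r) ∂μ with hBdef
  set A := ∫ x, |g1 x - g2 x| ^ p ∂μ with hAdef
  have hI1nn : 0 ≤ I1 := integral_nonneg fun x => Real.rpow_nonneg (abs_nonneg _) _
  have hI2nn : 0 ≤ I2 := integral_nonneg fun x => Real.rpow_nonneg (abs_nonneg _) _
  have hB0 : 0 ≤ B := integral_nonneg fun x => Real.rpow_nonneg (abs_nonneg _) _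
  have hA0 : 0 ≤ A := integral_nonneg fun x => Real.rpow_nonneg (abs_nonneg _) _
  -- integrability of the middle integrand
  have hBmeas : AEStronglyMeasurable (fun x => |g1 x ^ r - g2 x ^ r| ^ (p / r)) μ := by
    have h1 : AEMeasurable g1 μ := hm1.aestronglyMeasurable.aemeasurable
    have h2 : AEMeasurable g2 μ := hm2.aestronglyMeasurable.aemeasurable
    have : AEMeasurable (fun x => |g1 x ^ r - g2 x ^ r| ^ (p / r)) μ := by fun_prop
    exact this.aestronglyMeasurable
  have hBi : Integrable (fun x => |g1 x ^ r - g2 x ^ r| ^ (p / r)) μ := by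
    refine Integrable.mono' (hi1.add hi2) hBmeas ?_
    filter_upwards with x
    rw [Real.norm_eq_abs, abs_of_nonneg (Real.rpow_nonneg (abs_nonneg _) _)]
    exact pt2 hr hrp (hg1 x) (hg2 x)
  have hAB : A ≤ B := by
    refine integral_mono_of_nonneg ?_ hBi ?_
    · filter_upwards with x
      exact Real.rpow_nonneg (abs_nonneg _) _
    · filter_upwards with x
      exact pt1 hr hrp (hg1 x) (hg2 x)
  have hBsum : B ≤ I1 + I2 := by
    have h1 : B ≤ ∫ x, (|g1 x| ^ p + |g2 x| ^ p) ∂μ := by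
      refine integral_mono_of_nonneg ?_ (hi1.add hi2) ?_
      · filter_upwards with x
        exact Real.rpow_nonneg (abs_nonneg _) _
      · filter_upwards with x
        exact pt2 hr hrp (hg1 x) (hg2 x)
    rwa [integral_add hi1 hi2] at h1
  set N := I1 ^ (1 / p) + I2 ^ (1 / p) with hNdef
  have hNnn : 0 ≤ N :=
    add_nonneg (Real.rpow_nonneg hI1nn _) (Real.rpow_nonneg hI2nn _)
  have hsumN : I1 + I2 ≤ N ^ p := by
    have h := add_rpow_le_real (Real.rpow_nonneg hI1nn (1 / p)) (Real.rpow_nonneg hI2nn (1 / p)) hp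
    rw [one_div, Real.rpow_inv_rpow hI1nn hp0.ne', Real.rpow_inv_rpow hI2nn hp0.ne'] at h
    simpa [hNdef, one_div] using h
  have hBN : B ≤ N ^ p := hBsum.trans hsumN
  rw [one_mul]
  rcases eq_or_lt_of_le hB0 with hBz | hBpos
  · have : B ^ (r / p) = 0 := by
      rw [← hBz, Real.zero_rpow (div_ne_zero hr0.ne' hp0.ne')]
    rw [this, zero_mul]
    have : A ≤ 0 := hAB.trans_eq hBz.symm
    linarith
  · have hsplit : B = B ^ (r / p) * B ^ ((p - r) / p) := by
      rw [← Real.rpow_add hBpos]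
      have : r / p + (p - r) / p = 1 := by field_simp; ring
      rw [this, Real.rpow_one]
    have hexp : 0 ≤ (p - r) / p := div_nonneg (by linarith) hp0.le
    have h2 : B ^ ((p - r) / p) ≤ N ^ (p - r) := by
      have h3 : B ^ ((p - r) / p) ≤ (N ^ p) ^ ((p - r) / p) :=
        Real.rpow_le_rpow hB0 hBN hexp
      rwa [← Real.rpow_mul hNnn, mul_div_cancel₀ _ hp0.ne'] at h3
    calc A ≤ B := hAB
      _ = B ^ (r / p) * B ^ ((p - r) / p) := hsplit
      _ ≤ B ^ (r / p) * N ^ (p - r) :=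
          mul_le_mul_of_nonneg_left h2 (Real.rpow_nonneg hB0 _)
end

section
/- Let d ≥ 1 and let p1, p2, p3 ∈ (1,∞) satisfy 1/p1 + 1/p2 + 1/p3 = 2. If nonzero functions f_j ∈ ℓ^{p_j}(ℤ^d) (j = 1,2,3) attain equality in Young's inequality, i.e. |∑_{x,y∈ℤ^d} f1(x) f2(y) f3(x+y)| = ‖f1‖_{p1} ‖f2‖_{p2} ‖f3‖_{p3}, then the support of each f_j is a single point z_j ∈ ℤ^d, and z3 = z1 + z2. -/
open Real Function

section Aux

/-- Strict two-term weighted AM-GM. -/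
lemma amgm2_lt {s a b : ℝ} (hs0 : 0 < s) (hs1 : s < 1) (ha : 0 ≤ a) (hb : 0 ≤ b)
    (hne : a ≠ b) : a ^ s * b ^ (1 - s) < s * a + (1 - s) * b := by
  rcases eq_or_lt_of_le hb with rfl | hb
  · have ha' : 0 < a := lt_of_le_of_ne ha (Ne.symm hne)
    rw [Real.zero_rpow (by linarith), mul_zero, mul_zero, add_zero]
    exact mul_pos hs0 ha'
  rcases eq_or_lt_of_le ha with rfl | ha
  · rw [Real.zero_rpow (ne_of_gt hs0), zero_mul, mul_zero, zero_add]
    exact mul_pos (by linarith) hb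
  · set z := a / b with hz
    have hz0 : 0 < z := div_pos ha hb
    have hz1 : z ≠ 1 := by
      intro h
      exact hne ((div_eq_one_iff_eq hb.ne').mp h)
    have key : z ^ s < 1 + s * (z - 1) := by
      have := rpow_one_add_lt_one_add_mul_self (s := z - 1) (by linarith) (by
        intro h; apply hz1; linarith) hs0 hs1
      simpa using this
    have hab : a = z * b := by rw [hz, div_mul_cancel₀ _ hb.ne']
    calc a ^ s * b ^ (1 - s) = (z * b) ^ s * b ^ (1 - s) := by rw [← hab]
      _ = z ^ s * (b ^ s * b ^ (1 - s)) := by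
          rw [Real.mul_rpow hz0.le hb.le]; ring
      _ = z ^ s * b := by rw [← Real.rpow_add hb]; simp
      _ < (1 + s * (z - 1)) * b := by
          exact mul_lt_mul_of_pos_right key hb
      _ = s * a + (1 - s) * b := by rw [hab]; ring

/-- Equality case of two-term weighted AM-GM. -/
lemma amgm2_eq {s a b : ℝ} (hs0 : 0 < s) (hs1 : s < 1) (ha : 0 ≤ a) (hb : 0 ≤ b)
    (h : a ^ s * b ^ (1 - s) = s * a + (1 - s) * b) : a = b := by
  by_contra hne
  exact absurd h (ne_of_lt (amgm2_lt hs0 hs1 ha hb hne))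

/-- Equality case of three-term weighted AM-GM. -/
lemma amgm3_eq {s t r a b c : ℝ} (hs : 0 < s) (ht : 0 < t) (hr : 0 < r)
    (hw : s + t + r = 1) (ha : 0 ≤ a) (hb : 0 ≤ b) (hc : 0 ≤ c)
    (h : a ^ s * b ^ t * c ^ r = s * a + t * b + r * c) : a = b ∧ b = c := by
  have htr : 0 < t + r := by linarith
  set t' := t / (t + r) with ht'
  set r' := r / (t + r) with hr'
  have ht'0 : 0 < t' := div_pos ht htr
  have hr'0 : 0 < r' := div_pos hr htr
  have ht'r' : t' + r' = 1 := by
    rw [ht', hr', ← add_div, div_self (ne_of_gt htr)]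
  have hs1 : s < 1 := by linarith
  have h1s : 1 - s = t + r := by linarith
  set m := b ^ t' * c ^ r' with hm
  have hm0 : 0 ≤ m := mul_nonneg (Real.rpow_nonneg hb _) (Real.rpow_nonneg hc _)
  have hmpow : m ^ (1 - s) = b ^ t * c ^ r := by
    rw [hm, h1s, Real.mul_rpow (Real.rpow_nonneg hb _) (Real.rpow_nonneg hc _),
      ← Real.rpow_mul hb, ← Real.rpow_mul hc, ht', hr',
      div_mul_cancel₀ _ (ne_of_gt htr), div_mul_cancel₀ _ (ne_of_gt htr)]
  have ineq1 : a ^ s * m ^ (1 - s) ≤ s * a + (1 - s) * m :=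
    Real.geom_mean_le_arith_mean2_weighted hs.le (by linarith) ha hm0 (by ring)
  have ineq2 : m ≤ t' * b + r' * c := by
    rw [hm]
    calc b ^ t' * c ^ r' = b ^ t' * c ^ (1 - t') := by rw [show (1:ℝ) - t' = r' by linarith]
      _ ≤ t' * b + (1 - t') * c :=
        Real.geom_mean_le_arith_mean2_weighted ht'0.le (by linarith) hb hc (by ring)
      _ = t' * b + r' * c := by rw [show (1:ℝ) - t' = r' by linarith]
  have h3 : (1 - s) * (t' * b + r' * c) = t * b + r * c := by
    rw [h1s, ht', hr']
    field_simp
  have hchain : a ^ s * m ^ (1 - s) = s * a + t * b + r * c := by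
    rw [hmpow, ← h]; ring
  have e1 : a ^ s * m ^ (1 - s) = s * a + (1 - s) * m := by
    apply le_antisymm ineq1
    rw [hchain]
    have h1s0 : (0:ℝ) < 1 - s := by linarith
    nlinarith [ineq2, h3]
  have e2 : m = t' * b + r' * c := by
    have h1s0 : (0:ℝ) < 1 - s := by linarith
    have h2 : (1 - s) * m = (1 - s) * (t' * b + r' * c) := by
      have := e1.symm.trans hchain
      linarith [h3]
    exact mul_left_cancel₀ (ne_of_gt h1s0) h2
  have hbc : b = c := by
    apply amgm2_eq ht'0 (by linarith) hb hc
    rw [show (1:ℝ) - t' = r' by linarith]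
    exact e2
  have hmb : m = b := by
    rw [hm, hbc, ← Real.rpow_add' hc (by rw [ht'r']; norm_num), ht'r', Real.rpow_one]
  have hab : a = m := amgm2_eq hs hs1 ha hm0 e1
  exact ⟨hab.trans hmb, hbc⟩

/-- A finite nonempty subset of `ℤ^d` invariant under translation by `t` forces `t = 0`. -/
lemma shift_eq_zero {d : ℕ} {S : Set (Fin d → ℤ)} (hfin : S.Finite) (hne : S.Nonempty)
    {t : Fin d → ℤ} (h : ∀ z, z + t ∈ S ↔ z ∈ S) : t = 0 := by
  classical
  set T := hfin.toFinset with hT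
  have hmem : ∀ z, z ∈ T ↔ z ∈ S := fun z => hfin.mem_toFinset
  have himg : T.image (· + t) = T := by
    ext z
    simp only [Finset.mem_image]
    constructor
    · rintro ⟨a, haT, rfl⟩
      rw [hmem] at haT ⊢
      exact (h a).mpr haT
    · intro hz
      refine ⟨z - t, ?_, by abel⟩
      rw [hmem] at hz ⊢
      exact (h (z - t)).mp (by rwa [sub_add_cancel])
  have hinj : ∀ a ∈ T, ∀ b ∈ T, a + t = b + t → a = b := fun a _ b _ hab => by
    simpa using hab
  have hsum : ∑ z ∈ T.image (· + t), z = ∑ a ∈ T, (a + t) := Finset.sum_image hinj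
  rw [himg, Finset.sum_add_distrib, Finset.sum_const] at hsum
  have hcard : T.card ≠ 0 := by
    simp only [← Finset.card_ne_zero] at *
    exact Finset.card_ne_zero_of_mem ((hmem _).mpr hne.choose_spec)
  have hzero : T.card • t = 0 := by
    have h0 : (∑ z ∈ T, z) + 0 = (∑ x ∈ T, x) + T.card • t := by
      rw [add_zero]; exact hsum
    exact (add_left_cancel h0).symm
  funext i
  have hzi := congrFun hzero i
  simp only [Pi.smul_apply, Pi.zero_apply, smul_eq_mul] at hzi
  have hzi' : (T.card : ℤ) * t i = 0 := by exact_mod_cast hzi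
  rcases mul_eq_zero.mp hzi' with hc | hti
  · exact absurd (by exact_mod_cast hc) hcard
  · exact hti

/-- Exponent juggling for products of rpow. -/
lemma rpow_split {a b c s1 s2 s3 : ℝ} (ha : 0 ≤ a) (hb : 0 ≤ b) (hc : 0 ≤ c)
    (h23 : s2 + s3 ≠ 0) (h13 : s1 + s3 ≠ 0) (h12 : s1 + s2 ≠ 0) :
    (b * c) ^ s1 * (a * c) ^ s2 * (a * b) ^ s3
      = a ^ (s2 + s3) * b ^ (s1 + s3) * c ^ (s1 + s2) := by
  rw [Real.mul_rpow hb hc, Real.mul_rpow ha hc, Real.mul_rpow ha hb,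
    Real.rpow_add' ha h23, Real.rpow_add' hb h13, Real.rpow_add' hc h12]
  ring

/-- The shear `(x, y) ↦ (x + y, y)`. -/
def shearEquiv1 (G : Type*) [AddCommGroup G] : G × G ≃ G × G where
  toFun q := (q.1 + q.2, q.2)
  invFun q := (q.1 - q.2, q.2)
  left_inv q := by simp
  right_inv q := by simp

/-- The shear `(x, y) ↦ (x, x + y)`. -/
def shearEquiv2 (G : Type*) [AddCommGroup G] : G × G ≃ G × G where
  toFun q := (q.1, q.1 + q.2)
  invFun q := (q.1, q.2 - q.1)
  left_inv q := by simp
  right_inv q := by simp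

end Aux

set_option maxHeartbeats 1000000 in
theorem young_extremizers_Zd (d : ℕ) (hd : 1 ≤ d)
    (p1 p2 p3 : ℝ) (hp1 : 1 < p1) (hp2 : 1 < p2) (hp3 : 1 < p3)
    (hsum : 1 / p1 + 1 / p2 + 1 / p3 = 2)
    (f1 f2 f3 : (Fin d → ℤ) → ℂ)
    (h1 : f1 ≠ 0) (h2 : f2 ≠ 0) (h3 : f3 ≠ 0)
    (hs1 : Summable fun x => ‖f1 x‖ ^ p1)
    (hs2 : Summable fun x => ‖f2 x‖ ^ p2)
    (hs3 : Summable fun x => ‖f3 x‖ ^ p3)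
    (heq : ‖∑' q : (Fin d → ℤ) × (Fin d → ℤ), f1 q.1 * f2 q.2 * f3 (q.1 + q.2)‖ =
      pnorm f1 p1 * pnorm f2 p2 * pnorm f3 p3) :
    ∃ z1 z2 z3 : Fin d → ℤ, z3 = z1 + z2 ∧
      Function.support f1 = {z1} ∧
      Function.support f2 = {z2} ∧
      Function.support f3 = {z3} := by
  classical
  obtain ⟨x1, hx1⟩ := Function.ne_iff.mp h1
  obtain ⟨y1, hy1⟩ := Function.ne_iff.mp h2
  obtain ⟨w1, hw1⟩ := Function.ne_iff.mp h3
  simp only [Pi.zero_apply] at hx1 hy1 hw1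
  have hp1' : (0:ℝ) < p1 := by linarith
  have hp2' : (0:ℝ) < p2 := by linarith
  have hp3' : (0:ℝ) < p3 := by linarith
  have hip1 : 0 < 1 / p1 := by positivity
  have hip2 : 0 < 1 / p2 := by positivity
  have hip3 : 0 < 1 / p3 := by positivity
  have hip1' : 1 / p1 < 1 := by rw [div_lt_one hp1']; linarith
  have hip2' : 1 / p2 < 1 := by rw [div_lt_one hp2']; linarith
  have hip3' : 1 / p3 < 1 := by rw [div_lt_one hp3']; linarith
  set A1 := ∑' x, ‖f1 x‖ ^ p1 with hA1def
  set A2 := ∑' x, ‖f2 x‖ ^ p2 with hA2def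
  set A3 := ∑' x, ‖f3 x‖ ^ p3 with hA3def
  have hA1 : 0 < A1 := Summable.tsum_pos hs1 (fun x => Real.rpow_nonneg (norm_nonneg _) _) x1
      (Real.rpow_pos_of_pos (norm_pos_iff.mpr hx1) _)
  have hA2 : 0 < A2 := Summable.tsum_pos hs2 (fun x => Real.rpow_nonneg (norm_nonneg _) _) y1
      (Real.rpow_pos_of_pos (norm_pos_iff.mpr hy1) _)
  have hA3 : 0 < A3 := Summable.tsum_pos hs3 (fun x => Real.rpow_nonneg (norm_nonneg _) _) w1
      (Real.rpow_pos_of_pos (norm_pos_iff.mpr hw1) _)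
  set u : (Fin d → ℤ) → ℝ := fun x => ‖f1 x‖ ^ p1 / A1 with hudef
  set v : (Fin d → ℤ) → ℝ := fun x => ‖f2 x‖ ^ p2 / A2 with hvdef
  set w : (Fin d → ℤ) → ℝ := fun x => ‖f3 x‖ ^ p3 / A3 with hwdef
  have hu_nonneg : ∀ x, 0 ≤ u x := fun x =>
    div_nonneg (Real.rpow_nonneg (norm_nonneg _) _) hA1.le
  have hv_nonneg : ∀ x, 0 ≤ v x := fun x =>
    div_nonneg (Real.rpow_nonneg (norm_nonneg _) _) hA2.le
  have hw_nonneg : ∀ x, 0 ≤ w x := fun x =>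
    div_nonneg (Real.rpow_nonneg (norm_nonneg _) _) hA3.le
  have hu_summ : Summable u := hs1.div_const A1
  have hv_summ : Summable v := hs2.div_const A2
  have hw_summ : Summable w := hs3.div_const A3
  have htsum_u : ∑' x, u x = 1 := by rw [hudef]; rw [tsum_div_const]; exact div_self hA1.ne'
  have htsum_v : ∑' x, v x = 1 := by rw [hvdef]; rw [tsum_div_const]; exact div_self hA2.ne'
  have htsum_w : ∑' x, w x = 1 := by rw [hwdef]; rw [tsum_div_const]; exact div_self hA3.ne'
  -- norms of f in terms of u, v, w
  have hnorm : ∀ (f : (Fin d → ℤ) → ℂ) (p A : ℝ), 0 < p → 0 < A →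
      ∀ x, ‖f x‖ = A ^ (1/p) * ((‖f x‖ ^ p / A) ^ (1/p)) := by
    intro f p A hp hA x
    rw [Real.div_rpow (Real.rpow_nonneg (norm_nonneg _) _) hA.le,
      ← Real.rpow_mul (norm_nonneg _), mul_one_div_cancel hp.ne', Real.rpow_one]
    field_simp
  have hnorm1 : ∀ x, ‖f1 x‖ = A1 ^ (1/p1) * u x ^ (1/p1) := fun x =>
    hnorm f1 p1 A1 hp1' hA1 x
  have hnorm2 : ∀ x, ‖f2 x‖ = A2 ^ (1/p2) * v x ^ (1/p2) := fun x =>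
    hnorm f2 p2 A2 hp2' hA2 x
  have hnorm3 : ∀ x, ‖f3 x‖ = A3 ^ (1/p3) * w x ^ (1/p3) := fun x =>
    hnorm f3 p3 A3 hp3' hA3 x
  -- weights
  set s1 : ℝ := 1 - 1/p1 with hs1def
  set s2 : ℝ := 1 - 1/p2 with hs2def
  set s3 : ℝ := 1 - 1/p3 with hs3def
  have hs1w : 0 < s1 := by rw [hs1def]; linarith
  have hs2w : 0 < s2 := by rw [hs2def]; linarith
  have hs3w : 0 < s3 := by rw [hs3def]; linarith
  have hwsum : s1 + s2 + s3 = 1 := by rw [hs1def, hs2def, hs3def]; linarith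
  have hexp1 : s2 + s3 = 1/p1 := by rw [hs2def, hs3def]; linarith
  have hexp2 : s1 + s3 = 1/p2 := by rw [hs1def, hs3def]; linarith
  have hexp3 : s1 + s2 = 1/p3 := by rw [hs1def, hs2def]; linarith
  -- F and G
  set Z := (Fin d → ℤ) × (Fin d → ℤ) with hZdef
  set F : Z → ℝ := fun q => u q.1 ^ (1/p1) * v q.2 ^ (1/p2) * w (q.1 + q.2) ^ (1/p3)
    with hFdef
  set G : Z → ℝ := fun q => s1 * (v q.2 * w (q.1 + q.2)) + s2 * (u q.1 * w (q.1 + q.2))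
    + s3 * (u q.1 * v q.2) with hGdef
  have hF_prod : ∀ q : Z, (v q.2 * w (q.1 + q.2)) ^ s1 * (u q.1 * w (q.1 + q.2)) ^ s2
      * (u q.1 * v q.2) ^ s3 = F q := by
    intro q
    rw [rpow_split (hu_nonneg _) (hv_nonneg _) (hw_nonneg _)
      (by rw [hexp1]; exact hip1.ne') (by rw [hexp2]; exact hip2.ne')
      (by rw [hexp3]; exact hip3.ne'), hexp1, hexp2, hexp3]
  have hFG : ∀ q : Z, F q ≤ G q := by
    intro q
    rw [← hF_prod q]
    exact Real.geom_mean_le_arith_mean3_weighted hs1w.le hs2w.le hs3w.le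
      (mul_nonneg (hv_nonneg _) (hw_nonneg _)) (mul_nonneg (hu_nonneg _) (hw_nonneg _))
      (mul_nonneg (hu_nonneg _) (hv_nonneg _)) hwsum
  have hF_nonneg : ∀ q : Z, 0 ≤ F q := fun q =>
    mul_nonneg (mul_nonneg (Real.rpow_nonneg (hu_nonneg _) _) (Real.rpow_nonneg (hv_nonneg _) _))
      (Real.rpow_nonneg (hw_nonneg _) _)
  -- summability of the three cross terms
  have habs : ∀ (g : (Fin d → ℤ) → ℝ), (∀ x, 0 ≤ g x) → Summable g →
      Summable fun x => ‖g x‖ := by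
    intro g hg hgs
    exact (summable_congr fun x => congrArg _ rfl).mpr hgs.abs
  have huv_summ : Summable fun q : Z => u q.1 * v q.2 :=
    summable_mul_of_summable_norm (habs u hu_nonneg hu_summ) (habs v hv_nonneg hv_summ)
  have htsum_uv : ∑' q : Z, u q.1 * v q.2 = 1 := by
    rw [← tsum_mul_tsum_of_summable_norm (habs u hu_nonneg hu_summ)
      (habs v hv_nonneg hv_summ), htsum_u, htsum_v, mul_one]
  have hwv_summ : Summable fun q : Z => w q.1 * v q.2 :=
    summable_mul_of_summable_norm (habs w hw_nonneg hw_summ) (habs v hv_nonneg hv_summ)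
  have htsum_wv : ∑' q : Z, w q.1 * v q.2 = 1 := by
    rw [← tsum_mul_tsum_of_summable_norm (habs w hw_nonneg hw_summ)
      (habs v hv_nonneg hv_summ), htsum_w, htsum_v, mul_one]
  have huw_summ0 : Summable fun q : Z => u q.1 * w q.2 :=
    summable_mul_of_summable_norm (habs u hu_nonneg hu_summ) (habs w hw_nonneg hw_summ)
  have htsum_uw0 : ∑' q : Z, u q.1 * w q.2 = 1 := by
    rw [← tsum_mul_tsum_of_summable_norm (habs u hu_nonneg hu_summ)
      (habs w hw_nonneg hw_summ), htsum_u, htsum_w, mul_one]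
  -- shear to get the convolution-type terms
  have hvw_summ : Summable fun q : Z => v q.2 * w (q.1 + q.2) := by
    have h := (Equiv.summable_iff (shearEquiv1 (Fin d → ℤ))
      (f := fun q : Z => w q.1 * v q.2)).mpr hwv_summ
    exact h.congr fun q => by
      simp [shearEquiv1, Function.comp, mul_comm]
  have htsum_vw : ∑' q : Z, v q.2 * w (q.1 + q.2) = 1 := by
    have h := Equiv.tsum_eq (shearEquiv1 (Fin d → ℤ)) (fun q : Z => w q.1 * v q.2)
    calc ∑' q : Z, v q.2 * w (q.1 + q.2)
        = ∑' q : Z, w ((shearEquiv1 (Fin d → ℤ)) q).1 * v ((shearEquiv1 (Fin d → ℤ)) q).2 := by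
          apply tsum_congr; intro q; simp [shearEquiv1, mul_comm]
      _ = ∑' q : Z, w q.1 * v q.2 := h
      _ = 1 := htsum_wv
  have huw_summ : Summable fun q : Z => u q.1 * w (q.1 + q.2) := by
    have h := (Equiv.summable_iff (shearEquiv2 (Fin d → ℤ))
      (f := fun q : Z => u q.1 * w q.2)).mpr huw_summ0
    exact h.congr fun q => by
      simp [shearEquiv2, Function.comp]
  have htsum_uw : ∑' q : Z, u q.1 * w (q.1 + q.2) = 1 := by
    have h := Equiv.tsum_eq (shearEquiv2 (Fin d → ℤ)) (fun q : Z => u q.1 * w q.2)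
    calc ∑' q : Z, u q.1 * w (q.1 + q.2)
        = ∑' q : Z, u ((shearEquiv2 (Fin d → ℤ)) q).1 * w ((shearEquiv2 (Fin d → ℤ)) q).2 := by
          apply tsum_congr; intro q; simp [shearEquiv2]
      _ = ∑' q : Z, u q.1 * w q.2 := h
      _ = 1 := htsum_uw0
  -- G is summable with sum 1
  have hG_summ : Summable G := by
    rw [hGdef]
    exact ((hvw_summ.mul_left s1).add (huw_summ.mul_left s2)).add (huv_summ.mul_left s3)
  have htsum_G : ∑' q : Z, G q = 1 := by
    rw [hGdef]
    rw [Summable.tsum_add ((hvw_summ.mul_left s1).add (huw_summ.mul_left s2)) (huv_summ.mul_left s3),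
      Summable.tsum_add (hvw_summ.mul_left s1) (huw_summ.mul_left s2),
      tsum_mul_left, tsum_mul_left, tsum_mul_left, htsum_vw, htsum_uw, htsum_uv]
    rw [mul_one, mul_one, mul_one]
    exact hwsum
  have hF_summ : Summable F := Summable.of_nonneg_of_le hF_nonneg hFG hG_summ
  -- link with the hypothesis heq
  set C : ℝ := A1 ^ (1/p1) * A2 ^ (1/p2) * A3 ^ (1/p3) with hCdef
  have hCpos : 0 < C := by
    rw [hCdef]
    exact mul_pos (mul_pos (Real.rpow_pos_of_pos hA1 _) (Real.rpow_pos_of_pos hA2 _))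
      (Real.rpow_pos_of_pos hA3 _)
  have hCval : C = pnorm f1 p1 * pnorm f2 p2 * pnorm f3 p3 := by
    rw [hCdef, pnorm, pnorm, pnorm, ← hA1def, ← hA2def, ← hA3def]
  have hPF : ∀ q : Z, ‖f1 q.1 * f2 q.2 * f3 (q.1 + q.2)‖ = C * F q := by
    intro q
    rw [norm_mul, norm_mul, hnorm1 q.1, hnorm2 q.2, hnorm3 (q.1 + q.2), hCdef, hFdef]
    ring
  have hP_summ : Summable fun q : Z => ‖f1 q.1 * f2 q.2 * f3 (q.1 + q.2)‖ := by
    exact (summable_congr hPF).mpr (hF_summ.mul_left C)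
  have htsum_P : ∑' q : Z, ‖f1 q.1 * f2 q.2 * f3 (q.1 + q.2)‖ = C * ∑' q : Z, F q := by
    rw [tsum_congr hPF, tsum_mul_left]
  have hF_ge : (1:ℝ) ≤ ∑' q : Z, F q := by
    have hle : C ≤ C * ∑' q : Z, F q := by
      calc C = ‖∑' q : Z, f1 q.1 * f2 q.2 * f3 (q.1 + q.2)‖ := by rw [heq, hCval]
        _ ≤ ∑' q : Z, ‖f1 q.1 * f2 q.2 * f3 (q.1 + q.2)‖ := norm_tsum_le_tsum_norm hP_summ
        _ = C * ∑' q : Z, F q := htsum_P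
    have h' : C * 1 ≤ C * ∑' q : Z, F q := by rwa [mul_one]
    exact (mul_le_mul_iff_right₀ hCpos).mp h'
  have hF_le : ∑' q : Z, F q ≤ 1 := by
    calc ∑' q : Z, F q ≤ ∑' q : Z, G q := Summable.tsum_le_tsum hFG hF_summ hG_summ
      _ = 1 := htsum_G
  have hFGsum : ∑' q : Z, F q = ∑' q : Z, G q := by
    rw [htsum_G]; linarith
  -- pointwise equality
  have hpoint : ∀ q : Z, F q = G q := by
    intro q
    by_contra hne
    have hlt : F q < G q := lt_of_le_of_ne (hFG q) hne
    have := Summable.tsum_lt_tsum hFG hlt hF_summ hG_summ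
    rw [hFGsum] at this
    exact lt_irrefl _ this
  -- extract the pairwise product equalities via the AM–GM equality case
  have hrel : ∀ x y : Fin d → ℤ, v y * w (x + y) = u x * w (x + y) ∧
      u x * w (x + y) = u x * v y := by
    intro x y
    have h := hpoint (x, y)
    have h' : (v y * w (x + y)) ^ s1 * (u x * w (x + y)) ^ s2 * (u x * v y) ^ s3
        = s1 * (v y * w (x + y)) + s2 * (u x * w (x + y)) + s3 * (u x * v y) := by
      have := hF_prod (x, y)
      rw [this, h, hGdef]
    exact amgm3_eq hs1w hs2w hs3w hwsum
      (mul_nonneg (hv_nonneg _) (hw_nonneg _)) (mul_nonneg (hu_nonneg _) (hw_nonneg _))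
      (mul_nonneg (hu_nonneg _) (hv_nonneg _)) h'
  -- support facts
  have hu_ne : ∀ x, u x ≠ 0 ↔ f1 x ≠ 0 := by
    intro x
    rw [hudef]
    simp only [ne_eq, div_eq_zero_iff, hA1.ne', or_false]
    rw [Real.rpow_eq_zero_iff_of_nonneg (norm_nonneg _)]
    simp [hp1'.ne']
  have hv_ne : ∀ x, v x ≠ 0 ↔ f2 x ≠ 0 := by
    intro x
    rw [hvdef]
    simp only [ne_eq, div_eq_zero_iff, hA2.ne', or_false]
    rw [Real.rpow_eq_zero_iff_of_nonneg (norm_nonneg _)]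
    simp [hp2'.ne']
  have hw_ne : ∀ x, w x ≠ 0 ↔ f3 x ≠ 0 := by
    intro x
    rw [hwdef]
    simp only [ne_eq, div_eq_zero_iff, hA3.ne', or_false]
    rw [Real.rpow_eq_zero_iff_of_nonneg (norm_nonneg _)]
    simp [hp3'.ne']
  have hx0 : u x1 ≠ 0 := (hu_ne x1).mpr hx1
  have hy0 : v y1 ≠ 0 := (hv_ne y1).mpr hy1
  -- the key cancellation identities
  have hK1 : ∀ x, u x ≠ 0 → ∀ y, w (x + y) = v y := by
    intro x hx y
    exact mul_left_cancel₀ hx (hrel x y).2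
  have hK2 : ∀ y, v y ≠ 0 → ∀ x, w (x + y) = u x := by
    intro y hy x
    have h := (hrel x y).1.trans (hrel x y).2
    have h' : v y * w (x + y) = v y * u x := h.trans (mul_comm _ _)
    exact mul_left_cancel₀ hy h'
  have hWV : ∀ x, u x ≠ 0 → ∀ z, w z = v (z - x) := by
    intro x hx z
    have := hK1 x hx (z - x)
    rwa [add_sub_cancel] at this
  have hWU : ∀ y, v y ≠ 0 → ∀ z, w z = u (z - y) := by
    intro y hy z
    have := hK2 y hy (z - y)
    rwa [sub_add_cancel] at this
  -- u and v are constant on their supports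
  have hu_const : ∀ x, u x ≠ 0 → u x = v y1 := by
    intro x hx
    rw [← hK2 y1 hy0 x, hK1 x hx y1]
  have hv_const : ∀ y, v y ≠ 0 → v y = u x1 := by
    intro y hy
    rw [← hK1 x1 hx0 y, hK2 y hy x1]
  have hc0 : 0 < u x1 := lt_of_le_of_ne (hu_nonneg x1) (Ne.symm hx0)
  have hc0' : 0 < v y1 := lt_of_le_of_ne (hv_nonneg y1) (Ne.symm hy0)
  have hc0eq : u x1 = v y1 := hu_const x1 hx0
  -- supports are finite
  have hfin_v : (Function.support v).Finite := by
    have htend : Filter.Tendsto v Filter.cofinite (nhds 0) := hv_summ.tendsto_cofinite_zero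
    have hev : ∀ᶠ y in Filter.cofinite, v y < u x1 := htend.eventually (gt_mem_nhds hc0)
    have hfs : {y | ¬ v y < u x1}.Finite := Filter.eventually_cofinite.mp hev
    apply hfs.subset
    intro y hy
    simp only [Set.mem_setOf_eq, not_lt]
    rw [hv_const y hy]
  have hfin_u : (Function.support u).Finite := by
    have htend : Filter.Tendsto u Filter.cofinite (nhds 0) := hu_summ.tendsto_cofinite_zero
    have hev : ∀ᶠ x in Filter.cofinite, u x < u x1 := htend.eventually (gt_mem_nhds hc0)
    have hfs : {x | ¬ u x < u x1}.Finite := Filter.eventually_cofinite.mp hev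
    apply hfs.subset
    intro x hx
    simp only [Set.mem_setOf_eq, not_lt]
    rw [hu_const x hx, ← hc0eq]

  have hne_v : (Function.support v).Nonempty := ⟨y1, hy0⟩
  have hne_u : (Function.support u).Nonempty := ⟨x1, hx0⟩
  -- uniqueness of support points
  have huniq_u : ∀ x, u x ≠ 0 → x = x1 := by
    intro x hx
    have hvv : ∀ a, v (a + (x - x1)) = v a := by
      intro a
      have e1 := hWV x hx (a + x)
      have e2 := hWV x1 hx0 (a + x)
      rw [add_sub_cancel_right] at e1
      have e3 : a + x - x1 = a + (x - x1) := by abel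
      rw [e3] at e2
      rw [← e1, e2]
    have hshift : ∀ a, a + (x - x1) ∈ Function.support v ↔ a ∈ Function.support v := by
      intro a
      simp only [Function.mem_support]
      rw [hvv a]
    have := shift_eq_zero hfin_v hne_v hshift
    have : x - x1 = 0 := this
    have := sub_eq_zero.mp this
    exact this
  have huniq_v : ∀ y, v y ≠ 0 → y = y1 := by
    intro y hy
    have huu : ∀ a, u (a + (y - y1)) = u a := by
      intro a
      have e1 := hWU y hy (a + y)
      have e2 := hWU y1 hy0 (a + y)
      rw [add_sub_cancel_right] at e1
      have e3 : a + y - y1 = a + (y - y1) := by abel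
      rw [e3] at e2
      rw [← e1, e2]
    have hshift : ∀ a, a + (y - y1) ∈ Function.support u ↔ a ∈ Function.support u := by
      intro a
      simp only [Function.mem_support]
      rw [huu a]
    have := shift_eq_zero hfin_u hne_u hshift
    exact sub_eq_zero.mp this
  -- conclude
  refine ⟨x1, y1, x1 + y1, rfl, ?_, ?_, ?_⟩
  · ext x
    simp only [Function.mem_support, Set.mem_singleton_iff]
    constructor
    · intro hx
      exact huniq_u x ((hu_ne x).mpr hx)
    · rintro rfl
      exact hx1
  · ext y
    simp only [Function.mem_support, Set.mem_singleton_iff]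
    constructor
    · intro hy
      exact huniq_v y ((hv_ne y).mpr hy)
    · rintro rfl
      exact hy1
  · ext z
    simp only [Function.mem_support, Set.mem_singleton_iff]
    constructor
    · intro hz
      have hwz : w z ≠ 0 := (hw_ne z).mpr hz
      have := hWV x1 hx0 z
      rw [this] at hwz
      have := huniq_v _ hwz
      have hz' : z - x1 = y1 := this
      have : z = x1 + y1 := by rw [← hz']; abel
      exact this
    · rintro rfl
      have : w (x1 + y1) = v y1 := hK1 x1 hx0 y1
      rw [← hw_ne]
      rw [this]
      exact hy0
end
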